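/- arXiv:1408.0988 — 8 statements merged into one kernel-verified Lean document; each statement's English description precedes it below -/
import Mathlib

section
/- Let k ≥ 1, n = 2k² + 2k + 1, and let X be the circulant graph X(Z_n; {±1, ±(2k+1)}) (the extremal circulant graph of degree 4 and diameter k). Then for every l with 1 ≤ l ≤ k, the number of vertices of X at graph distance exactly l from the vertex 0 is exactly 4l; i.e., every distance partition level is maximal in the sense of the Abelian Cayley bound (LM_AC(4,l) = 4l). -/
/-- The circulant graph `X(Z_n; {±g 0, …, ±g (f-1)})`: vertices are `ZMod n`, and distinct
`u, v` are adjacent iff `v - u ≡ ±g i (mod n)` for some `i`. -/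
def circulant (n : ℕ) {f : ℕ} (g : Fin f → ℤ) : SimpleGraph (ZMod n) where
  Adj u v := u ≠ v ∧ ∃ i, v - u = (g i : ZMod n) ∨ u - v = (g i : ZMod n)
  symm := by
    constructor
    rintro u v ⟨hne, i, h | h⟩
    · exact ⟨hne.symm, i, Or.inr h⟩
    · exact ⟨hne.symm, i, Or.inl h⟩
  loopless := by constructor; rintro u ⟨hne, -⟩; exact hne rfl

namespace CircAux

abbrev N (k : ℕ) : ℕ := 2*k^2+2*k+1

abbrev Gr (k : ℕ) : SimpleGraph (ZMod (N k)) := circulant (N k) ![(1 : ℤ), 2*(k:ℤ)+1]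

def phi (k : ℕ) (a b : ℤ) : ZMod (N k) := ((a + b * (2*(k:ℤ)+1) : ℤ) : ZMod (N k))

variable {k : ℕ}

lemma adj_step (hk : 1 ≤ k) (x : ZMod (N k)) (g : ℤ)
    (hg : g = 1 ∨ g = -1 ∨ g = 2*(k:ℤ)+1 ∨ g = -(2*(k:ℤ)+1)) :
    (Gr k).Adj x (x + (g : ZMod (N k))) := by
  have hkk : 1 ≤ k*k := Nat.mul_le_mul hk hk
  have hsq : k^2 = k*k := sq k
  have hna : g.natAbs = 1 ∨ g.natAbs = 2*k+1 := by
    rcases hg with h|h|h|h <;> subst h <;> omega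
  have hgz : (g : ZMod (N k)) ≠ 0 := by
    intro h0
    rw [ZMod.intCast_zmod_eq_zero_iff_dvd] at h0
    have h1 : N k ∣ g.natAbs := by
      have h2 := Int.natAbs_dvd_natAbs.mpr h0
      rwa [Int.natAbs_natCast] at h2
    have h2 : N k ≤ g.natAbs := Nat.le_of_dvd (by omega) h1
    simp only [N] at h2
    omega
  refine ⟨?_, ?_⟩
  · intro h
    exact hgz (left_eq_add.mp h)
  · rcases hg with h|h|h|h
    · exact ⟨0, Or.inl (by subst h; simp only [Matrix.cons_val_zero]; push_cast; ring)⟩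
    · exact ⟨0, Or.inr (by subst h; simp only [Matrix.cons_val_zero]; push_cast; ring)⟩
    · exact ⟨1, Or.inl (by subst h; simp only [Matrix.cons_val_one, Matrix.head_cons]; push_cast; ring)⟩
    · exact ⟨1, Or.inr (by subst h; simp only [Matrix.cons_val_one, Matrix.head_cons]; push_cast; ring)⟩

lemma walk_succ (hk : 1 ≤ k) (a b a' b' : ℤ) (g : ℤ)
    (hg : g = 1 ∨ g = -1 ∨ g = 2*(k:ℤ)+1 ∨ g = -(2*(k:ℤ)+1))
    (heq : a + b*(2*(k:ℤ)+1) = (a' + b'*(2*(k:ℤ)+1)) + g)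
    (h : ∃ p : (Gr k).Walk 0 (phi k a' b'), p.length = a'.natAbs + b'.natAbs) :
    ∃ p : (Gr k).Walk 0 (phi k a b), p.length = a'.natAbs + b'.natAbs + 1 := by
  obtain ⟨p, hp⟩ := h
  have hadj := adj_step hk (phi k a' b') g hg
  have hv : phi k a' b' + (g : ZMod (N k)) = phi k a b := by
    simp only [phi]
    rw [heq]
    push_cast
    ring
  exact ⟨(p.concat hadj).copy rfl hv, by simp [SimpleGraph.Walk.length_concat, hp]⟩

lemma exists_walk (hk : 1 ≤ k) (a b : ℤ) :
    ∃ p : (Gr k).Walk 0 (phi k a b), p.length = a.natAbs + b.natAbs := by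
  obtain ⟨m, hm⟩ : ∃ m, a.natAbs + b.natAbs = m := ⟨_, rfl⟩
  induction m generalizing a b with
  | zero =>
    have ha : a = 0 := by omega
    have hb : b = 0 := by omega
    subst ha; subst hb
    exact ⟨(SimpleGraph.Walk.nil).copy rfl (by simp [phi]), by simp⟩
  | succ m ih =>
    rcases lt_trichotomy a 0 with ha|ha|ha
    · have h' := ih (a+1) b (by omega)
      have h2 := walk_succ hk a b (a+1) b (-1) (by tauto) (by ring) h'
      rwa [show (a+1).natAbs + b.natAbs + 1 = a.natAbs + b.natAbs from by omega] at h2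
    · subst ha
      rcases lt_trichotomy b 0 with hb|hb|hb
      · have h' := ih 0 (b+1) (by omega)
        have h2 := walk_succ hk 0 b 0 (b+1) (-(2*(k:ℤ)+1)) (by tauto) (by ring) h'
        rwa [show (0:ℤ).natAbs + (b+1).natAbs + 1 = (0:ℤ).natAbs + b.natAbs from by omega] at h2
      · omega
      · have h' := ih 0 (b-1) (by omega)
        have h2 := walk_succ hk 0 b 0 (b-1) (2*(k:ℤ)+1) (by tauto) (by ring) h'
        rwa [show (0:ℤ).natAbs + (b-1).natAbs + 1 = (0:ℤ).natAbs + b.natAbs from by omega] at h2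
    · have h' := ih (a-1) b (by omega)
      have h2 := walk_succ hk a b (a-1) b 1 (by tauto) (by ring) h'
      rwa [show (a-1).natAbs + b.natAbs + 1 = a.natAbs + b.natAbs from by omega] at h2

lemma decomp {u v : ZMod (N k)} (p : (Gr k).Walk u v) :
    ∃ a b : ℤ, a.natAbs + b.natAbs ≤ p.length ∧ v - u = phi k a b := by
  induction p with
  | nil => exact ⟨0, 0, by simp, by simp [phi]⟩
  | @cons u w v h q ih =>
    obtain ⟨a, b, hab, hv⟩ := ih
    obtain ⟨hne, i, hi⟩ := h
    have hvu : v - u = (v - w) + (w - u) := by ring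
    fin_cases i <;>
      simp only [Fin.zero_eta, Fin.mk_one, Fin.isValue, Matrix.cons_val_zero,
        Matrix.cons_val_one, Matrix.head_cons] at hi
    · rcases hi with hi|hi
      · refine ⟨a+1, b, by change _ ≤ q.length + 1; omega, ?_⟩
        rw [hvu, hv, hi]; simp only [phi]; push_cast; ring
      · refine ⟨a-1, b, by change _ ≤ q.length + 1; omega, ?_⟩
        have hi' : w - u = -((1:ℤ) : ZMod (N k)) := by
          rw [← hi]; ring
        rw [hvu, hv, hi']; simp only [phi]; push_cast; ring
    · rcases hi with hi|hi
      · refine ⟨a, b+1, by change _ ≤ q.length + 1; omega, ?_⟩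
        rw [hvu, hv, hi]; simp only [phi]; push_cast; ring
      · refine ⟨a, b-1, by change _ ≤ q.length + 1; omega, ?_⟩
        have hi' : w - u = -((2*(k:ℤ)+1 : ℤ) : ZMod (N k)) := by
          rw [← hi]; ring
        rw [hvu, hv, hi']; simp only [phi]; push_cast; ring


def F (l j : ℕ) : ℤ × ℤ :=
  if j < l then ((l : ℤ) - j, (j : ℤ))
  else if j < 2*l then (-((j:ℤ) - l), (l:ℤ) - ((j:ℤ) - l))
  else if j < 3*l then (((j:ℤ) - 2*l) - l, -((j:ℤ) - 2*l))
  else ((j:ℤ) - 3*l, ((j:ℤ) - 3*l) - l)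

lemma ring_bij (l : ℕ) (hl : 1 ≤ l) :
    Set.BijOn (F l) (Set.Ico 0 (4*l)) {p : ℤ × ℤ | p.1.natAbs + p.2.natAbs = l} := by
  refine ⟨?_, ?_, ?_⟩
  · intro j hj
    simp only [Set.mem_Ico] at hj
    simp only [F, Set.mem_setOf_eq]
    split_ifs <;> omega
  · intro j hj j' hj' heq
    simp only [Set.mem_Ico] at hj hj'
    simp only [F] at heq
    split_ifs at heq <;> simp only [Prod.mk.injEq] at heq <;> omega
  · intro p hp
    simp only [Set.mem_setOf_eq] at hp
    obtain ⟨a, b⟩ := p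
    simp only at hp
    set j : ℕ := if 1 ≤ a ∧ 0 ≤ b then b.toNat
      else if a ≤ 0 ∧ 1 ≤ b then l + (-a).toNat
      else if a ≤ -1 ∧ b ≤ 0 then 2*l + (-b).toNat
      else 3*l + a.toNat with hj
    refine ⟨j, ?_, ?_⟩
    · simp only [Set.mem_Ico, hj]
      split_ifs <;> omega
    · simp only [F, hj]
      split_ifs <;> simp only [Prod.mk.injEq] <;> omega

lemma ring_card (l : ℕ) (hl : 1 ≤ l) :
    {p : ℤ × ℤ | p.1.natAbs + p.2.natAbs = l}.ncard = 4*l := by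
  rw [← (ring_bij l hl).image_eq, Set.ncard_image_of_injOn (ring_bij l hl).injOn,
    show (Set.Ico 0 (4*l)) = ↑(Finset.Ico 0 (4*l)) from (Finset.coe_Ico _ _).symm,
    Set.ncard_coe_finset]
  simp


lemma core_pos (k A B m : ℤ) (hk : 1 ≤ k) (h : |A| + |B| ≤ 2*k) (hm1 : 1 ≤ m)
    (hm : A + B*(2*k+1) = (2*k^2+2*k+1) * m) : False := by
  have hA1 : A ≤ |A| := le_abs_self A
  have hA2 : -A ≤ |A| := neg_le_abs A
  have hB1 : B ≤ |B| := le_abs_self B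
  have hB2 : -B ≤ |B| := neg_le_abs B
  have hBa : |B| ≤ 2*k := by nlinarith [abs_nonneg A]
  rcases le_or_gt B k with hB|hB
  · -- A + B(2k+1) ≤ (2k - B) + B(2k+1) = 2k + 2kB ≤ 2k²+2k < n ≤ nm
    nlinarith [abs_nonneg A, abs_nonneg B, mul_nonneg (mul_nonneg (by linarith : (0:ℤ) ≤ 2*k) (by linarith : (0:ℤ) ≤ k - B)) (by linarith : (0:ℤ) ≤ 1),
      mul_le_mul_of_nonneg_left hm1 (by nlinarith : (0:ℤ) ≤ 2*k^2+2*k+1)]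
  · -- B ≥ k+1
    have hmle : m = 1 := by
      nlinarith [mul_le_mul_of_nonneg_left hm1 (by nlinarith : (0:ℤ) ≤ 2*k^2+2*k+1)]
    subst hmle
    nlinarith [mul_nonneg (by linarith : (0:ℤ) ≤ 2*k+2) (by linarith : (0:ℤ) ≤ B - (k+1))]

lemma core (k A B m : ℤ) (hk : 1 ≤ k) (h : |A| + |B| ≤ 2*k)
    (hm : A + B*(2*k+1) = (2*k^2+2*k+1) * m) : A = 0 ∧ B = 0 := by
  rcases lt_trichotomy m 0 with h0|h0|h0
  · exact absurd (core_pos k (-A) (-B) (-m) hk (by simp only [abs_neg]; exact h)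
      (by omega) (by linarith [hm])) id
  · subst h0
    simp only [mul_zero] at hm
    have hB0 : B = 0 := by
      rcases lt_trichotomy B 0 with hb|hb|hb
      · nlinarith [le_abs_self A, neg_le_abs A, le_abs_self B, neg_le_abs B]
      · exact hb
      · nlinarith [le_abs_self A, neg_le_abs A, le_abs_self B, neg_le_abs B]
    constructor
    · rw [hB0] at hm; linarith
    · exact hB0
  · exact absurd (core_pos k A B m hk h (by omega) hm) id

lemma phi_inj (hk : 1 ≤ k) {a b a' b' : ℤ}
    (h1 : a.natAbs + b.natAbs ≤ k) (h2 : a'.natAbs + b'.natAbs ≤ k)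
    (heq : phi k a b = phi k a' b') : a = a' ∧ b = b' := by
  have hmod : (a + b*(2*(k:ℤ)+1)) ≡ (a' + b'*(2*(k:ℤ)+1)) [ZMOD (N k)] :=
    (ZMod.intCast_eq_intCast_iff _ _ _).mp heq
  have hd : ((N k : ℤ)) ∣ ((a' - a) + (b' - b)*(2*(k:ℤ)+1)) := by
    have h3 := Int.ModEq.dvd hmod
    have h4 : (a' + b'*(2*(k:ℤ)+1)) - (a + b*(2*(k:ℤ)+1))
        = (a' - a) + (b' - b)*(2*(k:ℤ)+1) := by ring
    rwa [h4] at h3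
  obtain ⟨m, hmm⟩ := hd
  have hmm' : (a' - a) + (b' - b)*(2*(k:ℤ)+1) = (2*(k:ℤ)^2+2*(k:ℤ)+1) * m := by
    rw [hmm]; push_cast; ring
  have habs : |a' - a| + |b' - b| ≤ 2*(k:ℤ) := by
    rw [Int.abs_eq_natAbs, Int.abs_eq_natAbs]
    omega
  have hcore := core (k:ℤ) (a'-a) (b'-b) m (by exact_mod_cast hk) habs hmm'
  constructor <;> [omega; omega]

lemma reachable_phi (hk : 1 ≤ k) (a b : ℤ) : (Gr k).Reachable 0 (phi k a b) := by
  obtain ⟨p, -⟩ := exists_walk hk a b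
  exact ⟨p⟩

theorem level_card (k : ℕ) (hk : 1 ≤ k) (l : ℕ) (hl1 : 1 ≤ l) (hlk : l ≤ k) :
    {v : ZMod (N k) | (Gr k).dist 0 v = l}.ncard = 4*l := by
  have hset : {v : ZMod (N k) | (Gr k).dist 0 v = l}
      = (fun p : ℤ × ℤ => phi k p.1 p.2) '' {p : ℤ × ℤ | p.1.natAbs + p.2.natAbs = l} := by
    ext v
    simp only [Set.mem_setOf_eq, Set.mem_image, Prod.exists]
    constructor
    · intro hd
      have hne : (Gr k).dist 0 v ≠ 0 := by omega
      obtain ⟨p, hp⟩ := SimpleGraph.exists_walk_of_dist_ne_zero hne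
      obtain ⟨a, b, hab, hv⟩ := decomp p
      have hvv : v = phi k a b := by simpa using hv
      have hle : (Gr k).dist 0 v ≤ a.natAbs + b.natAbs := by
        obtain ⟨q, hq⟩ := exists_walk hk a b
        rw [hvv]
        exact hq ▸ SimpleGraph.dist_le q
      refine ⟨a, b, ?_, hvv.symm⟩
      rw [hp, hd] at hab
      omega
    · rintro ⟨a, b, hab, hv⟩
      obtain ⟨p, hp⟩ := exists_walk hk a b
      have hdle : (Gr k).dist 0 v ≤ l := by
        rw [← hv]
        calc (Gr k).dist 0 (phi k a b) ≤ p.length := SimpleGraph.dist_le p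
        _ = l := by rw [hp, hab]
      have hreach : (Gr k).Reachable 0 v := hv ▸ reachable_phi hk a b
      obtain ⟨q, hq⟩ := hreach.exists_walk_length_eq_dist
      obtain ⟨a', b', hab', hv'⟩ := decomp q
      have heq2 : phi k a' b' = phi k a b := by
        rw [hv]
        simpa using hv'.symm
      have h2 : a'.natAbs + b'.natAbs ≤ k := by omega
      obtain ⟨ha, hb⟩ := phi_inj hk h2 (by omega) heq2
      omega
  rw [hset]
  rw [Set.ncard_image_of_injOn ?hinj]
  · exact ring_card l hl1
  case hinj =>
    rintro ⟨a, b⟩ ha ⟨a', b'⟩ hb hfeq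
    simp only [Set.mem_setOf_eq] at ha hb
    obtain ⟨h1, h2⟩ := phi_inj hk (a := a) (b := b) (a' := a') (b' := b')
      (by omega) (by omega) hfeq
    simp [h1, h2]

end CircAux

/-- For the extremal circulant graph of degree 4 and diameter `k` (order `2k²+2k+1`,
generators `1` and `2k+1`), every distance partition level `l` with `1 ≤ l ≤ k` has
exactly `4l = LM_AC(4, l)` vertices, i.e. is maximal. -/
theorem stmt1 (k : ℕ) (hk : 1 ≤ k) (l : ℕ) (hl1 : 1 ≤ l) (hlk : l ≤ k) :
    {v : ZMod (2*k^2+2*k+1) |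
      (circulant (2*k^2+2*k+1) ![(1 : ℤ), 2*(k : ℤ)+1]).dist 0 v = l}.ncard = 4*l := by
  exact CircAux.level_card k hk l hl1 hlk
end

section
/- Let m ≥ 1, n = 32m³ + 16m² + 6m + 1, and let X be the circulant graph X(Z_n; {±1, ±(4m+1), ±(16m²+4m+1)}) (the largest known circulant graph of degree 6 and diameter k = 3m, isomorphism class 1). Then for every l with 1 ≤ l ≤ 2m, the number of vertices of X at graph distance exactly l from the vertex 0 equals 6 if l = 1 and equals 4l² + 2 if l ≥ 2; i.e., every level l ≤ ⌊(2k+1)/3⌋ is maximal in the sense of the Abelian Cayley bound (LM_AC(6,l) = 4l² + 2 for l ≥ 2). -/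
private lemma noRepN (M : ℤ) (hM : 1 ≤ M) (d1 d2 d3 : ℤ)
    (hw : |d1| + |d2| + |d3| ≤ 4*M)
    (heq : d1 + d2*(4*M+1) + d3*(16*M^2+4*M+1) = 32*M^3+16*M^2+6*M+1) :
    False := by
  have hA : (0:ℤ) ≤ 4*M+1 := by linarith
  have hB : (0:ℤ) ≤ 16*M^2+4*M+1 := by nlinarith
  have h1a := le_abs_self d1
  have h1b := neg_abs_le d1
  have h2a := le_abs_self d2
  have h2b := neg_abs_le d2
  have h3a := le_abs_self d3
  have h3b := neg_abs_le d3
  have n1 := abs_nonneg d1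
  have n2 := abs_nonneg d2
  have n3 := abs_nonneg d3
  -- d3 ≤ 2m+1
  have hub : d3 ≤ 2*M+1 := by
    by_contra h
    push_neg at h
    have h' : 2*M+2 ≤ d3 := by linarith
    nlinarith [mul_nonneg (show (0:ℤ) ≤ d2 + |d2| by linarith) hA,
      mul_nonneg (show (0:ℤ) ≤ d3 - (2*M+2) by linarith) hB,
      mul_nonneg (show (0:ℤ) ≤ 4*M - |d2| by linarith) hA,
      sq_nonneg (M-1), mul_nonneg (show (0:ℤ) ≤ M-1 by linarith) (show (0:ℤ) ≤ M by linarith)]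
  have hlb : 2*M ≤ d3 := by
    by_contra h
    push_neg at h
    have h' : d3 ≤ 2*M-1 := by linarith
    nlinarith [mul_nonneg (show (0:ℤ) ≤ |d2| - d2 by linarith) hA,
      mul_nonneg (show (0:ℤ) ≤ (2*M-1) - d3 by linarith) hB,
      mul_nonneg (show (0:ℤ) ≤ 4*M - |d2| by linarith) hA,
      sq_nonneg (M-1), mul_nonneg (show (0:ℤ) ≤ M-1 by linarith) (show (0:ℤ) ≤ M by linarith)]
  have hcase : d3 = 2*M ∨ d3 = 2*M+1 := by omega
  rcases hcase with h3 | h3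
  · subst h3
    have habs : |(2*M:ℤ)| = 2*M := abs_of_nonneg (by linarith)
    rw [habs] at hw
    nlinarith [mul_le_mul_of_nonneg_right (show |d2| ≤ 2*M by linarith) hA,
      mul_nonneg (show (0:ℤ) ≤ |d2| - d2 by linarith) hA]
  · subst h3
    have habs : |(2*M+1:ℤ)| = 2*M+1 := abs_of_nonneg (by linarith)
    rw [habs] at hw
    nlinarith [mul_le_mul_of_nonneg_right (show |d2| ≤ 2*M-1 by linarith) hA,
      mul_nonneg (show (0:ℤ) ≤ d2 + |d2| by linarith) hA]

private lemma keyInt (M : ℤ) (hM : 1 ≤ M) (d1 d2 d3 : ℤ)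
    (hw : |d1| + |d2| + |d3| ≤ 4*M)
    (hdvd : (32*M^3+16*M^2+6*M+1) ∣ d1 + d2*(4*M+1) + d3*(16*M^2+4*M+1)) :
    d1 = 0 ∧ d2 = 0 ∧ d3 = 0 := by
  obtain ⟨q, hq⟩ := hdvd
  have h1a := le_abs_self d1
  have h1b := neg_abs_le d1
  have h2a := le_abs_self d2
  have h2b := neg_abs_le d2
  have h3a := le_abs_self d3
  have h3b := neg_abs_le d3
  have n1 := abs_nonneg d1
  have n2 := abs_nonneg d2
  have n3 := abs_nonneg d3
  have hA : (0:ℤ) ≤ 4*M+1 := by linarith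
  have hB : (0:ℤ) ≤ 16*M^2+4*M+1 := by nlinarith
  have hqle : -1 ≤ q ∧ q ≤ 1 := by
    constructor
    · by_contra h
      push_neg at h
      have h' : q ≤ -2 := by linarith
      nlinarith [mul_nonneg (show (0:ℤ) ≤ |d2| - d2 by linarith) hA,
        mul_nonneg (show (0:ℤ) ≤ |d3| - d3 by linarith) hB,
        mul_nonneg (show (0:ℤ) ≤ 4*M - |d2| by linarith) hA,
        mul_nonneg (show (0:ℤ) ≤ 4*M - |d3| by linarith) hB,
        mul_le_mul_of_nonneg_right (show q ≤ -2 by linarith)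
          (show (0:ℤ) ≤ 32*M^3+16*M^2+6*M+1 by nlinarith),
        sq_nonneg (M-1), mul_nonneg (show (0:ℤ) ≤ M-1 by linarith) (show (0:ℤ) ≤ M by linarith)]
    · by_contra h
      push_neg at h
      have h' : 2 ≤ q := by linarith
      nlinarith [mul_nonneg (show (0:ℤ) ≤ d2 + |d2| by linarith) hA,
        mul_nonneg (show (0:ℤ) ≤ d3 + |d3| by linarith) hB,
        mul_nonneg (show (0:ℤ) ≤ 4*M - |d2| by linarith) hA,
        mul_nonneg (show (0:ℤ) ≤ 4*M - |d3| by linarith) hB,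
        mul_le_mul_of_nonneg_right (show 2 ≤ q by linarith)
          (show (0:ℤ) ≤ 32*M^3+16*M^2+6*M+1 by nlinarith),
        sq_nonneg (M-1), mul_nonneg (show (0:ℤ) ≤ M-1 by linarith) (show (0:ℤ) ≤ M by linarith)]
  have hq1 : q = -1 ∨ q = 0 ∨ q = 1 := by omega
  rcases hq1 with h | h | h
  · subst h
    exfalso
    apply noRepN M hM (-d1) (-d2) (-d3)
    · simp only [abs_neg]; exact hw
    · linarith [hq]
  · subst h
    simp only [mul_zero] at hq
    have ha2A : d2*(4*M+1) ≤ |d2| * (4*M+1) := mul_le_mul_of_nonneg_right h2a hA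
    have ha2A' : -(|d2| * (4*M+1)) ≤ d2*(4*M+1) := by
      have := mul_le_mul_of_nonneg_right h2b hA
      linarith [neg_mul |d2| (4*M+1)]
    have ha1A : |d1| ≤ |d1| * (4*M+1) := by nlinarith
    have hexp : (4*M-1)*(4*M+1) = 16*M^2-1 := by ring
    have hd3 : d3 = 0 := by
      rcases lt_trichotomy d3 0 with h3 | h3 | h3
      · have h13 : 1 ≤ |d3| := Int.one_le_abs (by omega)
        have hub2 : |d1| * (4*M+1) + |d2| * (4*M+1) ≤ (4*M-1)*(4*M+1) := by
          have := mul_le_mul_of_nonneg_right (show |d1|+|d2| ≤ 4*M-1 by linarith) hA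
          linarith [add_mul |d1| |d2| (4*M+1)]
        have hd3B : d3*(16*M^2+4*M+1) ≤ (-1)*(16*M^2+4*M+1) :=
          mul_le_mul_of_nonneg_right (by omega) hB
        linarith
      · exact h3
      · have h13 : 1 ≤ |d3| := Int.one_le_abs (by omega)
        have hub2 : |d1| * (4*M+1) + |d2| * (4*M+1) ≤ (4*M-1)*(4*M+1) := by
          have := mul_le_mul_of_nonneg_right (show |d1|+|d2| ≤ 4*M-1 by linarith) hA
          linarith [add_mul |d1| |d2| (4*M+1)]
        have hd3B : (1:ℤ)*(16*M^2+4*M+1) ≤ d3*(16*M^2+4*M+1) :=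
          mul_le_mul_of_nonneg_right (by omega) hB
        linarith
    subst hd3
    have hz : |(0:ℤ)| = 0 := abs_zero
    have hd2 : d2 = 0 := by
      rcases lt_trichotomy d2 0 with h2 | h2 | h2
      · have h12 : 1 ≤ |d2| := Int.one_le_abs (by omega)
        have hd2A : d2*(4*M+1) ≤ (-1)*(4*M+1) :=
          mul_le_mul_of_nonneg_right (by omega) hA
        simp only [mul_zero, zero_mul] at hq
        linarith
      · exact h2
      · have h12 : 1 ≤ |d2| := Int.one_le_abs (by omega)
        have hd2A : (1:ℤ)*(4*M+1) ≤ d2*(4*M+1) :=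
          mul_le_mul_of_nonneg_right (by omega) hA
        simp only [mul_zero, zero_mul] at hq
        linarith
    subst hd2
    simp only [mul_zero, zero_mul, add_zero] at hq
    refine ⟨by linarith, rfl, rfl⟩
  · subst h
    exfalso
    exact noRepN M hM d1 d2 d3 hw (by linarith [hq])


private abbrev nn (m : ℕ) : ℕ := 32*m^3+16*m^2+6*m+1

private abbrev Xm (m : ℕ) : SimpleGraph (ZMod (nn m)) :=
  circulant (nn m) ![(1 : ℤ), 4*(m : ℤ)+1, 16*(m : ℤ)^2+4*m+1]

private def cW (c : ℤ × ℤ × ℤ) : ℤ := |c.1| + |c.2.1| + |c.2.2|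

private def cV (m : ℕ) (c : ℤ × ℤ × ℤ) : ℤ :=
  c.1 + c.2.1*(4*(m:ℤ)+1) + c.2.2*(16*(m:ℤ)^2+4*m+1)

private lemma abs_pm (a b : ℤ) (hb : b = 1 ∨ b = -1) : |a + b| ≤ |a| + 1 := by
  calc |a + b| ≤ |a| + |b| := abs_add_le a b
  _ ≤ |a| + 1 := by rcases hb with h | h <;> subst h <;> simp

private lemma rep_of_walk (m : ℕ) {u v : ZMod (nn m)} (p : (Xm m).Walk u v) :
    ∃ c : ℤ × ℤ × ℤ, v - u = ((cV m c : ℤ) : ZMod (nn m)) ∧ cW c ≤ (p.length : ℤ) := by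
  induction p with
  | nil => exact ⟨(0,0,0), by simp [cV, cW]⟩
  | @cons a b d h p ih =>
    obtain ⟨c, hc, hw⟩ := ih
    have hlen : (((SimpleGraph.Walk.cons h p).length : ℕ) : ℤ) = (p.length : ℤ) + 1 := by
      simp [SimpleGraph.Walk.length_cons]
    obtain ⟨hne, i, hi⟩ := h
    have habs1 := abs_pm c.1 (1 : ℤ) (Or.inl rfl)
    have habs1' := abs_pm c.1 (-1 : ℤ) (Or.inr rfl)
    have habs2 := abs_pm c.2.1 (1 : ℤ) (Or.inl rfl)
    have habs2' := abs_pm c.2.1 (-1 : ℤ) (Or.inr rfl)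
    have habs3 := abs_pm c.2.2 (1 : ℤ) (Or.inl rfl)
    have habs3' := abs_pm c.2.2 (-1 : ℤ) (Or.inr rfl)
    have hgi : ![(1:ℤ), 4*(m:ℤ)+1, 16*(m:ℤ)^2+4*m+1] i = 1 ∨
        ![(1:ℤ), 4*(m:ℤ)+1, 16*(m:ℤ)^2+4*m+1] i = 4*(m:ℤ)+1 ∨
        ![(1:ℤ), 4*(m:ℤ)+1, 16*(m:ℤ)^2+4*m+1] i = 16*(m:ℤ)^2+4*m+1 := by
      fin_cases i
      · exact Or.inl rfl
      · exact Or.inr (Or.inl rfl)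
      · exact Or.inr (Or.inr rfl)
    rcases hgi with hg | hg | hg <;> rw [hg] at hi <;> rcases hi with hi | hi
    · refine ⟨(c.1 + 1, c.2.1, c.2.2), ?_, ?_⟩
      · have : d - a = (d - b) + (b - a) := by ring
        rw [this, hc, hi]; unfold cV; push_cast; ring
      · unfold cW at hw ⊢; simp only []; rw [hlen]; linarith
    · refine ⟨(c.1 - 1, c.2.1, c.2.2), ?_, ?_⟩
      · have : d - a = (d - b) + (b - a) := by ring
        have hba : b - a = -((1:ℤ) : ZMod (nn m)) := by rw [← hi]; ring
        rw [this, hc, hba]; unfold cV; push_cast; ring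
      · unfold cW at hw ⊢; simp only []; rw [hlen]
        have := abs_pm c.1 (-1 : ℤ) (Or.inr rfl)
        have h' : c.1 - 1 = c.1 + (-1) := by ring
        rw [h']; linarith
    · refine ⟨(c.1, c.2.1 + 1, c.2.2), ?_, ?_⟩
      · have : d - a = (d - b) + (b - a) := by ring
        rw [this, hc, hi]; unfold cV; push_cast; ring
      · unfold cW at hw ⊢; simp only []; rw [hlen]; linarith
    · refine ⟨(c.1, c.2.1 - 1, c.2.2), ?_, ?_⟩
      · have : d - a = (d - b) + (b - a) := by ring
        have hba : b - a = -((4*(m:ℤ)+1 : ℤ) : ZMod (nn m)) := by rw [← hi]; ring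
        rw [this, hc, hba]; unfold cV; push_cast; ring
      · unfold cW at hw ⊢; simp only []; rw [hlen]
        have h' : c.2.1 - 1 = c.2.1 + (-1) := by ring
        rw [h']; linarith
    · refine ⟨(c.1, c.2.1, c.2.2 + 1), ?_, ?_⟩
      · have : d - a = (d - b) + (b - a) := by ring
        rw [this, hc, hi]; unfold cV; push_cast; ring
      · unfold cW at hw ⊢; simp only []; rw [hlen]; linarith
    · refine ⟨(c.1, c.2.1, c.2.2 - 1), ?_, ?_⟩
      · have : d - a = (d - b) + (b - a) := by ring
        have hba : b - a = -((16*(m:ℤ)^2+4*m+1 : ℤ) : ZMod (nn m)) := by rw [← hi]; ring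
        rw [this, hc, hba]; unfold cV; push_cast; ring
      · unfold cW at hw ⊢; simp only []; rw [hlen]
        have h' : c.2.2 - 1 = c.2.2 + (-1) := by ring
        rw [h']; linarith

private lemma gen_ne (m : ℕ) (hm : 1 ≤ m) (x : ℤ) (hx : 0 < x) (hx2 : x < (nn m : ℤ)) :
    (x : ZMod (nn m)) ≠ 0 := by
  rw [Ne, ZMod.intCast_zmod_eq_zero_iff_dvd]
  intro h
  have := Int.le_of_dvd hx h
  omega

private lemma gen_pos (m : ℕ) (hm : 1 ≤ m) (x : ℤ)
    (hx : x = 1 ∨ x = 4*(m:ℤ)+1 ∨ x = 16*(m:ℤ)^2+4*m+1) :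
    0 < x ∧ x < (nn m : ℤ) := by
  have hM : (1:ℤ) ≤ (m:ℤ) := by exact_mod_cast hm
  have : ((nn m : ℕ) : ℤ) = 32*(m:ℤ)^3+16*(m:ℤ)^2+6*(m:ℤ)+1 := by push_cast; ring
  rw [this]
  rcases hx with h | h | h <;> subst h <;> constructor <;> nlinarith

private lemma adj_add (m : ℕ) (hm : 1 ≤ m) (u : ZMod (nn m)) (x s : ℤ)
    (hx : x = 1 ∨ x = 4*(m:ℤ)+1 ∨ x = 16*(m:ℤ)^2+4*m+1) (hs : s = 1 ∨ s = -1) :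
    (Xm m).Adj u (u + ((s*x : ℤ) : ZMod (nn m))) := by
  obtain ⟨hx1, hx2⟩ := gen_pos m hm x hx
  have hxnz : ((x : ℤ) : ZMod (nn m)) ≠ 0 := gen_ne m hm x hx1 hx2
  have hsx : ((s*x : ℤ) : ZMod (nn m)) ≠ 0 := by
    rcases hs with h | h <;> subst h <;>
      simpa [Int.cast_neg, neg_eq_zero] using hxnz
  constructor
  · intro h
    exact hsx (by linear_combination -h)
  · have hi : ∃ i : Fin 3, ![(1 : ℤ), 4*(m : ℤ)+1, 16*(m : ℤ)^2+4*m+1] i = x := by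
      rcases hx with h | h | h
      · exact ⟨0, by simp [h]⟩
      · exact ⟨1, by simp [h]⟩
      · exact ⟨2, by simp [h]⟩
    obtain ⟨i, hi⟩ := hi
    refine ⟨i, ?_⟩
    rcases hs with h | h
    · left; rw [hi]; subst h; push_cast; ring
    · right; rw [hi]; subst h; push_cast; ring

private lemma abs_pred (z : ℤ) (hz : z ≠ 0) :
    |z - (if 0 < z then 1 else -1)| = |z| - 1 := by
  rcases lt_or_gt_of_ne hz with h | h
  · rw [if_neg (by omega), abs_of_nonpos (by omega), abs_of_neg h]; ring
  · rw [if_pos h, abs_of_nonneg (by omega), abs_of_pos h]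

private lemma walk_of_rep (m : ℕ) (hm : 1 ≤ m) :
    ∀ (k : ℕ) (c : ℤ × ℤ × ℤ), cW c = (k : ℤ) →
      ∃ p : (Xm m).Walk 0 ((cV m c : ℤ) : ZMod (nn m)), p.length = k := by
  intro k
  induction k with
  | zero =>
    intro c hc
    have n1 := abs_nonneg c.1; have n2 := abs_nonneg c.2.1; have n3 := abs_nonneg c.2.2
    have h1 : c.1 = 0 := by rw [← abs_eq_zero]; unfold cW at hc; omega
    have h2 : c.2.1 = 0 := by rw [← abs_eq_zero]; unfold cW at hc; omega
    have h3 : c.2.2 = 0 := by rw [← abs_eq_zero]; unfold cW at hc; omega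
    have hv : ((cV m c : ℤ) : ZMod (nn m)) = 0 := by
      unfold cV; rw [h1, h2, h3]; push_cast; ring
    exact ⟨(SimpleGraph.Walk.nil).copy rfl hv.symm, by simp⟩
  | succ k ih =>
    intro c hc
    have n1 := abs_nonneg c.1; have n2 := abs_nonneg c.2.1; have n3 := abs_nonneg c.2.2
    unfold cW at hc
    have hne : c.1 ≠ 0 ∨ c.2.1 ≠ 0 ∨ c.2.2 ≠ 0 := by
      by_contra h
      push_neg at h
      rw [h.1, h.2.1, h.2.2] at hc
      simp at hc
      omega
    rcases hne with h0 | h0 | h0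
    · set s : ℤ := if 0 < c.1 then 1 else -1 with hs
      have hs' : s = 1 ∨ s = -1 := by unfold s; split <;> simp
      set c' : ℤ × ℤ × ℤ := (c.1 - s, c.2.1, c.2.2) with hc'
      have hw' : cW c' = (k : ℤ) := by
        unfold cW; simp only [hc']
        rw [abs_pred c.1 h0]
        push_cast at hc ⊢; omega
      obtain ⟨p, hp⟩ := ih c' hw'
      have hveq : ((cV m c : ℤ) : ZMod (nn m)) =
          ((cV m c' : ℤ) : ZMod (nn m)) + ((s*1 : ℤ) : ZMod (nn m)) := by
        unfold cV; simp only [hc']; push_cast; ring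
      have hadj := adj_add m hm ((cV m c' : ℤ) : ZMod (nn m)) 1 s (Or.inl rfl) hs'
      exact ⟨(p.concat hadj).copy rfl hveq.symm, by
        simp [SimpleGraph.Walk.length_concat, hp]⟩
    · set s : ℤ := if 0 < c.2.1 then 1 else -1 with hs
      have hs' : s = 1 ∨ s = -1 := by unfold s; split <;> simp
      set c' : ℤ × ℤ × ℤ := (c.1, c.2.1 - s, c.2.2) with hc'
      have hw' : cW c' = (k : ℤ) := by
        unfold cW; simp only [hc']
        rw [abs_pred c.2.1 h0]
        push_cast at hc ⊢; omega
      obtain ⟨p, hp⟩ := ih c' hw'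
      have hveq : ((cV m c : ℤ) : ZMod (nn m)) =
          ((cV m c' : ℤ) : ZMod (nn m)) + ((s*(4*(m:ℤ)+1) : ℤ) : ZMod (nn m)) := by
        unfold cV; simp only [hc']; push_cast; ring
      have hadj := adj_add m hm ((cV m c' : ℤ) : ZMod (nn m)) (4*(m:ℤ)+1) s
        (Or.inr (Or.inl rfl)) hs'
      exact ⟨(p.concat hadj).copy rfl hveq.symm, by
        simp [SimpleGraph.Walk.length_concat, hp]⟩
    · set s : ℤ := if 0 < c.2.2 then 1 else -1 with hs
      have hs' : s = 1 ∨ s = -1 := by unfold s; split <;> simp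
      set c' : ℤ × ℤ × ℤ := (c.1, c.2.1, c.2.2 - s) with hc'
      have hw' : cW c' = (k : ℤ) := by
        unfold cW; simp only [hc']
        rw [abs_pred c.2.2 h0]
        push_cast at hc ⊢; omega
      obtain ⟨p, hp⟩ := ih c' hw'
      have hveq : ((cV m c : ℤ) : ZMod (nn m)) =
          ((cV m c' : ℤ) : ZMod (nn m)) + ((s*(16*(m:ℤ)^2+4*m+1) : ℤ) : ZMod (nn m)) := by
        unfold cV; simp only [hc']; push_cast; ring
      have hadj := adj_add m hm ((cV m c' : ℤ) : ZMod (nn m)) (16*(m:ℤ)^2+4*m+1) s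
        (Or.inr (Or.inr rfl)) hs'
      exact ⟨(p.concat hadj).copy rfl hveq.symm, by
        simp [SimpleGraph.Walk.length_concat, hp]⟩


private lemma sum_Icc_symm (f : ℤ → ℕ) :
    ∀ (l : ℕ), ∑ t ∈ Finset.Icc (-(l:ℤ)) (l:ℤ), f t
      = f 0 + ∑ u ∈ Finset.Icc (1:ℤ) (l:ℤ), (f u + f (-u)) := by
  intro l
  induction l with
  | zero => simp
  | succ k ih =>
    have e1 : ((k+1:ℕ):ℤ) = (k:ℤ)+1 := by push_cast; ring
    have h1 : Finset.Icc (-((k:ℤ)+1)) ((k:ℤ)+1)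
        = insert (-((k:ℤ)+1)) (insert ((k:ℤ)+1) (Finset.Icc (-(k:ℤ)) (k:ℤ))) := by
      ext x; simp only [Finset.mem_Icc, Finset.mem_insert]; omega
    have h2 : Finset.Icc (1:ℤ) ((k:ℤ)+1) = insert ((k:ℤ)+1) (Finset.Icc (1:ℤ) (k:ℤ)) := by
      ext x; simp only [Finset.mem_Icc, Finset.mem_insert]; omega
    rw [e1, h1, h2, Finset.sum_insert (by simp only [Finset.mem_insert, Finset.mem_Icc]; omega),
      Finset.sum_insert (by simp only [Finset.mem_Icc]; omega),
      Finset.sum_insert (by simp only [Finset.mem_Icc]; omega), ih]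
    omega

private lemma c1_card (L u : ℤ) (hL : 0 ≤ L) :
    ((Finset.Icc (-L) L).filter (fun y => |y| = u)).card
      = if u = 0 then 1 else if 1 ≤ u ∧ u ≤ L then 2 else 0 := by
  split_ifs with h h'
  · subst h
    have he : (Finset.Icc (-L) L).filter (fun y => |y| = 0) = {0} := by
      ext y
      simp only [Finset.mem_filter, Finset.mem_Icc, abs_eq_zero, Finset.mem_singleton]
      constructor
      · exact fun h => h.2
      · rintro rfl; omega
    rw [he]; rfl
  · have he : (Finset.Icc (-L) L).filter (fun y => |y| = u) = {u, -u} := by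
      ext y
      simp only [Finset.mem_filter, Finset.mem_Icc, Finset.mem_insert, Finset.mem_singleton,
        abs_eq (by omega : (0:ℤ) ≤ u)]
      omega
    rw [he, Finset.card_insert_of_notMem (by simp only [Finset.mem_singleton]; omega),
      Finset.card_singleton]
  · have he : (Finset.Icc (-L) L).filter (fun y => |y| = u) = ∅ := by
      ext y
      simp only [Finset.mem_filter, Finset.mem_Icc, Finset.notMem_empty, iff_false]
      rintro ⟨⟨hy1, hy2⟩, hy3⟩
      have h4 : 0 ≤ u := hy3 ▸ abs_nonneg y
      have h5 : u ≤ L := hy3 ▸ abs_le.mpr ⟨hy1, hy2⟩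
      omega
    rw [he]; rfl

private lemma card_filter_product {α β : Type*} [DecidableEq α] [DecidableEq β]
    (A : Finset α) (B : Finset β) (P : α → β → Prop) [∀ a b, Decidable (P a b)] :
    ((A ×ˢ B).filter (fun p => P p.1 p.2)).card
      = ∑ a ∈ A, (B.filter (fun b => P a b)).card := by
  rw [Finset.card_filter, Finset.sum_product]
  exact Finset.sum_congr rfl fun a _ => (Finset.card_filter _ _).symm

private lemma c2_card (l : ℕ) (s : ℤ) (h0 : 0 ≤ s) (hsl : s ≤ (l:ℤ)) :
    (((Finset.Icc (-(l:ℤ)) (l:ℤ)) ×ˢ (Finset.Icc (-(l:ℤ)) (l:ℤ))).filter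
      (fun p => |p.1| + |p.2| = s)).card
      = if s = 0 then 1 else 4 * s.toNat := by
  by_cases hs0 : s = 0
  · subst hs0
    rw [if_pos rfl]
    have he : (((Finset.Icc (-(l:ℤ)) (l:ℤ)) ×ˢ (Finset.Icc (-(l:ℤ)) (l:ℤ))).filter
        (fun p => |p.1| + |p.2| = 0)) = {((0:ℤ),(0:ℤ))} := by
      ext p
      simp only [Finset.mem_filter, Finset.mem_product, Finset.mem_Icc, Finset.mem_singleton,
        Prod.ext_iff]
      constructor
      · rintro ⟨-, hp⟩
        have a1 := abs_nonneg p.1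
        have a2 := abs_nonneg p.2
        constructor
        · rw [← abs_eq_zero]; omega
        · rw [← abs_eq_zero]; omega
      · rintro ⟨h1, h2⟩
        rw [h1, h2]
        norm_num
    rw [he]; rfl
  · rw [if_neg hs0]
    have hs1 : 1 ≤ s := by omega
    rw [card_filter_product (P := fun x y => |x| + |y| = s)]
    rw [Finset.sum_congr rfl (fun x _ => by
      rw [show (Finset.Icc (-(l:ℤ)) (l:ℤ)).filter (fun y => |x| + |y| = s)
            = (Finset.Icc (-(l:ℤ)) (l:ℤ)).filter (fun y => |y| = s - |x|) from
          Finset.filter_congr (fun y _ => by constructor <;> intro h <;> linarith),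
        c1_card (l:ℤ) (s - |x|) (by positivity)])]
    rw [sum_Icc_symm (fun x => if s - |x| = 0 then 1
        else if 1 ≤ s - |x| ∧ s - |x| ≤ (l:ℤ) then 2 else 0) l]
    have hf0 : (if s - |(0:ℤ)| = 0 then 1
        else if 1 ≤ s - |(0:ℤ)| ∧ s - |(0:ℤ)| ≤ (l:ℤ) then 2 else 0) = 2 := by
      rw [abs_zero, if_neg (by omega), if_pos (by omega)]
    rw [hf0]
    have hstep : ∀ u ∈ Finset.Icc (1:ℤ) (l:ℤ),
        ((if s - |u| = 0 then 1 else if 1 ≤ s - |u| ∧ s - |u| ≤ (l:ℤ) then 2 else 0)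
          + (if s - |(-u)| = 0 then 1 else if 1 ≤ s - |(-u)| ∧ s - |(-u)| ≤ (l:ℤ) then 2 else 0)
          : ℕ)
        = ((if u = s then 2 else 0) + if u ≤ s - 1 then 4 else 0) := by
      intro u hu
      simp only [Finset.mem_Icc] at hu
      rw [abs_neg, abs_of_nonneg (by omega : (0:ℤ) ≤ u)]
      split_ifs <;> omega
    rw [Finset.sum_congr rfl hstep, Finset.sum_add_distrib,
      Finset.sum_ite_eq' (Finset.Icc (1:ℤ) (l:ℤ)) s (fun _ => 2),
      if_pos (by simp only [Finset.mem_Icc]; omega), ← Finset.sum_filter,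
      show (Finset.Icc (1:ℤ) (l:ℤ)).filter (fun u => u ≤ s - 1) = Finset.Icc (1:ℤ) (s-1) from by
        ext u; simp only [Finset.mem_filter, Finset.mem_Icc]; omega,
      Finset.sum_const, Int.card_Icc, smul_eq_mul]
    omega

private lemma gauss2 : ∀ (l : ℕ),
    2 * (∑ u ∈ Finset.Icc (1:ℤ) (l:ℤ), (u - 1).toNat) = l*(l-1) := by
  intro l
  induction l with
  | zero => simp
  | succ k ih =>
    have e1 : ((k+1:ℕ):ℤ) = (k:ℤ)+1 := by push_cast; ring
    have h2 : Finset.Icc (1:ℤ) ((k:ℤ)+1) = insert ((k:ℤ)+1) (Finset.Icc (1:ℤ) (k:ℤ)) := by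
      ext x; simp only [Finset.mem_Icc, Finset.mem_insert]; omega
    rw [e1, h2, Finset.sum_insert (by simp only [Finset.mem_Icc]; omega)]
    have e2 : ((k:ℤ) + 1 - 1).toNat = k := by omega
    rw [e2, Nat.mul_add, ih]
    cases k with
    | zero => rfl
    | succ j => simp only [Nat.succ_sub_one]; ring

private lemma gauss_sum (l : ℕ) :
    2 * (∑ u ∈ Finset.Icc (1:ℤ) (l:ℤ), ((l:ℤ) - u).toNat) = l*(l-1) := by
  have hbij : ∑ u ∈ Finset.Icc (1:ℤ) (l:ℤ), ((l:ℤ) - u).toNat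
      = ∑ u ∈ Finset.Icc (1:ℤ) (l:ℤ), (u - 1).toNat :=
    Finset.sum_bij' (fun u _ => (l:ℤ) + 1 - u) (fun u _ => (l:ℤ) + 1 - u)
      (fun a ha => by simp only [Finset.mem_Icc] at ha ⊢; omega)
      (fun a ha => by simp only [Finset.mem_Icc] at ha ⊢; omega)
      (fun a ha => by omega)
      (fun a ha => by omega)
      (fun a ha => by omega)
  rw [hbij]; exact gauss2 l

private lemma c3_card (l : ℕ) (hl : 1 ≤ l) :
    (((Finset.Icc (-(l:ℤ)) (l:ℤ)) ×ˢ ((Finset.Icc (-(l:ℤ)) (l:ℤ)) ×ˢ (Finset.Icc (-(l:ℤ)) (l:ℤ)))).filter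
      (fun c => |c.1| + |c.2.1| + |c.2.2| = (l:ℤ))).card = 4*l^2+2 := by
  rw [show (((Finset.Icc (-(l:ℤ)) (l:ℤ)) ×ˢ ((Finset.Icc (-(l:ℤ)) (l:ℤ)) ×ˢ (Finset.Icc (-(l:ℤ)) (l:ℤ)))).filter
      (fun c => |c.1| + |c.2.1| + |c.2.2| = (l:ℤ)))
      = (((Finset.Icc (-(l:ℤ)) (l:ℤ)) ×ˢ ((Finset.Icc (-(l:ℤ)) (l:ℤ)) ×ˢ (Finset.Icc (-(l:ℤ)) (l:ℤ)))).filter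
      (fun c => |c.2.1| + |c.2.2| = (l:ℤ) - |c.1|)) from
    Finset.filter_congr (fun c _ => by constructor <;> intro h <;> linarith)]
  rw [card_filter_product (P := fun x (q : ℤ×ℤ) => |q.1| + |q.2| = (l:ℤ) - |x|)]
  rw [Finset.sum_congr rfl (fun x hx => by
    have hx' : -((l:ℤ)) ≤ x ∧ x ≤ (l:ℤ) := Finset.mem_Icc.mp hx
    have ha : |x| ≤ (l:ℤ) := abs_le.mpr hx'
    have ha0 := abs_nonneg x
    exact c2_card l ((l:ℤ) - |x|) (by omega) (by omega))]
  rw [sum_Icc_symm (fun x => if (l:ℤ) - |x| = 0 then 1 else 4 * ((l:ℤ) - |x|).toNat) l]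
  have hf0 : (if (l:ℤ) - |(0:ℤ)| = 0 then 1 else 4 * ((l:ℤ) - |(0:ℤ)|).toNat) = 4*l := by
    rw [abs_zero, if_neg (by omega), sub_zero]
    omega
  rw [hf0]
  have hstep : ∀ u ∈ Finset.Icc (1:ℤ) (l:ℤ),
      ((if (l:ℤ) - |u| = 0 then 1 else 4 * ((l:ℤ) - |u|).toNat)
        + (if (l:ℤ) - |(-u)| = 0 then 1 else 4 * ((l:ℤ) - |(-u)|).toNat) : ℕ)
      = ((if u = (l:ℤ) then 2 else 0) + 8 * ((l:ℤ) - u).toNat) := by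
    intro u hu
    simp only [Finset.mem_Icc] at hu
    rw [abs_neg, abs_of_nonneg (by omega : (0:ℤ) ≤ u)]
    split_ifs <;> omega
  rw [Finset.sum_congr rfl hstep, Finset.sum_add_distrib,
    Finset.sum_ite_eq' (Finset.Icc (1:ℤ) (l:ℤ)) ((l:ℤ)) (fun _ => 2),
    if_pos (by simp only [Finset.mem_Icc]; omega), ← Finset.mul_sum]
  have hg := gauss_sum l
  cases l with
  | zero => omega
  | succ j =>
    simp only [Nat.succ_sub_one] at hg
    nlinarith [hg]

private lemma cW_nonneg (c : ℤ × ℤ × ℤ) : 0 ≤ cW c := by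
  unfold cW
  have := abs_nonneg c.1; have := abs_nonneg c.2.1; have := abs_nonneg c.2.2
  linarith

private lemma dist_le_rep (m : ℕ) (hm : 1 ≤ m) (c : ℤ × ℤ × ℤ) :
    (Xm m).dist 0 ((cV m c : ℤ) : ZMod (nn m)) ≤ (cW c).toNat := by
  obtain ⟨p, hp⟩ := walk_of_rep m hm (cW c).toNat c
    (by rw [Int.toNat_of_nonneg (cW_nonneg c)])
  exact hp ▸ SimpleGraph.dist_le p

private lemma inj_small (m : ℕ) (hm : 1 ≤ m) (c c' : ℤ × ℤ × ℤ)
    (h1 : cW c ≤ 2*(m:ℤ)) (h2 : cW c' ≤ 2*(m:ℤ))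
    (he : ((cV m c : ℤ) : ZMod (nn m)) = ((cV m c' : ℤ) : ZMod (nn m))) : c = c' := by
  have hM : (1:ℤ) ≤ (m:ℤ) := by exact_mod_cast hm
  have hnn : ((nn m : ℕ) : ℤ) = 32*(m:ℤ)^3+16*(m:ℤ)^2+6*(m:ℤ)+1 := by push_cast; ring
  have hdvd : ((nn m : ℕ) : ℤ) ∣ (cV m c - cV m c') := by
    rw [← ZMod.intCast_zmod_eq_zero_iff_dvd]
    push_cast
    rw [sub_eq_zero]
    exact_mod_cast he
  rw [hnn] at hdvd
  have hdvd2 : (32*(m:ℤ)^3+16*(m:ℤ)^2+6*(m:ℤ)+1) ∣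
      ((c.1 - c'.1) + (c.2.1 - c'.2.1)*(4*(m:ℤ)+1) + (c.2.2 - c'.2.2)*(16*(m:ℤ)^2+4*(m:ℤ)+1)) := by
    have : cV m c - cV m c' = (c.1 - c'.1) + (c.2.1 - c'.2.1)*(4*(m:ℤ)+1)
        + (c.2.2 - c'.2.2)*(16*(m:ℤ)^2+4*(m:ℤ)+1) := by unfold cV; ring
    rwa [this] at hdvd
  have hwb : |c.1 - c'.1| + |c.2.1 - c'.2.1| + |c.2.2 - c'.2.2| ≤ 4*(m:ℤ) := by
    have t1 := abs_sub c.1 c'.1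
    have t2 := abs_sub c.2.1 c'.2.1
    have t3 := abs_sub c.2.2 c'.2.2
    unfold cW at h1 h2
    linarith
  obtain ⟨e1, e2, e3⟩ := keyInt (m:ℤ) hM _ _ _ hwb hdvd2
  have p1 : c.1 = c'.1 := by linarith [sub_eq_zero.mp e1]
  have p2 : c.2.1 = c'.2.1 := by linarith [sub_eq_zero.mp e2]
  have p3 : c.2.2 = c'.2.2 := by linarith [sub_eq_zero.mp e3]
  exact Prod.ext p1 (Prod.ext p2 p3)

private lemma sphere_eq (m : ℕ) (hm : 1 ≤ m) (l : ℕ) (hl1 : 1 ≤ l) (hl2 : l ≤ 2*m) :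
    {v : ZMod (nn m) | (Xm m).dist 0 v = l} =
      (fun c => ((cV m c : ℤ) : ZMod (nn m))) '' {c | cW c = (l:ℤ)} := by
  have hlm : (l:ℤ) ≤ 2*(m:ℤ) := by exact_mod_cast hl2
  ext v
  simp only [Set.mem_setOf_eq, Set.mem_image]
  constructor
  · intro hd
    have hreach : (Xm m).Reachable 0 v :=
      SimpleGraph.Reachable.of_dist_ne_zero (by omega)
    obtain ⟨p, hp⟩ := hreach.exists_walk_length_eq_dist
    obtain ⟨c, hc, hw⟩ := rep_of_walk m p
    rw [sub_zero] at hc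
    have hd2 : (Xm m).dist 0 v ≤ (cW c).toNat := by
      rw [hc]; exact dist_le_rep m hm c
    have hcl : cW c = (l:ℤ) := by
      rw [hp, hd] at hw
      rw [hd] at hd2
      have := cW_nonneg c
      omega
    exact ⟨c, hcl, hc.symm⟩
  · rintro ⟨c, hcW, rfl⟩
    have hdle : (Xm m).dist 0 ((cV m c : ℤ) : ZMod (nn m)) ≤ l := by
      have := dist_le_rep m hm c
      rw [hcW] at this
      omega
    rcases lt_or_eq_of_le hdle with hlt | heq
    · exfalso
      obtain ⟨p0, -⟩ := walk_of_rep m hm l c hcW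
      have hreach : (Xm m).Reachable 0 ((cV m c : ℤ) : ZMod (nn m)) := ⟨p0⟩
      obtain ⟨q, hq⟩ := hreach.exists_walk_length_eq_dist
      obtain ⟨c', hc', hw'⟩ := rep_of_walk m q
      rw [sub_zero] at hc'
      have hcc : c = c' := by
        refine inj_small m hm c c' (by omega) ?_ hc'
        rw [hq] at hw'
        calc cW c' ≤ ((Xm m).dist 0 ((cV m c : ℤ) : ZMod (nn m)) : ℤ) := hw'
        _ ≤ (l:ℤ) := by exact_mod_cast le_of_lt hlt
        _ ≤ 2*(m:ℤ) := hlm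
      rw [hq] at hw'
      rw [← hcc, hcW] at hw'
      have : (l:ℤ) < (l:ℤ) := by
        calc (l:ℤ) ≤ ((Xm m).dist 0 ((cV m c : ℤ) : ZMod (nn m)) : ℤ) := hw'
        _ < (l:ℤ) := by exact_mod_cast hlt
      exact absurd this (lt_irrefl _)
    · exact heq

private lemma sphere_ncard_z (l : ℕ) (hl : 1 ≤ l) :
    {c : ℤ × ℤ × ℤ | cW c = (l:ℤ)}.ncard = 4*l^2+2 := by
  have hset : {c : ℤ × ℤ × ℤ | cW c = (l:ℤ)} =
      ↑(((Finset.Icc (-(l:ℤ)) (l:ℤ)) ×ˢ ((Finset.Icc (-(l:ℤ)) (l:ℤ)) ×ˢ (Finset.Icc (-(l:ℤ)) (l:ℤ)))).filter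
        (fun c => |c.1| + |c.2.1| + |c.2.2| = (l:ℤ))) := by
    ext c
    simp only [Set.mem_setOf_eq, Finset.coe_filter, Finset.mem_product, Finset.mem_Icc]
    unfold cW
    constructor
    · intro h
      have a1 := abs_nonneg c.1; have a2 := abs_nonneg c.2.1; have a3 := abs_nonneg c.2.2
      have b1 := abs_le.mp (show |c.1| ≤ (l:ℤ) by omega)
      have b2 := abs_le.mp (show |c.2.1| ≤ (l:ℤ) by omega)
      have b3 := abs_le.mp (show |c.2.2| ≤ (l:ℤ) by omega)
      exact ⟨⟨⟨b1.1, b1.2⟩, ⟨b2.1, b2.2⟩, ⟨b3.1, b3.2⟩⟩, h⟩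
    · exact fun h => h.2
  rw [hset, Set.ncard_coe_finset, c3_card l hl]

private lemma main_count (m : ℕ) (hm : 1 ≤ m) (l : ℕ) (hl1 : 1 ≤ l) (hl2 : l ≤ 2*m) :
    {v : ZMod (nn m) | (Xm m).dist 0 v = l}.ncard = 4*l^2+2 := by
  have hlm : (l:ℤ) ≤ 2*(m:ℤ) := by exact_mod_cast hl2
  rw [sphere_eq m hm l hl1 hl2]
  rw [Set.ncard_image_of_injOn (fun c hc c' hc' he =>
    inj_small m hm c c' (by rw [Set.mem_setOf_eq] at hc; omega)
      (by rw [Set.mem_setOf_eq] at hc'; omega) he)]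
  exact sphere_ncard_z l hl1

/-- For the largest known circulant graph of degree 6 and diameter `k = 3m` (isomorphism
class 1; order `n = 32m³+16m²+6m+1`, generators `1`, `4m+1`, `16m²+4m+1`), every
distance partition level `l` with `1 ≤ l ≤ 2m = ⌊(2k+1)/3⌋` is maximal: it has `6`
vertices if `l = 1` and `4l²+2 = LM_AC(6, l)` vertices if `l ≥ 2`. -/
theorem stmt2 (m : ℕ) (hm : 1 ≤ m) (l : ℕ) (hl1 : 1 ≤ l) (hl2 : l ≤ 2*m) :
    let n : ℕ := 32*m^3+16*m^2+6*m+1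
    let X := circulant n ![(1 : ℤ), 4*(m : ℤ)+1, 16*(m : ℤ)^2+4*m+1]
    (l = 1 → {v : ZMod n | X.dist 0 v = l}.ncard = 6) ∧
    (2 ≤ l → {v : ZMod n | X.dist 0 v = l}.ncard = 4*l^2+2) := by
  intro n X
  have key : {v : ZMod (nn m) | (Xm m).dist 0 v = l}.ncard = 4*l^2+2 :=
    main_count m hm l hl1 hl2
  constructor
  · intro hl
    subst hl
    simpa using key
  · intro _
    exact key
end

section
/- Let m ≥ 1, n = 32m³ + 16m² + 6m + 1, and let X be the circulant graph X(Z_n; {±1, ±(4m+1), ±(16m²+4m+1)}) (the largest known circulant graph of degree 6 and diameter k = 3m, isomorphism class 1). Then for every l with 2m + 1 ≤ l ≤ 3m, the number of vertices of X at graph distance exactly l from the vertex 0 is strictly less than 4l² + 2; i.e., every level l > ⌊(2k+1)/3⌋ is submaximal in the sense of the Abelian Cayley bound. -/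
namespace Stmt3Aux

open Finset

/-! ### Counting lemmas -/

lemma icc_insert (r : ℕ) :
    Finset.Icc (-(r:ℤ)-1) ((r:ℤ)+1) =
      insert (-(r:ℤ)-1) (insert ((r:ℤ)+1) (Finset.Icc (-(r:ℤ)) (r:ℤ))) := by
  ext x; simp only [Finset.mem_Icc, Finset.mem_insert]; omega

lemma sumIcc (r : ℕ) :
    ∑ a ∈ Finset.Icc (-(r:ℤ)) (r:ℤ), (2*r+1 - 2*a.natAbs) = 2*r^2+2*r+1 := by
  induction r with
  | zero => simp
  | succ r ih =>
    have h1 : (-((r:ℤ)+1)) = -(r:ℤ)-1 := by ring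
    have h2 : (((r+1:ℕ)):ℤ) = (r:ℤ)+1 := by push_cast; ring
    rw [h2, h1, icc_insert]
    rw [Finset.sum_insert (by simp only [Finset.mem_insert, Finset.mem_Icc]; omega),
        Finset.sum_insert (by simp only [Finset.mem_Icc]; omega)]
    have hcong : ∑ a ∈ Finset.Icc (-(r:ℤ)) (r:ℤ), (2*(r+1)+1 - 2*a.natAbs)
        = ∑ a ∈ Finset.Icc (-(r:ℤ)) (r:ℤ), ((2*r+1 - 2*a.natAbs) + 2) := by
      apply Finset.sum_congr rfl
      intro a ha
      simp only [Finset.mem_Icc] at ha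
      omega
    rw [hcong, Finset.sum_add_distrib, ih, Finset.sum_const, Int.card_Icc]
    have hc : ((r:ℤ) + 1 - -(r:ℤ)).toNat = 2*r+1 := by omega
    rw [hc]
    have hb1 : (-(r:ℤ)-1).natAbs = r+1 := by omega
    have hb2 : ((r:ℤ)+1).natAbs = r+1 := by omega
    rw [hb1, hb2]
    have e1 : 2*(r+1)+1 - 2*(r+1) = 1 := by omega
    rw [e1]
    ring

lemma cardB (L r : ℕ) :
    (((Finset.Icc (-(L:ℤ)) (L:ℤ)) ×ˢ (Finset.Icc (-(L:ℤ)) (L:ℤ))).filter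
      (fun p => p.1.natAbs + p.2.natAbs ≤ r)).card ≤ 2*r^2+2*r+1 := by
  classical
  have hsub : (((Finset.Icc (-(L:ℤ)) (L:ℤ)) ×ˢ (Finset.Icc (-(L:ℤ)) (L:ℤ))).filter
      (fun p => p.1.natAbs + p.2.natAbs ≤ r)) ⊆
      (Finset.Icc (-(r:ℤ)) (r:ℤ)).biUnion
        (fun a => ({a} : Finset ℤ) ×ˢ Finset.Icc ((a.natAbs:ℤ) - r) ((r:ℤ) - a.natAbs)) := by
    intro p hp
    simp only [Finset.mem_filter, Finset.mem_product, Finset.mem_Icc] at hp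
    simp only [Finset.mem_biUnion, Finset.mem_product, Finset.mem_singleton, Finset.mem_Icc]
    exact ⟨p.1, by omega, rfl, by omega⟩
  refine (Finset.card_le_card hsub).trans (Finset.card_biUnion_le.trans ?_)
  have : ∀ a ∈ Finset.Icc (-(r:ℤ)) (r:ℤ),
      ((({a} : Finset ℤ) ×ˢ Finset.Icc ((a.natAbs:ℤ) - r) ((r:ℤ) - a.natAbs)).card
        = 2*r+1 - 2*a.natAbs) := by
    intro a ha
    simp only [Finset.mem_Icc] at ha
    rw [Finset.card_product, Finset.card_singleton, Int.card_Icc]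
    omega
  rw [Finset.sum_congr rfl this, sumIcc]

lemma cardSphere (l : ℕ) (hl : 1 ≤ l) :
    (((Finset.Icc (-(l:ℤ)) (l:ℤ)) ×ˢ ((Finset.Icc (-(l:ℤ)) (l:ℤ)) ×ˢ (Finset.Icc (-(l:ℤ)) (l:ℤ)))).filter
      (fun t => t.1.natAbs + t.2.1.natAbs + t.2.2.natAbs = l)).card ≤ 4*l^2+2 := by
  classical
  set Bs := ((Finset.Icc (-(l:ℤ)) (l:ℤ)) ×ˢ (Finset.Icc (-(l:ℤ)) (l:ℤ))).filter
      (fun p : ℤ × ℤ => p.1.natAbs + p.2.natAbs ≤ l) with hBs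
  set fib : ℤ×ℤ → Finset (ℤ×ℤ×ℤ) := fun p =>
    {(p.1, p.2, ((l:ℤ) - p.1.natAbs - p.2.natAbs)),
     (p.1, p.2, -((l:ℤ) - p.1.natAbs - p.2.natAbs))} with hfibdef
  have hsub : (((Finset.Icc (-(l:ℤ)) (l:ℤ)) ×ˢ ((Finset.Icc (-(l:ℤ)) (l:ℤ)) ×ˢ (Finset.Icc (-(l:ℤ)) (l:ℤ)))).filter
      (fun t => t.1.natAbs + t.2.1.natAbs + t.2.2.natAbs = l)) ⊆ Bs.biUnion fib := by
    intro t ht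
    simp only [Finset.mem_filter, Finset.mem_product, Finset.mem_Icc] at ht
    simp only [Finset.mem_biUnion, hBs, hfibdef, Finset.mem_filter, Finset.mem_product,
      Finset.mem_Icc, Finset.mem_insert, Finset.mem_singleton, Prod.ext_iff]
    refine ⟨(t.1, t.2.1), ⟨⟨ht.1.1, ht.1.2.1⟩, by omega⟩, ?_⟩
    have : t.2.2 = ((l:ℤ) - t.1.natAbs - t.2.1.natAbs)
        ∨ t.2.2 = -((l:ℤ) - t.1.natAbs - t.2.1.natAbs) := by omega
    rcases this with h | h
    · exact Or.inl ⟨rfl, rfl, h⟩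
    · exact Or.inr ⟨rfl, rfl, h⟩
  refine (Finset.card_le_card hsub).trans (Finset.card_biUnion_le.trans ?_)
  have hfib : ∀ p ∈ Bs, (fib p).card ≤
      1 + (if p.1.natAbs + p.2.natAbs = l then 0 else 1) := by
    intro p hp
    by_cases h : p.1.natAbs + p.2.natAbs = l
    · have hz : ((l:ℤ) - p.1.natAbs - p.2.natAbs) = 0 := by omega
      simp only [hfibdef, hz, neg_zero, if_pos h, Finset.insert_idem]
      simp
    · simp only [if_neg h]
      exact (Finset.card_insert_le _ _).trans (by simp)
  refine (Finset.sum_le_sum hfib).trans ?_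
  rw [Finset.sum_add_distrib, Finset.sum_const, smul_eq_mul, mul_one, Finset.sum_ite,
    Finset.sum_const, Finset.sum_const, smul_eq_mul, smul_eq_mul, mul_zero, mul_one, zero_add]
  have h1 : Bs.card ≤ 2*l^2+2*l+1 := cardB l l
  have h2 : (Bs.filter (fun p => ¬ p.1.natAbs + p.2.natAbs = l)).card
      ≤ 2*(l-1)^2+2*(l-1)+1 := by
    refine le_trans (Finset.card_le_card ?_) (cardB l (l-1))
    intro p hp
    simp only [hBs, Finset.mem_filter, Finset.mem_product, Finset.mem_Icc] at hp ⊢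
    exact ⟨hp.1.1, by omega⟩
  obtain ⟨k, rfl⟩ : ∃ k, l = k + 1 := ⟨l - 1, by omega⟩
  simp only [Nat.add_sub_cancel] at h2
  nlinarith [h1, h2]

/-! ### Graph lemmas -/

abbrev NN (m : ℕ) : ℕ := 32*m^3+16*m^2+6*m+1

abbrev gl (m : ℕ) : Fin 3 → ℤ := ![(1 : ℤ), 4*(m : ℤ)+1, 16*(m : ℤ)^2+4*m+1]

abbrev GG (m : ℕ) : SimpleGraph (ZMod (NN m)) := circulant (NN m) (gl m)

def fF (m : ℕ) (t : ℤ×ℤ×ℤ) : ZMod (NN m) :=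
  ((t.1 + t.2.1*(4*(m:ℤ)+1) + t.2.2*(16*(m:ℤ)^2+4*(m:ℤ)+1) : ℤ) : ZMod (NN m))

lemma cast_ne (n : ℕ) (k : ℤ) (h0 : 0 < k) (h1 : k < (n:ℤ)) : (k : ZMod n) ≠ 0 := by
  haveI : NeZero n := ⟨by omega⟩
  intro h
  rw [ZMod.intCast_zmod_eq_zero_iff_dvd] at h
  have := Int.le_of_dvd h0 h
  omega

lemma gl_pos (m : ℕ) (hm1 : 1 ≤ m) (i : Fin 3) : 0 < gl m i ∧ gl m i < ((NN m : ℕ) : ℤ) := by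
  have hm : (1:ℤ) ≤ (m:ℤ) := by exact_mod_cast hm1
  fin_cases i <;> simp <;> push_cast <;>
    first
      | nlinarith [mul_le_mul (mul_le_mul hm hm (by norm_num) (by linarith)) hm (by norm_num) (by positivity), sq_nonneg ((m:ℤ))]
      | (constructor <;> nlinarith [mul_le_mul (mul_le_mul hm hm (by norm_num) (by linarith)) hm (by norm_num) (by positivity), sq_nonneg ((m:ℤ))])

lemma adj_step (m : ℕ) (hm1 : 1 ≤ m) (x : ZMod (NN m)) (i : Fin 3) :
    (GG m).Adj x (x + ((gl m i : ℤ) : ZMod (NN m))) := by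
  obtain ⟨h0, h1⟩ := gl_pos m hm1 i
  refine ⟨?_, i, Or.inl (add_sub_cancel_left x _)⟩
  intro h
  exact cast_ne (NN m) (gl m i) h0 h1 (left_eq_add.mp h)

lemma triple_walk (m : ℕ) (hm1 : 1 ≤ m) : ∀ (w : ℕ) (t : ℤ×ℤ×ℤ),
    t.1.natAbs + t.2.1.natAbs + t.2.2.natAbs ≤ w →
    ∃ p : (GG m).Walk 0 (fF m t), p.length ≤ w := by
  intro w
  induction w with
  | zero =>
    rintro ⟨a, b, c⟩ h
    simp only at h
    obtain ⟨rfl, rfl, rfl⟩ : a = 0 ∧ b = 0 ∧ c = 0 := by omega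
    have he : (0 : ZMod (NN m)) = fF m (0, 0, 0) := by simp [fF]
    exact ⟨(SimpleGraph.Walk.nil).copy rfl he, by simp⟩
  | succ w ih =>
    rintro ⟨a, b, c⟩ h
    by_cases h0 : a.natAbs + b.natAbs + c.natAbs ≤ w
    · obtain ⟨p, hp⟩ := ih (a, b, c) h0
      exact ⟨p, hp.trans (Nat.le_succ w)⟩
    simp only at h h0
    rcases lt_trichotomy a 0 with ha | ha | ha
    · obtain ⟨p, hp⟩ := ih (a+1, b, c) (by simp only; omega)
      have e : fF m (a+1, b, c) = fF m (a, b, c) + ((gl m 0 : ℤ) : ZMod (NN m)) := by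
        simp only [fF, gl, Matrix.cons_val_zero]
        push_cast
        ring
      have adj := adj_step m hm1 (fF m (a, b, c)) 0
      rw [← e] at adj
      exact ⟨p.concat adj.symm, by rw [SimpleGraph.Walk.length_concat]; omega⟩
    · rcases lt_trichotomy b 0 with hb | hb | hb
      · obtain ⟨p, hp⟩ := ih (a, b+1, c) (by simp only; omega)
        have e : fF m (a, b+1, c) = fF m (a, b, c) + ((gl m 1 : ℤ) : ZMod (NN m)) := by
          simp only [fF, gl, Matrix.cons_val_one, Matrix.head_cons]
          push_cast
          ring
        have adj := adj_step m hm1 (fF m (a, b, c)) 1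
        rw [← e] at adj
        exact ⟨p.concat adj.symm, by rw [SimpleGraph.Walk.length_concat]; omega⟩
      · rcases lt_trichotomy c 0 with hc | hc | hc
        · obtain ⟨p, hp⟩ := ih (a, b, c+1) (by simp only; omega)
          have e : fF m (a, b, c+1) = fF m (a, b, c) + ((gl m 2 : ℤ) : ZMod (NN m)) := by
            simp only [fF, gl, Matrix.cons_val_two, Matrix.tail_cons, Matrix.head_cons]
            push_cast
            ring
          have adj := adj_step m hm1 (fF m (a, b, c)) 2
          rw [← e] at adj
          exact ⟨p.concat adj.symm, by rw [SimpleGraph.Walk.length_concat]; omega⟩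
        · omega
        · obtain ⟨p, hp⟩ := ih (a, b, c-1) (by simp only; omega)
          have e : fF m (a, b, c) = fF m (a, b, c-1) + ((gl m 2 : ℤ) : ZMod (NN m)) := by
            simp only [fF, gl, Matrix.cons_val_two, Matrix.tail_cons, Matrix.head_cons]
            push_cast
            ring
          have adj := adj_step m hm1 (fF m (a, b, c-1)) 2
          rw [← e] at adj
          exact ⟨p.concat adj, by rw [SimpleGraph.Walk.length_concat]; omega⟩
      · obtain ⟨p, hp⟩ := ih (a, b-1, c) (by simp only; omega)
        have e : fF m (a, b, c) = fF m (a, b-1, c) + ((gl m 1 : ℤ) : ZMod (NN m)) := by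
          simp only [fF, gl, Matrix.cons_val_one, Matrix.head_cons]
          push_cast
          ring
        have adj := adj_step m hm1 (fF m (a, b-1, c)) 1
        rw [← e] at adj
        exact ⟨p.concat adj, by rw [SimpleGraph.Walk.length_concat]; omega⟩
    · obtain ⟨p, hp⟩ := ih (a-1, b, c) (by simp only; omega)
      have e : fF m (a, b, c) = fF m (a-1, b, c) + ((gl m 0 : ℤ) : ZMod (NN m)) := by
        simp only [fF, gl, Matrix.cons_val_zero]
        push_cast
        ring
      have adj := adj_step m hm1 (fF m (a-1, b, c)) 0
      rw [← e] at adj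
      exact ⟨p.concat adj, by rw [SimpleGraph.Walk.length_concat]; omega⟩

lemma walk_triple (m : ℕ) (u v : ZMod (NN m)) (p : (GG m).Walk u v) :
    ∃ t : ℤ×ℤ×ℤ, t.1.natAbs + t.2.1.natAbs + t.2.2.natAbs ≤ p.length ∧ v - u = fF m t := by
  induction p with
  | nil => exact ⟨(0, 0, 0), by simp, by simp [fF]⟩
  | @cons u w v h q ih =>
    obtain ⟨⟨x, y, z⟩, hw, hv⟩ := ih
    obtain ⟨-, i, hi⟩ := id h
    simp only [SimpleGraph.Walk.length_cons]
    simp only at hw hv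
    fin_cases i <;> simp only [gl] at hi <;> simp at hi <;> rcases hi with hi | hi
    · refine ⟨(x+1, y, z), by simp only; omega, ?_⟩
      rw [show v - u = (v - w) + (w - u) by ring, hv, hi]
      simp only [fF]; push_cast; ring
    · refine ⟨(x-1, y, z), by simp only; omega, ?_⟩
      rw [show v - u = (v - w) - (u - w) by ring, hv, hi]
      simp only [fF]; push_cast; ring
    · refine ⟨(x, y+1, z), by simp only; omega, ?_⟩
      rw [show v - u = (v - w) + (w - u) by ring, hv, hi]
      simp only [fF]; push_cast; ring
    · refine ⟨(x, y-1, z), by simp only; omega, ?_⟩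
      rw [show v - u = (v - w) - (u - w) by ring, hv, hi]
      simp only [fF]; push_cast; ring
    · refine ⟨(x, y, z+1), by simp only; omega, ?_⟩
      rw [show v - u = (v - w) + (w - u) by ring, hv, hi]
      simp only [fF]; push_cast; ring
    · refine ⟨(x, y, z-1), by simp only; omega, ?_⟩
      rw [show v - u = (v - w) - (u - w) by ring, hv, hi]
      simp only [fF]; push_cast; ring

end Stmt3Aux

open Stmt3Aux in
/-- For the largest known circulant graph of degree 6 and diameter `k = 3m` (isomorphism
class 1; order `n = 32m³+16m²+6m+1`, generators `1`, `4m+1`, `16m²+4m+1`), every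
distance partition level `l` with `2m+1 ≤ l ≤ 3m` is submaximal: it has strictly fewer
than `4l²+2 = LM_AC(6, l)` vertices. -/
theorem stmt3 (m : ℕ) (hm : 1 ≤ m) (l : ℕ) (hl1 : 2*m+1 ≤ l) (hl2 : l ≤ 3*m) :
    {v : ZMod (32*m^3+16*m^2+6*m+1) |
      (circulant (32*m^3+16*m^2+6*m+1)
        ![(1 : ℤ), 4*(m : ℤ)+1, 16*(m : ℤ)^2+4*m+1]).dist 0 v = l}.ncard < 4*l^2+2 := by
  classical
  set S := (((Finset.Icc (-(l:ℤ)) (l:ℤ)) ×ˢ ((Finset.Icc (-(l:ℤ)) (l:ℤ)) ×ˢ (Finset.Icc (-(l:ℤ)) (l:ℤ)))).filter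
      (fun t : ℤ×ℤ×ℤ => t.1.natAbs + t.2.1.natAbs + t.2.2.natAbs = l)) with hS
  set T1 : ℤ×ℤ×ℤ := (1, (2*(m:ℤ)-1, -((l:ℤ)-2*m))) with hT1
  set T2 : ℤ×ℤ×ℤ := (0, (-(2*(m:ℤ)+1), -((l:ℤ)-2*m-1))) with hT2
  have hT1S : T1 ∈ S := by
    simp only [hS, hT1, Finset.mem_filter, Finset.mem_product, Finset.mem_Icc]
    refine ⟨⟨by omega, by omega, by omega⟩, by omega⟩
  have hT2S : T2 ∈ S := by
    simp only [hS, hT2, Finset.mem_filter, Finset.mem_product, Finset.mem_Icc]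
    refine ⟨⟨by omega, by omega, by omega⟩, by omega⟩
  have hT12 : T1 ≠ T2 := by
    simp only [hT1, hT2, ne_eq, Prod.mk.injEq]
    intro h
    exact one_ne_zero h.1
  have hFeq : fF m T1 = fF m T2 := by
    simp only [fF, hT1, hT2]
    exact congrArg _ (by ring)
  have hsub : {v : ZMod (NN m) | (GG m).dist 0 v = l}
      ⊆ (fF m) '' ↑(S.erase T2) := by
    intro v hv
    simp only [Set.mem_setOf_eq] at hv
    have hreach : (GG m).Reachable 0 v :=
      SimpleGraph.Reachable.of_dist_ne_zero (by omega)
    obtain ⟨p, hp⟩ := hreach.exists_walk_length_eq_dist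
    obtain ⟨t, hw, hv'⟩ := walk_triple m 0 v p
    rw [hp, hv] at hw
    rw [sub_zero] at hv'
    have hge : l ≤ t.1.natAbs + t.2.1.natAbs + t.2.2.natAbs := by
      obtain ⟨q, hq⟩ := triple_walk m hm _ t le_rfl
      have hd := SimpleGraph.dist_le q
      have hdv : (GG m).dist 0 (fF m t) = l := by rw [← hv', hv]
      omega
    have hwt : t.1.natAbs + t.2.1.natAbs + t.2.2.natAbs = l := le_antisymm hw hge
    have htS : t ∈ S := by
      simp only [hS, Finset.mem_filter, Finset.mem_product, Finset.mem_Icc]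
      refine ⟨⟨by omega, by omega, by omega⟩, hwt⟩
    by_cases ht2 : t = T2
    · refine ⟨T1, ?_, ?_⟩
      · simp only [Finset.coe_erase, Set.mem_diff, Set.mem_singleton_iff]
        exact ⟨hT1S, hT12⟩
      · rw [hFeq, ← ht2, ← hv']
    · refine ⟨t, ?_, hv'.symm⟩
      simp only [Finset.coe_erase, Set.mem_diff, Set.mem_singleton_iff]
      exact ⟨htS, ht2⟩
  have hcard : S.card ≤ 4*l^2+2 := cardSphere l (by omega)
  have hpos : 0 < S.card := Finset.card_pos.mpr ⟨T1, hT1S⟩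
  calc {v : ZMod (32*m^3+16*m^2+6*m+1) |
      (circulant (32*m^3+16*m^2+6*m+1)
        ![(1 : ℤ), 4*(m : ℤ)+1, 16*(m : ℤ)^2+4*m+1]).dist 0 v = l}.ncard
      ≤ ((fF m) '' ↑(S.erase T2)).ncard :=
        Set.ncard_le_ncard hsub ((S.erase T2).finite_toSet.image _)
    _ ≤ ((S.erase T2 : Set (ℤ×ℤ×ℤ))).ncard := Set.ncard_image_le (Finset.finite_toSet _)
    _ = (S.erase T2).card := Set.ncard_coe_finset _
    _ = S.card - 1 := Finset.card_erase_of_mem hT2S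
    _ < S.card := Nat.sub_lt hpos one_pos
    _ ≤ 4*l^2+2 := hcard
end

section
/- Let m ≥ 2, n = 8m⁴ + 8m³ + 12m² + 4m, and let X be the circulant graph X(Z_n; {±1, ±(4m³+4m²+6m+1), ±(4m⁴+4m²−4m), ±(4m⁴+4m²−2m)}) (the largest known circulant graph of degree 8 and diameter k = 2m). Then for every l with 1 ≤ l ≤ m, the number of vertices of X at graph distance exactly l from the vertex 0 equals 8 if l = 1 and equals (8l³ + 16l)/3 if l ≥ 2; i.e., every level l ≤ ⌊(k+1)/2⌋ is maximal in the sense of the Abelian Cayley bound (LM_AC(8,l) = (8l³+16l)/3 for l ≥ 2). -/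
set_option maxHeartbeats 1600000

open Finset

noncomputable def sph2 (l : ℕ) : Finset (ℤ × ℤ) :=
  (Finset.Icc (-(l:ℤ)) l ×ˢ Finset.Icc (-(l:ℤ)) l).filter
    (fun p => p.1.natAbs + p.2.natAbs = l)

lemma mem_sph2 {l : ℕ} {p : ℤ × ℤ} : p ∈ sph2 l ↔ p.1.natAbs + p.2.natAbs = l := by
  simp only [sph2, Finset.mem_filter, Finset.mem_product, Finset.mem_Icc]
  omega

lemma fibcard (l : ℕ) (a : ℤ) :
    ({(a, (l:ℤ) - a.natAbs), (a, (a.natAbs:ℤ) - l)} : Finset (ℤ×ℤ)).card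
      = if a.natAbs = l then 1 else 2 := by
  split
  · next h =>
    have h2 : ((l:ℤ) - a.natAbs) = ((a.natAbs:ℤ) - l) := by omega
    rw [h2]
    simp
  · next h =>
    apply Finset.card_pair
    intro heq
    rw [Prod.mk.injEq] at heq
    omega

lemma card_sph2 {l : ℕ} (hl : 1 ≤ l) : (sph2 l).card = 4 * l := by
  have hrw : sph2 l =
      (Finset.Icc (-(l:ℤ)) l).biUnion
        (fun a => {(a, (l:ℤ) - a.natAbs), (a, (a.natAbs:ℤ) - l)}) := by
    ext ⟨x, y⟩
    simp only [mem_sph2, Finset.mem_biUnion, Finset.mem_Icc, Finset.mem_insert,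
      Finset.mem_singleton, Prod.mk.injEq]
    constructor
    · intro h
      exact ⟨x, by omega, by omega⟩
    · rintro ⟨a, ha, (⟨rfl, rfl⟩ | ⟨rfl, rfl⟩)⟩ <;> omega
  have hdisj : ∀ a ∈ Finset.Icc (-(l:ℤ)) l, ∀ b ∈ Finset.Icc (-(l:ℤ)) l, a ≠ b →
      Disjoint ({(a, (l:ℤ) - a.natAbs), (a, (a.natAbs:ℤ) - l)} : Finset (ℤ×ℤ))
        ({(b, (l:ℤ) - b.natAbs), (b, (b.natAbs:ℤ) - l)} : Finset (ℤ×ℤ)) := by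
    intro a _ b _ hab
    rw [Finset.disjoint_left]
    rintro ⟨x, y⟩ hx hy
    simp only [Finset.mem_insert, Finset.mem_singleton, Prod.mk.injEq] at hx hy
    rcases hx with ⟨rfl, _⟩ | ⟨rfl, _⟩ <;> rcases hy with ⟨rfl, _⟩ | ⟨rfl, _⟩ <;> exact hab rfl
  rw [hrw, Finset.card_biUnion hdisj]
  have hsplit : Finset.Icc (-(l:ℤ)) l = insert (-(l:ℤ)) (insert (l:ℤ) (Finset.Ioo (-(l:ℤ)) l)) := by
    ext a
    simp only [Finset.mem_Icc, Finset.mem_insert, Finset.mem_Ioo]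
    omega
  rw [hsplit, Finset.sum_insert (by simp only [Finset.mem_insert, Finset.mem_Ioo]; omega),
    Finset.sum_insert (by simp only [Finset.mem_Ioo]; omega)]
  rw [fibcard, fibcard]
  have h2sum : ∑ a ∈ Finset.Ioo (-(l:ℤ)) l,
      ({(a, (l:ℤ) - a.natAbs), (a, (a.natAbs:ℤ) - l)} : Finset (ℤ×ℤ)).card
      = ∑ _a ∈ Finset.Ioo (-(l:ℤ)) l, 2 := by
    refine Finset.sum_congr rfl (fun a ha => ?_)
    rw [Finset.mem_Ioo] at ha
    rw [fibcard, if_neg (by omega)]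
  rw [if_pos (by omega), if_pos (by omega), h2sum, Finset.sum_const, Int.card_Ioo, smul_eq_mul]
  omega

noncomputable def sph4 (l : ℕ) : Finset ((ℤ×ℤ)×(ℤ×ℤ)) :=
  (Finset.range (l+1)).biUnion (fun j => sph2 j ×ˢ sph2 (l - j))

def nrm (x : (ℤ×ℤ)×(ℤ×ℤ)) : ℕ :=
  x.1.1.natAbs + x.1.2.natAbs + x.2.1.natAbs + x.2.2.natAbs

lemma mem_sph4 {l : ℕ} {x : (ℤ×ℤ)×(ℤ×ℤ)} : x ∈ sph4 l ↔ nrm x = l := by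
  simp only [sph4, nrm, Finset.mem_biUnion, Finset.mem_range, Finset.mem_product, mem_sph2]
  constructor
  · rintro ⟨j, hj, h1, h2⟩; omega
  · intro h; exact ⟨x.1.1.natAbs + x.1.2.natAbs, by omega, rfl, by omega⟩

lemma card_sph2_full (j : ℕ) : (sph2 j).card = if j = 0 then 1 else 4*j := by
  split
  · next h =>
    subst h
    have : sph2 0 = {((0:ℤ), (0:ℤ))} := by
      ext ⟨x, y⟩
      rw [mem_sph2]
      simp only [Finset.mem_singleton, Prod.mk.injEq]
      omega
    rw [this, Finset.card_singleton]
  · next h => exact card_sph2 (by omega)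

lemma sum6 (N : ℕ) : 6 * ∑ j ∈ Finset.range N, (j+1)*(N-j) = N*(N+1)*(N+2) := by
  induction N with
  | zero => simp
  | succ N ih =>
    rw [Finset.sum_range_succ]
    have h1 : ∑ j ∈ Finset.range N, (j+1)*(N+1-j) =
        ∑ j ∈ Finset.range N, ((j+1)*(N-j) + (j+1)) := by
      refine Finset.sum_congr rfl (fun j hj => ?_)
      rw [Finset.mem_range] at hj
      have : N+1-j = (N-j)+1 := by omega
      rw [this, mul_add, mul_one]
    rw [h1, Finset.sum_add_distrib]
    have hg : (∑ j ∈ Finset.range N, (j+1)) * 2 = (N+1)*N := by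
      have := Finset.sum_range_id_mul_two (N+1)
      rw [Finset.sum_range_succ' (fun k => k) N] at this
      simpa using this
    have hsub : N+1-N = 1 := by omega
    rw [hsub, mul_one]
    zify at ih hg ⊢
    linear_combination ih + 3*hg

lemma card_sph4 {l : ℕ} (hl : 1 ≤ l) : 3 * (sph4 l).card = 8*l^3 + 16*l := by
  obtain ⟨N, rfl⟩ : ∃ N, l = N + 1 := ⟨l - 1, by omega⟩
  have hdisj : ∀ i ∈ Finset.range (N+2), ∀ j ∈ Finset.range (N+2), i ≠ j →
      Disjoint (sph2 i ×ˢ sph2 (N+1-i)) (sph2 j ×ˢ sph2 (N+1-j)) := by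
    intro i _ j _ hij
    rw [Finset.disjoint_left]
    rintro ⟨p, q⟩ hp hq
    rw [Finset.mem_product] at hp hq
    have h1 := mem_sph2.1 hp.1
    have h2 := mem_sph2.1 hq.1
    omega
  rw [show sph4 (N+1) = (Finset.range (N+2)).biUnion
      (fun j => sph2 j ×ˢ sph2 (N+1-j)) from rfl]
  rw [Finset.card_biUnion hdisj]
  have hcard : ∀ j, (sph2 j ×ˢ sph2 (N+1-j)).card = (sph2 j).card * (sph2 (N+1-j)).card :=
    fun j => Finset.card_product _ _
  rw [Finset.sum_congr rfl (fun j _ => hcard j)]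
  rw [Finset.sum_congr rfl (fun j _ => by rw [card_sph2_full j, card_sph2_full (N+1-j)])]
  rw [Finset.sum_range_succ' (fun j => (if j = 0 then 1 else 4*j) * (if N+1-j = 0 then 1 else 4*(N+1-j))) (N+1)]
  rw [Finset.sum_range_succ]
  have hlast : (if N+1 = 0 then 1 else 4*(N+1)) * (if N+1-(N+1) = 0 then 1 else 4*(N+1-(N+1))) = 4*(N+1) := by
    rw [if_neg (by omega), if_pos (by omega)]
    omega
  have hzero : (if (0:ℕ) = 0 then 1 else 4*0) * (if N+1-0 = 0 then 1 else 4*(N+1-0)) = 4*(N+1) := by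
    rw [if_pos rfl, if_neg (by omega)]
    omega
  rw [hlast, hzero]
  have hmid : ∑ j ∈ Finset.range N, (if j+1 = 0 then 1 else 4*(j+1)) * (if N+1-(j+1) = 0 then 1 else 4*(N+1-(j+1)))
      = 16 * ∑ j ∈ Finset.range N, (j+1)*(N-j) := by
    rw [Finset.mul_sum]
    refine Finset.sum_congr rfl (fun j hj => ?_)
    rw [Finset.mem_range] at hj
    rw [if_neg (by omega), if_neg (by omega)]
    have : N+1-(j+1) = N-j := by omega
    rw [this]
    ring
  rw [hmid]
  have h6 := sum6 N
  nlinarith [h6]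

lemma case2 (M b t : ℤ) (hM : 2 ≤ M) (hb2 : |b| ≤ 2*M)
    (hE : 1 + b*(2*M^2+2*M+3) = 2*t*(2*M^3+2*M^2+3*M+1)) : False := by
  rw [abs_le] at hb2
  rcases lt_trichotomy t 0 with ht | ht | ht
  · have h1 : t ≤ -1 := by omega
    nlinarith [mul_nonneg (by linarith : (0:ℤ) ≤ -t-1) (by nlinarith : (0:ℤ) ≤ 2*M^3+2*M^2+3*M+1),
      mul_nonneg (by linarith : (0:ℤ) ≤ b+2*M) (by nlinarith : (0:ℤ) ≤ 2*M^2+2*M+3)]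
  · subst ht
    rcases lt_trichotomy b 0 with hb | hb | hb
    · nlinarith [mul_nonneg (by linarith : (0:ℤ) ≤ -b-1) (by nlinarith : (0:ℤ) ≤ 2*M^2+2*M+3)]
    · simp [hb] at hE
    · nlinarith [mul_nonneg (by linarith : (0:ℤ) ≤ b-1) (by nlinarith : (0:ℤ) ≤ 2*M^2+2*M+3)]
  · have h1 : 1 ≤ t := by omega
    nlinarith [mul_nonneg (by linarith : (0:ℤ) ≤ t-1) (by nlinarith : (0:ℤ) ≤ 2*M^3+2*M^2+3*M+1),
      mul_nonneg (by linarith : (0:ℤ) ≤ 2*M-b) (by nlinarith : (0:ℤ) ≤ 2*M^2+2*M+3)]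

lemma keylem (M a b c d t : ℤ) (hM : 2 ≤ M)
    (h : a + b*(4*M^3+4*M^2+6*M+1) + c*(4*M^4+4*M^2-4*M) + d*(4*M^4+4*M^2-2*M)
        = t*(8*M^4+8*M^3+12*M^2+4*M))
    (hb : |a|+|b|+|c|+|d| ≤ 2*M) : a = 0 ∧ b = 0 ∧ c = 0 ∧ d = 0 := by
  have hM0 : (2*M) ≠ 0 := by intro h0; omega
  obtain ⟨k, hk⟩ : ∃ k, a + b = 2*M*k :=
    ⟨t*(4*M^3+4*M^2+6*M+2) - b*(2*M^2+2*M+3) - c*(2*M^3+2*M-2) - d*(2*M^3+2*M-1),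
      by linear_combination h⟩
  have hk1 : k = -1 ∨ k = 0 ∨ k = 1 := by
    have h1 : |a + b| ≤ 2*M := by
      have := abs_add_le a b
      have hc0 := abs_nonneg c
      have hd0 := abs_nonneg d
      linarith
    rw [hk, abs_mul] at h1
    have h2 : |2*M| = 2*M := abs_of_pos (by omega)
    rw [h2] at h1
    have : |k| ≤ 1 := by nlinarith [abs_nonneg k]
    rw [abs_le] at this
    omega
  have hb2 : |b| ≤ 2*M := by
    have := abs_nonneg a; have := abs_nonneg c; have := abs_nonneg d; linarith
  rcases hk1 with hkv | hkv | hkv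
  -- case a + b = -2M
  · exfalso
    subst hkv
    have hcd : |c| = 0 ∧ |d| = 0 := by
      have h1 : 2*M ≤ |a| + |b| := by
        calc 2*M = |a+b| := by
              rw [hk, abs_mul, abs_of_pos (show (0:ℤ) < 2*M by omega)]; simp
          _ ≤ |a| + |b| := abs_add_le a b
      constructor <;>
        · have := abs_nonneg c; have := abs_nonneg d; linarith
    have hc0 : c = 0 := abs_eq_zero.1 hcd.1
    have hd0 : d = 0 := abs_eq_zero.1 hcd.2
    subst hc0; subst hd0
    have hE : 1 + (-b)*(2*M^2+2*M+3) = 2*(-t)*(2*M^3+2*M^2+3*M+1) := by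
      apply mul_left_cancel₀ hM0
      linear_combination hk - h
    exact case2 M (-b) (-t) hM (by rw [abs_neg]; exact hb2) hE
  -- case a + b = 0
  · subst hkv
    have hbeq : b = -a := by omega
    subst hbeq
    rw [abs_neg] at hb hb2
    have hE : (-a)*(2*M^2+2*M+3) + c*(2*M^3+2*M-2) + d*(2*M^3+2*M-1)
        = 2*t*(2*M^3+2*M^2+3*M+1) := by
      apply mul_left_cancel₀ hM0
      linear_combination h
    have q0 : (0:ℤ) ≤ 2*M^2+2*M+3 := by nlinarith
    have r0 : (0:ℤ) ≤ 2*M^3+2*M-2 := by nlinarith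
    have r10 : (0:ℤ) ≤ 2*M^3+2*M-1 := by nlinarith
    have s0 : (0:ℤ) ≤ 2*M^3+2*M^2+3*M+1 := by nlinarith
    have haa := le_abs_self a; have han := neg_abs_le a
    have hca := le_abs_self c; have hcn := neg_abs_le c
    have hda := le_abs_self d; have hdn := neg_abs_le d
    have ha0 := abs_nonneg a; have hc0 := abs_nonneg c; have hd0 := abs_nonneg d
    -- bound on t
    have ht : |t| ≤ M - 1 := by
      by_contra hcon
      push_neg at hcon
      have htM : M ≤ |t| := by omega
      rcases abs_cases t with ⟨hT, _⟩ | ⟨hT, _⟩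
      · -- t = |t| ≥ M
        rw [hT] at htM
        nlinarith [mul_nonneg (show (0:ℤ) ≤ |a|+a by linarith) q0,
          mul_nonneg (show (0:ℤ) ≤ |c|-c by linarith) r0,
          mul_nonneg (show (0:ℤ) ≤ |d|-d by linarith) r10,
          mul_nonneg ha0 (show (0:ℤ) ≤ 4*M^3-2*M^2+2*M-5 by nlinarith),
          hc0,
          mul_le_mul_of_nonneg_right hb r10,
          mul_nonneg (show (0:ℤ) ≤ t-M by linarith) s0,
          mul_pos (show (0:ℤ) < M by omega) (show (0:ℤ) < 2*M^2+M+2 by nlinarith)]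
      · -- t = -|t| ≤ -M
        rw [hT] at htM
        nlinarith [mul_nonneg (show (0:ℤ) ≤ |a|-a by linarith) q0,
          mul_nonneg (show (0:ℤ) ≤ |c|+c by linarith) r0,
          mul_nonneg (show (0:ℤ) ≤ |d|+d by linarith) r10,
          mul_nonneg ha0 (show (0:ℤ) ≤ 4*M^3-2*M^2+2*M-5 by nlinarith),
          hc0,
          mul_le_mul_of_nonneg_right hb r10,
          mul_nonneg (show (0:ℤ) ≤ -t-M by linarith) s0,
          mul_pos (show (0:ℤ) < M by omega) (show (0:ℤ) < 2*M^2+M+2 by nlinarith)]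
    set A : ℤ := -a + (M-1)*(c+d) - 2*t*M with hAdef
    have hA : (2*M^2+2*M+3) * A + (c*(M+1) + d*(M+2) - 2*t) = 0 := by
      rw [hAdef]; linear_combination hE
    have hta := le_abs_self t; have htn := neg_abs_le t
    have hAval : A = -1 ∨ A = 0 ∨ A = 1 := by
      have hub : c*(M+1) + d*(M+2) - 2*t ≤ 2*M^2+6*M-2 := by
        nlinarith [mul_nonneg (show (0:ℤ) ≤ |c|-c by linarith) (show (0:ℤ) ≤ M+2 by omega),
          mul_nonneg (show (0:ℤ) ≤ |d|-d by linarith) (show (0:ℤ) ≤ M+2 by omega),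
          mul_nonneg hc0 (show (0:ℤ) ≤ 1 by norm_num),
          mul_le_mul_of_nonneg_right hb (show (0:ℤ) ≤ M+2 by omega),
          mul_nonneg ha0 (show (0:ℤ) ≤ M+2 by omega)]
      have hlb : -(2*M^2+6*M-2) ≤ c*(M+1) + d*(M+2) - 2*t := by
        nlinarith [mul_nonneg (show (0:ℤ) ≤ |c|+c by linarith) (show (0:ℤ) ≤ M+2 by omega),
          mul_nonneg (show (0:ℤ) ≤ |d|+d by linarith) (show (0:ℤ) ≤ M+2 by omega),
          mul_nonneg hc0 (show (0:ℤ) ≤ 1 by norm_num),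
          mul_le_mul_of_nonneg_right hb (show (0:ℤ) ≤ M+2 by omega),
          mul_nonneg ha0 (show (0:ℤ) ≤ M+2 by omega)]
      have hA2 : -2 < A ∧ A < 2 := by
        constructor
        · by_contra hc2
          push_neg at hc2
          have : (2*M^2+2*M+3) * A ≤ (2*M^2+2*M+3) * (-2) :=
            mul_le_mul_of_nonneg_left (by omega) q0
          nlinarith
        · by_contra hc2
          push_neg at hc2
          have : (2*M^2+2*M+3) * 2 ≤ (2*M^2+2*M+3) * A :=
            mul_le_mul_of_nonneg_left (by omega) q0
          nlinarith
      omega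
    have hcomb : c*(M^2+1) + d*(M^2+M+1) + a + A*(2*M^3+2*M^2+3*M+1) = 0 := by
      rw [hAdef] at hA ⊢
      linear_combination M * hA
    rcases hAval with hAe | hAe | hAe
    · exfalso
      rw [hAe] at hcomb
      nlinarith [mul_nonneg (show (0:ℤ) ≤ |c|+c by linarith) (show (0:ℤ) ≤ M^2+M+1 by nlinarith),
        mul_nonneg (show (0:ℤ) ≤ |d|+d by linarith) (show (0:ℤ) ≤ M^2+M+1 by nlinarith),
        mul_nonneg hc0 (show (0:ℤ) ≤ M by omega),
        mul_le_mul_of_nonneg_right hb (show (0:ℤ) ≤ M^2+M+1 by nlinarith),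
        mul_nonneg ha0 (show (0:ℤ) ≤ 2*M^2+2*M+1 by nlinarith)]
    · rw [hAe] at hcomb
      obtain ⟨S, K, hceq, hdeq, haeq⟩ : ∃ S K, c = (M+1)*S - K ∧ d = K - M*S ∧ a = -S - M*K :=
        ⟨c+d, M*(c+d)+d, by ring, by ring, by linear_combination hcomb⟩
      subst hceq; subst hdeq; subst haeq
      have hx1a := le_abs_self (-S - M*K); have hx1n := neg_abs_le (-S - M*K)
      have hx2a := le_abs_self ((M+1)*S - K); have hx2n := neg_abs_le ((M+1)*S - K)
      have hx3a := le_abs_self (K - M*S); have hx3n := neg_abs_le (K - M*S)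
      have hx1z := abs_nonneg (-S - M*K); have hx2z := abs_nonneg ((M+1)*S - K)
      have hx3z := abs_nonneg (K - M*S)
      have hSK : S = 0 ∧ K = 0 := by
        rcases lt_trichotomy S 0 with hS | hS | hS <;>
          rcases lt_trichotomy K 0 with hK' | hK' | hK'
        · -- S<0, K<0 : |x1| ≥ -S - MK... x1 = -S-MK > 0
          exfalso
          nlinarith [mul_nonneg (show (0:ℤ) ≤ -K-1 by omega) (show (0:ℤ) ≤ M by omega)]
        · exfalso
          subst hK'
          nlinarith [mul_nonneg (show (0:ℤ) ≤ -S-1 by omega) (show (0:ℤ) ≤ 2*M+3 by omega)]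
        · exfalso
          nlinarith [mul_nonneg (show (0:ℤ) ≤ -S-1 by omega) (show (0:ℤ) ≤ 2*M+1 by omega),
            mul_nonneg (show (0:ℤ) ≤ K-1 by omega) (show (0:ℤ) ≤ (2:ℤ) by norm_num)]
        · exfalso
          subst hS
          nlinarith [mul_nonneg (show (0:ℤ) ≤ -K-1 by omega) (show (0:ℤ) ≤ M by omega)]
        · exact ⟨hS, hK'⟩
        · exfalso
          subst hS
          nlinarith [mul_nonneg (show (0:ℤ) ≤ K-1 by omega) (show (0:ℤ) ≤ M by omega)]
        · exfalso
          nlinarith [mul_nonneg (show (0:ℤ) ≤ S-1 by omega) (show (0:ℤ) ≤ 2*M+1 by omega),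
            mul_nonneg (show (0:ℤ) ≤ -K-1 by omega) (show (0:ℤ) ≤ (2:ℤ) by norm_num)]
        · exfalso
          subst hK'
          nlinarith [mul_nonneg (show (0:ℤ) ≤ S-1 by omega) (show (0:ℤ) ≤ 2*M+3 by omega)]
        · exfalso
          nlinarith [mul_nonneg (show (0:ℤ) ≤ K-1 by omega) (show (0:ℤ) ≤ M by omega)]
      obtain ⟨hS0, hK0⟩ := hSK
      subst hS0; subst hK0
      norm_num
    · exfalso
      rw [hAe] at hcomb
      nlinarith [mul_nonneg (show (0:ℤ) ≤ |c|-c by linarith) (show (0:ℤ) ≤ M^2+M+1 by nlinarith),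
        mul_nonneg (show (0:ℤ) ≤ |d|-d by linarith) (show (0:ℤ) ≤ M^2+M+1 by nlinarith),
        mul_nonneg hc0 (show (0:ℤ) ≤ M by omega),
        mul_le_mul_of_nonneg_right hb (show (0:ℤ) ≤ M^2+M+1 by nlinarith),
        mul_nonneg ha0 (show (0:ℤ) ≤ 2*M^2+2*M+1 by nlinarith)]
  -- case a + b = 2M
  · exfalso
    subst hkv
    have hcd : |c| = 0 ∧ |d| = 0 := by
      have h1 : 2*M ≤ |a| + |b| := by
        calc 2*M = |a+b| := by
              rw [hk, abs_mul, abs_of_pos (show (0:ℤ) < 2*M by omega)]; simp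
          _ ≤ |a| + |b| := abs_add_le a b
      constructor <;>
        · have := abs_nonneg c; have := abs_nonneg d; linarith
    have hc0 : c = 0 := abs_eq_zero.1 hcd.1
    have hd0 : d = 0 := abs_eq_zero.1 hcd.2
    subst hc0; subst hd0
    have hE : 1 + b*(2*M^2+2*M+3) = 2*t*(2*M^3+2*M^2+3*M+1) := by
      apply mul_left_cancel₀ hM0
      linear_combination h - hk
    exact case2 M b t hM hb2 hE

def NN (m : ℕ) : ℕ := 8*m^4+8*m^3+12*m^2+4*m

def gg (m : ℕ) : Fin 4 → ℤ := ![(1 : ℤ), 4*(m : ℤ)^3+4*m^2+6*m+1,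
      4*(m : ℤ)^4+4*m^2-4*m, 4*(m : ℤ)^4+4*m^2-2*m]

def wsum (m : ℕ) (x : (ℤ×ℤ)×(ℤ×ℤ)) : ℤ :=
  x.1.1 + x.1.2*(4*(m : ℤ)^3+4*m^2+6*m+1) + x.2.1*(4*(m : ℤ)^4+4*m^2-4*m)
    + x.2.2*(4*(m : ℤ)^4+4*m^2-2*m)

def FF (m : ℕ) (x : (ℤ×ℤ)×(ℤ×ℤ)) : ZMod (NN m) := ((wsum m x : ℤ) : ZMod (NN m))

example (m : ℕ) : gg m 0 = 1 := rfl
example (m : ℕ) : gg m 1 = 4*(m : ℤ)^3+4*m^2+6*m+1 := rfl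
example (m : ℕ) : gg m 2 = 4*(m : ℤ)^4+4*m^2-4*m := rfl
example (m : ℕ) : gg m 3 = 4*(m : ℤ)^4+4*m^2-2*m := rfl

lemma FF_zero (m : ℕ) : FF m ((0,0),(0,0)) = 0 := by
  simp [FF, wsum]

lemma stepwalk {m L : ℕ} {v v' : ZMod (NN m)} (i : Fin 4)
    (hv : v - v' = ((gg m i : ℤ) : ZMod (NN m)) ∨ v' - v = ((gg m i : ℤ) : ZMod (NN m)))
    (hp : ∃ p : (circulant (NN m) (gg m)).Walk 0 v', p.length ≤ L) :
    ∃ p : (circulant (NN m) (gg m)).Walk 0 v, p.length ≤ L + 1 := by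
  obtain ⟨p, hpl⟩ := hp
  by_cases hvv : v' = v
  · subst hvv
    exact ⟨p, by omega⟩
  · have hadj : (circulant (NN m) (gg m)).Adj v' v := ⟨hvv, i, hv⟩
    exact ⟨p.concat hadj, by rw [SimpleGraph.Walk.length_concat]; omega⟩

lemma reach (m : ℕ) : ∀ (l : ℕ) (x : (ℤ×ℤ)×(ℤ×ℤ)), nrm x ≤ l →
    ∃ p : (circulant (NN m) (gg m)).Walk 0 (FF m x), p.length ≤ l := by
  intro l
  induction l with
  | zero =>
    rintro ⟨⟨a,b⟩,⟨c,d⟩⟩ h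
    simp only [nrm] at h
    obtain ⟨ha, hb, hc, hd⟩ : a = 0 ∧ b = 0 ∧ c = 0 ∧ d = 0 := by omega
    subst ha; subst hb; subst hc; subst hd
    exact ⟨SimpleGraph.Walk.nil.copy rfl (FF_zero m).symm, by simp⟩
  | succ l ih =>
    rintro ⟨⟨a,b⟩,⟨c,d⟩⟩ h
    by_cases h' : nrm ((a,b),(c,d)) ≤ l
    · obtain ⟨p, hp⟩ := ih _ h'
      exact ⟨p, by omega⟩
    · simp only [nrm] at h h'
      rcases show a ≠ 0 ∨ b ≠ 0 ∨ c ≠ 0 ∨ d ≠ 0 by omega with h0 | h0 | h0 | h0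
      · rcases lt_or_gt_of_ne h0 with hs | hs
        · refine stepwalk 0 (Or.inr ?_) (ih ((a+1,b),(c,d)) (by simp only [nrm]; omega))
          show FF m ((a+1,b),(c,d)) - FF m ((a,b),(c,d)) = ((1:ℤ) : ZMod (NN m))
          rw [FF, FF, ← Int.cast_sub]
          norm_num [wsum]
        · refine stepwalk 0 (Or.inl ?_) (ih ((a-1,b),(c,d)) (by simp only [nrm]; omega))
          show FF m ((a,b),(c,d)) - FF m ((a-1,b),(c,d)) = ((1:ℤ) : ZMod (NN m))
          rw [FF, FF, ← Int.cast_sub]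
          norm_num [wsum]
      · rcases lt_or_gt_of_ne h0 with hs | hs
        · refine stepwalk 1 (Or.inr ?_) (ih ((a,b+1),(c,d)) (by simp only [nrm]; omega))
          show FF m ((a,b+1),(c,d)) - FF m ((a,b),(c,d))
            = ((4*(m : ℤ)^3+4*m^2+6*m+1 : ℤ) : ZMod (NN m))
          rw [FF, FF, ← Int.cast_sub]
          norm_num [wsum]
          ring_nf
        · refine stepwalk 1 (Or.inl ?_) (ih ((a,b-1),(c,d)) (by simp only [nrm]; omega))
          show FF m ((a,b),(c,d)) - FF m ((a,b-1),(c,d))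
            = ((4*(m : ℤ)^3+4*m^2+6*m+1 : ℤ) : ZMod (NN m))
          rw [FF, FF, ← Int.cast_sub]
          norm_num [wsum]
          ring_nf
      · rcases lt_or_gt_of_ne h0 with hs | hs
        · refine stepwalk 2 (Or.inr ?_) (ih ((a,b),(c+1,d)) (by simp only [nrm]; omega))
          show FF m ((a,b),(c+1,d)) - FF m ((a,b),(c,d))
            = ((4*(m : ℤ)^4+4*m^2-4*m : ℤ) : ZMod (NN m))
          rw [FF, FF, ← Int.cast_sub]
          norm_num [wsum]
          ring_nf
        · refine stepwalk 2 (Or.inl ?_) (ih ((a,b),(c-1,d)) (by simp only [nrm]; omega))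
          show FF m ((a,b),(c,d)) - FF m ((a,b),(c-1,d))
            = ((4*(m : ℤ)^4+4*m^2-4*m : ℤ) : ZMod (NN m))
          rw [FF, FF, ← Int.cast_sub]
          norm_num [wsum]
          ring_nf
      · rcases lt_or_gt_of_ne h0 with hs | hs
        · refine stepwalk 3 (Or.inr ?_) (ih ((a,b),(c,d+1)) (by simp only [nrm]; omega))
          show FF m ((a,b),(c,d+1)) - FF m ((a,b),(c,d))
            = ((4*(m : ℤ)^4+4*m^2-2*m : ℤ) : ZMod (NN m))
          rw [FF, FF, ← Int.cast_sub]
          norm_num [wsum]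
          ring_nf
        · refine stepwalk 3 (Or.inl ?_) (ih ((a,b),(c,d-1)) (by simp only [nrm]; omega))
          show FF m ((a,b),(c,d)) - FF m ((a,b),(c,d-1))
            = ((4*(m : ℤ)^4+4*m^2-2*m : ℤ) : ZMod (NN m))
          rw [FF, FF, ← Int.cast_sub]
          norm_num [wsum]
          ring_nf

lemma FF_step (m : ℕ) (x : (ℤ×ℤ)×(ℤ×ℤ)) (z : ℤ) :
    FF m x + ((z : ℤ) : ZMod (NN m)) = ((wsum m x + z : ℤ) : ZMod (NN m)) := by
  rw [FF]; push_cast; ring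

lemma walk_to_rep (m : ℕ) {u v : ZMod (NN m)} (p : (circulant (NN m) (gg m)).Walk u v) :
    ∃ x, nrm x ≤ p.length ∧ v - u = FF m x := by
  induction p with
  | nil => exact ⟨((0,0),(0,0)), by simp [nrm], by rw [FF_zero]; ring⟩
  | @cons u w v hadj q ih =>
    rw [SimpleGraph.Walk.length_cons]
    obtain ⟨x, hx, he⟩ := ih
    obtain ⟨hne, i, hi⟩ := hadj
    have hvu : ∀ z : ZMod (NN m), w - u = z → v - u = FF m x + z := by
      intro z hz
      rw [← hz, ← he]; ring
    have hvu' : ∀ z : ZMod (NN m), u - w = z → v - u = FF m x + -z := by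
      intro z hz
      rw [← hz, ← he]; ring
    fin_cases i <;> rcases hi with hi | hi
    · refine ⟨((x.1.1 + 1, x.1.2), x.2), ?_, ?_⟩
      · simp only [nrm, SimpleGraph.Walk.length_cons] at hx ⊢; omega
      · rw [hvu _ hi]
        show FF m x + (((1:ℤ)) : ZMod (NN m)) = _
        rw [FF_step]
        congr 1
        simp only [wsum]
        ring
    · refine ⟨((x.1.1 - 1, x.1.2), x.2), ?_, ?_⟩
      · simp only [nrm, SimpleGraph.Walk.length_cons] at hx ⊢; omega
      · rw [hvu' _ hi]
        show FF m x + -(((1:ℤ)) : ZMod (NN m)) = _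
        rw [show -(((1:ℤ)) : ZMod (NN m)) = ((-((1:ℤ)) : ℤ) : ZMod (NN m)) by push_cast; ring,
          FF_step]
        congr 1
        simp only [wsum]
        ring
    · refine ⟨((x.1.1, x.1.2 + 1), x.2), ?_, ?_⟩
      · simp only [nrm, SimpleGraph.Walk.length_cons] at hx ⊢; omega
      · rw [hvu _ hi]
        show FF m x + (((4*(m : ℤ)^3+4*m^2+6*m+1 : ℤ)) : ZMod (NN m)) = _
        rw [FF_step]
        congr 1
        simp only [wsum]
        ring
    · refine ⟨((x.1.1, x.1.2 - 1), x.2), ?_, ?_⟩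
      · simp only [nrm, SimpleGraph.Walk.length_cons] at hx ⊢; omega
      · rw [hvu' _ hi]
        show FF m x + -(((4*(m : ℤ)^3+4*m^2+6*m+1 : ℤ)) : ZMod (NN m)) = _
        rw [show -(((4*(m : ℤ)^3+4*m^2+6*m+1 : ℤ)) : ZMod (NN m)) = ((-((4*(m : ℤ)^3+4*m^2+6*m+1 : ℤ)) : ℤ) : ZMod (NN m)) by push_cast; ring,
          FF_step]
        congr 1
        simp only [wsum]
        ring
    · refine ⟨((x.1.1, x.1.2), (x.2.1 + 1, x.2.2)), ?_, ?_⟩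
      · simp only [nrm, SimpleGraph.Walk.length_cons] at hx ⊢; omega
      · rw [hvu _ hi]
        show FF m x + (((4*(m : ℤ)^4+4*m^2-4*m : ℤ)) : ZMod (NN m)) = _
        rw [FF_step]
        congr 1
        simp only [wsum]
        ring
    · refine ⟨((x.1.1, x.1.2), (x.2.1 - 1, x.2.2)), ?_, ?_⟩
      · simp only [nrm, SimpleGraph.Walk.length_cons] at hx ⊢; omega
      · rw [hvu' _ hi]
        show FF m x + -(((4*(m : ℤ)^4+4*m^2-4*m : ℤ)) : ZMod (NN m)) = _
        rw [show -(((4*(m : ℤ)^4+4*m^2-4*m : ℤ)) : ZMod (NN m)) = ((-((4*(m : ℤ)^4+4*m^2-4*m : ℤ)) : ℤ) : ZMod (NN m)) by push_cast; ring,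
          FF_step]
        congr 1
        simp only [wsum]
        ring
    · refine ⟨((x.1.1, x.1.2), (x.2.1, x.2.2 + 1)), ?_, ?_⟩
      · simp only [nrm, SimpleGraph.Walk.length_cons] at hx ⊢; omega
      · rw [hvu _ hi]
        show FF m x + (((4*(m : ℤ)^4+4*m^2-2*m : ℤ)) : ZMod (NN m)) = _
        rw [FF_step]
        congr 1
        simp only [wsum]
        ring
    · refine ⟨((x.1.1, x.1.2), (x.2.1, x.2.2 - 1)), ?_, ?_⟩
      · simp only [nrm, SimpleGraph.Walk.length_cons] at hx ⊢; omega
      · rw [hvu' _ hi]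
        show FF m x + -(((4*(m : ℤ)^4+4*m^2-2*m : ℤ)) : ZMod (NN m)) = _
        rw [show -(((4*(m : ℤ)^4+4*m^2-2*m : ℤ)) : ZMod (NN m)) = ((-((4*(m : ℤ)^4+4*m^2-2*m : ℤ)) : ℤ) : ZMod (NN m)) by push_cast; ring,
          FF_step]
        congr 1
        simp only [wsum]
        ring

lemma NN_pos (m : ℕ) (hm : 2 ≤ m) : 0 < NN m :=
  Nat.lt_of_lt_of_le (show 0 < 4*m by omega) (Nat.le_add_left (4*m) _)

lemma FF_inj (m : ℕ) (hm : 2 ≤ m) {x y : (ℤ×ℤ)×(ℤ×ℤ)}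
    (hx : nrm x ≤ m) (hy : nrm y ≤ m) (h : FF m x = FF m y) : x = y := by
  haveI : NeZero (NN m) := ⟨(NN_pos m hm).ne'⟩
  have hd : ((wsum m x - wsum m y : ℤ) : ZMod (NN m)) = 0 := by
    rw [FF, FF] at h
    rw [Int.cast_sub, h, sub_self]
  rw [ZMod.intCast_zmod_eq_zero_iff_dvd] at hd
  obtain ⟨t, ht⟩ := hd
  obtain ⟨⟨a,b⟩,⟨c,d⟩⟩ := x
  obtain ⟨⟨a',b'⟩,⟨c',d'⟩⟩ := y
  simp only [nrm] at hx hy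
  have hMcast : (2:ℤ) ≤ (m:ℤ) := by exact_mod_cast hm
  have heq : (a-a') + (b-b')*(4*(m:ℤ)^3+4*(m:ℤ)^2+6*(m:ℤ)+1)
      + (c-c')*(4*(m:ℤ)^4+4*(m:ℤ)^2-4*(m:ℤ)) + (d-d')*(4*(m:ℤ)^4+4*(m:ℤ)^2-2*(m:ℤ))
      = t*(8*(m:ℤ)^4+8*(m:ℤ)^3+12*(m:ℤ)^2+4*(m:ℤ)) := by
    have : ((NN m : ℕ) : ℤ) = 8*(m:ℤ)^4+8*(m:ℤ)^3+12*(m:ℤ)^2+4*(m:ℤ) := by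
      simp only [NN]; push_cast; try ring
    rw [this] at ht
    simp only [wsum] at ht
    linear_combination ht
  have hnb : (a-a').natAbs + (b-b').natAbs + (c-c').natAbs + (d-d').natAbs ≤ 2*m := by
    omega
  have habs : |a-a'| + |b-b'| + |c-c'| + |d-d'| ≤ 2*(m:ℤ) := by
    rw [Int.abs_eq_natAbs, Int.abs_eq_natAbs, Int.abs_eq_natAbs, Int.abs_eq_natAbs]
    exact_mod_cast hnb
  obtain ⟨h1, h2, h3, h4⟩ := keylem (m:ℤ) (a-a') (b-b') (c-c') (d-d') t hMcast heq habs
  simp only [Prod.mk.injEq]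
  omega

lemma levelset (m : ℕ) (hm : 2 ≤ m) (l : ℕ) (hl1 : 1 ≤ l) (hl2 : l ≤ m) :
    {v : ZMod (NN m) | (circulant (NN m) (gg m)).dist 0 v = l}
      = ↑((sph4 l).image (FF m)) := by
  ext v
  simp only [Set.mem_setOf_eq, Finset.coe_image, Set.mem_image, Finset.mem_coe]
  constructor
  · intro hd
    have hreach : (circulant (NN m) (gg m)).Reachable 0 v := by
      by_contra hr
      have h0 := SimpleGraph.dist_eq_zero_iff_eq_or_not_reachable.mpr
        (Or.inr hr : (0 : ZMod (NN m)) = v ∨ ¬(circulant (NN m) (gg m)).Reachable 0 v)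
      omega
    obtain ⟨p, hp⟩ := hreach.exists_walk_length_eq_dist
    obtain ⟨x, hx, he⟩ := walk_to_rep m p
    rw [sub_zero] at he
    subst he
    rw [hp, hd] at hx
    have hxl : nrm x = l := by
      by_contra hne
      have hlt : nrm x ≤ l - 1 := by omega
      obtain ⟨p', hp'⟩ := reach m (l-1) x hlt
      have hdle := SimpleGraph.dist_le p'
      omega
    exact ⟨x, mem_sph4.2 hxl, rfl⟩
  · rintro ⟨x, hx, rfl⟩
    have hxl : nrm x = l := mem_sph4.1 hx
    obtain ⟨p, hp⟩ := reach m l x hxl.le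
    have h1 : (circulant (NN m) (gg m)).dist 0 (FF m x) ≤ l :=
      le_trans (SimpleGraph.dist_le p) hp
    have h2 : ¬ (circulant (NN m) (gg m)).dist 0 (FF m x) < l := by
      intro hlt
      have hreach : (circulant (NN m) (gg m)).Reachable 0 (FF m x) := ⟨p⟩
      obtain ⟨p', hp'⟩ := hreach.exists_walk_length_eq_dist
      obtain ⟨y, hy, hey⟩ := walk_to_rep m p'
      rw [sub_zero] at hey
      have hxy : x = y := FF_inj m hm (by omega) (by omega) hey
      subst hxy
      omega
    omega

/-- For the largest known circulant graph of degree 8 and diameter `k = 2m` (order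
`n = 8m⁴+8m³+12m²+4m`, generators `1`, `4m³+4m²+6m+1`, `4m⁴+4m²−4m`, `4m⁴+4m²−2m`),
every distance partition level `l` with `1 ≤ l ≤ m = ⌊(k+1)/2⌋` is maximal: it has `8`
vertices if `l = 1` and `(8l³+16l)/3 = LM_AC(8, l)` vertices if `l ≥ 2`. -/
theorem stmt4 (m : ℕ) (hm : 2 ≤ m) (l : ℕ) (hl1 : 1 ≤ l) (hl2 : l ≤ m) :
    let n : ℕ := 8*m^4+8*m^3+12*m^2+4*m
    let X := circulant n ![(1 : ℤ), 4*(m : ℤ)^3+4*m^2+6*m+1,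
      4*(m : ℤ)^4+4*m^2-4*m, 4*(m : ℤ)^4+4*m^2-2*m]
    (l = 1 → {v : ZMod n | X.dist 0 v = l}.ncard = 8) ∧
    (2 ≤ l → {v : ZMod n | X.dist 0 v = l}.ncard = (8*l^3+16*l)/3) := by
  intro n X
  have key1 : {v : ZMod (NN m) | (circulant (NN m) (gg m)).dist 0 v = l}.ncard
      = (sph4 l).card := by
    rw [levelset m hm l hl1 hl2, Set.ncard_coe_finset]
    apply Finset.card_image_of_injOn
    intro x hx y hy hFF
    have hxl : nrm x = l := mem_sph4.1 (Finset.mem_coe.1 hx)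
    have hyl : nrm y = l := mem_sph4.1 (Finset.mem_coe.1 hy)
    exact FF_inj m hm (by omega) (by omega) hFF
  have hc3 : 3 * (sph4 l).card = 8*l^3 + 16*l := card_sph4 hl1
  constructor
  · intro hl
    subst hl
    show {v : ZMod (NN m) | (circulant (NN m) (gg m)).dist 0 v = 1}.ncard = 8
    rw [key1]
    norm_num at hc3
    omega
  · intro _
    show {v : ZMod (NN m) | (circulant (NN m) (gg m)).dist 0 v = l}.ncard = (8*l^3+16*l)/3
    rw [key1]
    generalize hK : 8*l^3+16*l = K at hc3 ⊢
    omega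
end

section
/- Let m ≥ 2, n = 8m⁴ + 8m³ + 12m² + 4m, and let X be the circulant graph X(Z_n; {±1, ±(4m³+4m²+6m+1), ±(4m⁴+4m²−4m), ±(4m⁴+4m²−2m)}) (the largest known circulant graph of degree 8 and diameter k = 2m). Then for every l with m + 1 ≤ l ≤ 2m, the number of vertices of X at graph distance exactly l from the vertex 0 is strictly less than (8l³ + 16l)/3; i.e., every level l > ⌊(k+1)/2⌋ is submaximal in the sense of the Abelian Cayley bound. -/
open Finset

/-- The ℓ¹ sphere of radius `l` in `ℤ^d`. -/
noncomputable def sph (d l : ℕ) : Finset (Fin d → ℤ) :=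
  (Fintype.piFinset fun _ => Finset.Icc (-(l:ℤ)) l).filter (fun x => ∑ i, |x i| = l)

lemma mem_sph {d l : ℕ} {x : Fin d → ℤ} : x ∈ sph d l ↔ ∑ i, |x i| = l := by
  constructor
  · intro h; exact (Finset.mem_filter.mp h).2
  · intro h
    refine Finset.mem_filter.mpr ⟨Fintype.mem_piFinset.mpr fun i => ?_, h⟩
    have h1 : |x i| ≤ ∑ j, |x j| :=
      Finset.single_le_sum (fun j _ => abs_nonneg (x j)) (Finset.mem_univ i)
    rw [h] at h1
    rw [Finset.mem_Icc]
    constructor <;> [linarith [neg_abs_le (x i)]; linarith [le_abs_self (x i)]]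

lemma sum_Icc_natAbs (l : ℕ) (f : ℕ → ℕ) :
    ∑ a ∈ Finset.Icc (-(l:ℤ)) l, f a.natAbs = f 0 + 2 * ∑ t ∈ Finset.Icc 1 l, f t := by
  induction l with
  | zero => simp
  | succ n ih =>
    have hIcc : Finset.Icc (-(n+1:ℤ)) (n+1) =
        insert (-(n+1:ℤ)) (insert ((n+1:ℤ)) (Finset.Icc (-(n:ℤ)) n)) := by
      ext a; simp only [Finset.mem_Icc, Finset.mem_insert]; omega
    push_cast
    rw [hIcc, Finset.sum_insert, Finset.sum_insert]
    · have h1 : ((-(n+1:ℤ)).natAbs) = n + 1 := by omega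
      have h2 : (((n:ℤ)+1).natAbs) = n + 1 := by omega
      rw [h1, h2, ih, Finset.sum_Icc_succ_top (by omega : 1 ≤ n + 1)]
      ring
    · simp only [Finset.mem_Icc]; omega
    · simp only [Finset.mem_insert, Finset.mem_Icc]; omega

lemma card_sph_succ (d l : ℕ) :
    (sph (d+1) l).card = (sph d l).card + 2 * ∑ j ∈ Finset.range l, (sph d j).card := by
  have h1 : (sph (d+1) l).card =
      ∑ a ∈ Finset.Icc (-(l:ℤ)) l, ((sph (d+1) l).filter (fun x => x 0 = a)).card := by
    refine Finset.card_eq_sum_card_fiberwise ?_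
    intro x hx
    rw [Finset.mem_coe, mem_sph] at hx
    have h1 : |x 0| ≤ ∑ j, |x j| :=
      Finset.single_le_sum (fun j _ => abs_nonneg (x j)) (Finset.mem_univ 0)
    rw [hx] at h1
    simp only [Finset.mem_coe, Finset.mem_Icc]
    constructor <;> [linarith [neg_abs_le (x 0)]; linarith [le_abs_self (x 0)]]
  have h2 : ∀ a ∈ Finset.Icc (-(l:ℤ)) l,
      ((sph (d+1) l).filter (fun x => x 0 = a)).card = (sph d (l - a.natAbs)).card := by
    intro a ha
    clear h1
    rw [Finset.mem_Icc] at ha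
    have hal : a.natAbs ≤ l := by omega
    refine Finset.card_nbij' (fun x => Fin.tail x) (fun y => Fin.cons a y) ?_ ?_ ?_ ?_
    · intro x hx
      rw [Finset.mem_coe, Finset.mem_filter, mem_sph] at hx
      obtain ⟨hs, h0⟩ := hx
      rw [Finset.mem_coe, mem_sph]
      rw [Fin.sum_univ_succ, h0] at hs
      have : ∑ i : Fin d, |Fin.tail x i| = (l : ℤ) - |a| := by
        simp only [Fin.tail]; omega
      rw [this]
      rw [Int.abs_eq_natAbs]
      push_cast [hal]
      omega
    · intro y hy
      rw [Finset.mem_coe, mem_sph] at hy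
      rw [Finset.mem_coe, Finset.mem_filter, mem_sph]
      refine ⟨?_, by simp⟩
      rw [Fin.sum_univ_succ]
      simp only [Fin.cons_zero, Fin.cons_succ]
      rw [hy, Int.abs_eq_natAbs]
      push_cast [hal]
      omega
    · intro x hx
      rw [Finset.mem_coe, Finset.mem_filter] at hx
      simp only
      rw [← hx.2]
      exact Fin.cons_self_tail x
    · intro y hy
      simp
  have hsum : ∑ t ∈ Finset.Icc 1 l, (sph d (l - t)).card
      = ∑ j ∈ Finset.range l, (sph d j).card := by
    clear h1 h2
    refine Finset.sum_nbij' (fun t => l - t) (fun s => l - s) ?_ ?_ ?_ ?_ ?_ <;>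
      simp only [Finset.mem_Icc, Finset.mem_range] <;> intro t ht
    all_goals first | rfl | trivial | omega
  rw [h1, Finset.sum_congr rfl h2, sum_Icc_natAbs l (fun t => (sph d (l - t)).card)]
  simp only [Nat.sub_zero]
  rw [hsum]

lemma card_sph_zero (l : ℕ) : (sph 0 l).card = if l = 0 then 1 else 0 := by
  rcases Nat.eq_zero_or_pos l with h | h
  · subst h
    simp [sph, Finset.filter_true_of_mem]
  · rw [if_neg (by omega)]
    rw [Finset.card_eq_zero, Finset.eq_empty_iff_forall_notMem]
    intro x hx
    rw [mem_sph] at hx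
    simp at hx
    omega

lemma card_sph_one (l : ℕ) : (sph 1 l).card = if l = 0 then 1 else 2 := by
  rw [card_sph_succ, card_sph_zero]
  rcases Nat.eq_zero_or_pos l with h | h
  · subst h; simp
  · rw [if_neg (by omega), if_neg (by omega)]
    have : ∑ j ∈ Finset.range l, (sph 0 j).card
        = ∑ j ∈ Finset.range l, if j = 0 then 1 else 0 := by
      exact Finset.sum_congr rfl fun j _ => card_sph_zero j
    rw [this, Finset.sum_ite_eq' (Finset.range l) 0 (fun _ => 1), if_pos (by simpa using h)]

lemma sum_sph_one (l : ℕ) : ∑ j ∈ Finset.range (l+1), (sph 1 j).card = 2*l+1 := by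
  induction l with
  | zero => simp [card_sph_one]
  | succ k ih =>
    rw [Finset.sum_range_succ, ih, card_sph_one, if_neg (by omega)]
    ring

lemma card_sph_two (l : ℕ) : (sph 2 l).card = if l = 0 then 1 else 4*l := by
  rcases l with _ | k
  · rw [card_sph_succ]; simp [card_sph_one]
  · rw [card_sph_succ, card_sph_one, if_neg (by omega), if_neg (by omega), sum_sph_one]
    ring

lemma sum_sph_two (l : ℕ) : ∑ j ∈ Finset.range (l+1), (sph 2 j).card = 2*l*(l+1)+1 := by
  induction l with
  | zero => simp [card_sph_two]
  | succ k ih =>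
    rw [Finset.sum_range_succ, ih, card_sph_two, if_neg (by omega)]
    ring

lemma card_sph_three (l : ℕ) : (sph 3 l).card = if l = 0 then 1 else 4*l^2+2 := by
  rcases l with _ | k
  · rw [card_sph_succ]; simp [card_sph_two]
  · rw [card_sph_succ, card_sph_two, if_neg (by omega), if_neg (by omega), sum_sph_two]
    ring

lemma sum_sph_three (l : ℕ) :
    3 * ∑ j ∈ Finset.range (l+1), (sph 3 j).card = 4*l^3+6*l^2+8*l+3 := by
  induction l with
  | zero => simp [card_sph_three]
  | succ k ih =>
    rw [Finset.sum_range_succ, Nat.mul_add, ih, card_sph_three, if_neg (by omega)]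
    ring

lemma card_sph_four {l : ℕ} (h : 1 ≤ l) : 3 * (sph 4 l).card = 8*l^3+16*l := by
  obtain ⟨k, rfl⟩ := Nat.exists_eq_add_of_le h
  rw [card_sph_succ, Nat.mul_add, card_sph_three, if_neg (by omega)]
  rw [show 1 + k = k + 1 from by omega, Nat.mul_left_comm, sum_sph_three]
  ring
lemma natAbs_step {f : ℕ} (x : Fin f → ℤ) (i : Fin f) (ε : ℤ) (hε : ε.natAbs = 1) :
    ∑ j, (x j + if j = i then ε else 0).natAbs ≤ (∑ j, (x j).natAbs) + 1 := by
  calc ∑ j, (x j + if j = i then ε else 0).natAbs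
      ≤ ∑ j, ((x j).natAbs + (if j = i then ε else 0).natAbs) :=
        Finset.sum_le_sum fun j _ => Int.natAbs_add_le _ _
    _ = (∑ j, (x j).natAbs) + ∑ j, (if j = i then ε else 0).natAbs :=
        Finset.sum_add_distrib
    _ = (∑ j, (x j).natAbs) + 1 := by
        congr 1
        have : ∀ j, (if j = i then ε else 0).natAbs = if j = i then 1 else 0 := by
          intro j; split <;> simp [hε]
        simp only [this]
        rw [Finset.sum_ite_eq' Finset.univ i (fun _ => 1), if_pos (Finset.mem_univ i)]

lemma sum_mul_step {f : ℕ} (x : Fin f → ℤ) (g : Fin f → ℤ) (i : Fin f) (ε : ℤ) :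
    ∑ j, (x j + if j = i then ε else 0) * g j = (∑ j, x j * g j) + ε * g i := by
  simp only [add_mul, Finset.sum_add_distrib, ite_mul, zero_mul]
  rw [Finset.sum_ite_eq' Finset.univ i (fun j => ε * g j), if_pos (Finset.mem_univ i)]

lemma walk_rep {n : ℕ} {f : ℕ} {g : Fin f → ℤ} {u v : ZMod n}
    (p : (circulant n g).Walk u v) :
    ∃ x : Fin f → ℤ, (∑ i, (x i).natAbs) ≤ p.length ∧
      v - u = ((∑ i, x i * g i : ℤ) : ZMod n) := by
  induction p with
  | nil => exact ⟨0, by simp⟩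
  | @cons u b v h q ih =>
    obtain ⟨x, hx1, hx2⟩ := ih
    obtain ⟨hne, i, hi | hi⟩ := h
    · refine ⟨fun j => x j + if j = i then 1 else 0, ?_, ?_⟩
      · calc _ ≤ (∑ j, (x j).natAbs) + 1 := natAbs_step x i 1 (by decide)
          _ ≤ _ := by show _ ≤ q.length + 1; omega
      · rw [sum_mul_step, Int.cast_add, one_mul, ← hx2, ← hi]
        ring
    · refine ⟨fun j => x j + if j = i then -1 else 0, ?_, ?_⟩
      · calc _ ≤ (∑ j, (x j).natAbs) + 1 := natAbs_step x i (-1) (by decide)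
          _ ≤ _ := by show _ ≤ q.length + 1; omega
      · rw [sum_mul_step, Int.cast_add, neg_one_mul, Int.cast_neg, ← hx2, ← hi]
        ring

lemma exists_walk_rep {n : ℕ} {f : ℕ} {g : Fin f → ℤ}
    (hg : ∀ i, ((g i : ℤ) : ZMod n) ≠ 0) :
    ∀ (N : ℕ) (x : Fin f → ℤ), (∑ i, (x i).natAbs) = N → ∀ v : ZMod n,
      v = ((∑ i, x i * g i : ℤ) : ZMod n) →
      ∃ p : (circulant n g).Walk 0 v, p.length ≤ N := by
  intro N
  induction N with
  | zero =>
    intro x hx v hv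
    have hx0 : ∀ i, x i = 0 := by
      intro i
      have h1 : ∀ j ∈ Finset.univ, (x j).natAbs = 0 :=
        (Finset.sum_eq_zero_iff).mp hx
      have := h1 i (Finset.mem_univ i)
      omega
    have : v = 0 := by
      rw [hv]
      have : ∑ i, x i * g i = 0 := Finset.sum_eq_zero fun i _ => by rw [hx0 i, zero_mul]
      rw [this]; simp
    subst this
    exact ⟨SimpleGraph.Walk.nil, by simp⟩
  | succ N ih =>
    intro x hx v hv
    have hex : ∃ i, x i ≠ 0 := by
      by_contra hc
      push_neg at hc
      have : ∑ i, (x i).natAbs = 0 := Finset.sum_eq_zero fun i _ => by rw [hc i]; rfl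
      omega
    obtain ⟨i, hi⟩ := hex
    set ε : ℤ := if 0 < x i then 1 else -1 with hε
    set x' : Fin f → ℤ := fun j => x j - if j = i then ε else 0 with hx'
    have hstep : ∀ j, x j = x' j + if j = i then ε else 0 := by
      intro j; simp [hx']
    have hsum : (∑ j, (x' j).natAbs) = N := by
      have h1 : (∑ j, (x j).natAbs) = (∑ j, ((x' j).natAbs + if j = i then 1 else 0)) := by
        refine Finset.sum_congr rfl fun j _ => ?_
        simp only [hx']
        by_cases hj : j = i
        · subst hj
          rw [if_pos rfl, if_pos rfl, hε]
          split <;> omega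
        · rw [if_neg hj, if_neg hj]
          omega
      rw [h1, Finset.sum_add_distrib,
        Finset.sum_ite_eq' Finset.univ i (fun _ => 1), if_pos (Finset.mem_univ i)] at hx
      omega
    set v' : ZMod n := ((∑ j, x' j * g j : ℤ) : ZMod n) with hv'
    obtain ⟨p, hp⟩ := ih x' hsum v' rfl
    have hvv' : v = v' + ((ε * g i : ℤ) : ZMod n) := by
      rw [hv, hv']
      have h1 : (∑ j, x j * g j) = ∑ j, (x' j + if j = i then ε else 0) * g j :=
        Finset.sum_congr rfl fun j _ => by rw [hstep j]
      rw [h1, sum_mul_step x' g i ε, Int.cast_add]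
    have hcast : ((ε * g i : ℤ) : ZMod n) = ((g i : ℤ) : ZMod n)
        ∨ ((ε * g i : ℤ) : ZMod n) = -((g i : ℤ) : ZMod n) := by
      rw [hε]
      split
      · left; rw [one_mul]
      · right; rw [neg_one_mul, Int.cast_neg]
    have hne : v' ≠ v := by
      intro hcon
      rw [← hcon, left_eq_add] at hvv'
      rcases hcast with h | h <;> rw [h] at hvv'
      · exact hg i hvv'
      · exact hg i (neg_eq_zero.mp hvv')
    have hadj : (circulant n g).Adj v' v := by
      refine ⟨hne, i, ?_⟩
      rcases hcast with h | h <;> rw [h] at hvv'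
      · left; rw [hvv']; ring
      · right; rw [hvv']; ring
    exact ⟨p.concat hadj, by rw [SimpleGraph.Walk.length_concat]; omega⟩

/-- For the largest known circulant graph of degree 8 and diameter `k = 2m` (order
`n = 8m⁴+8m³+12m²+4m`, generators `1`, `4m³+4m²+6m+1`, `4m⁴+4m²−4m`, `4m⁴+4m²−2m`),
every distance partition level `l` with `m+1 ≤ l ≤ 2m` is submaximal: it has strictly
fewer than `(8l³+16l)/3 = LM_AC(8, l)` vertices. -/
theorem stmt5 (m : ℕ) (hm : 2 ≤ m) (l : ℕ) (hl1 : m+1 ≤ l) (hl2 : l ≤ 2*m) :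
    {v : ZMod (8*m^4+8*m^3+12*m^2+4*m) |
      (circulant (8*m^4+8*m^3+12*m^2+4*m)
        ![(1 : ℤ), 4*(m : ℤ)^3+4*m^2+6*m+1,
          4*(m : ℤ)^4+4*m^2-4*m, 4*(m : ℤ)^4+4*m^2-2*m]).dist 0 v = l}.ncard
      < (8*l^3+16*l)/3 := by
  set n : ℕ := 8*m^4+8*m^3+12*m^2+4*m with hn
  set g : Fin 4 → ℤ := ![(1 : ℤ), 4*(m : ℤ)^3+4*m^2+6*m+1,
          4*(m : ℤ)^4+4*m^2-4*m, 4*(m : ℤ)^4+4*m^2-2*m] with hgdef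
  have hnpos : 0 < n := lt_of_lt_of_le (by omega : 0 < 4*m) (Nat.le_add_left _ _)
  haveI : NeZero n := ⟨by omega⟩
  have hmZ : (2 : ℤ) ≤ (m : ℤ) := by exact_mod_cast hm
  have hlZ : (m : ℤ) + 1 ≤ (l : ℤ) := by exact_mod_cast hl1
  have hnZ : (n : ℤ) = 8*(m:ℤ)^4+8*(m:ℤ)^3+12*(m:ℤ)^2+4*(m:ℤ) := by
    rw [hn]; push_cast; ring
  -- the generators are nonzero mod n
  have hg : ∀ i, ((g i : ℤ) : ZMod n) ≠ 0 := by
    intro i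
    have hbound1 : 0 < g i := by
      fin_cases i <;> simp [hgdef] <;> nlinarith
    have hbound2 : g i < (n : ℤ) := by
      fin_cases i <;> simp [hgdef, hnZ] <;> nlinarith
    intro hzero
    rw [ZMod.intCast_zmod_eq_zero_iff_dvd] at hzero
    have := Int.le_of_dvd hbound1 hzero
    omega
  set φ : (Fin 4 → ℤ) → ZMod n := fun x => ((∑ i, x i * g i : ℤ) : ZMod n) with hφdef
  set y0 : Fin 4 → ℤ := ![(m:ℤ)+1, (l:ℤ)-m-1, 0, 0] with hy0def
  set x0 : Fin 4 → ℤ := ![1-(m:ℤ), (l:ℤ)-m-1, -1, 1] with hx0def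
  have hy0 : y0 ∈ sph 4 l := by
    rw [mem_sph, Fin.sum_univ_four]
    simp only [hy0def, Matrix.cons_val_zero, Matrix.cons_val_one, Matrix.head_cons,
      Matrix.cons_val_two, Matrix.tail_cons, Matrix.cons_val_three]
    rw [abs_of_nonneg (by linarith), abs_of_nonneg (by linarith), abs_zero]
    ring
  have hx0 : x0 ∈ sph 4 l := by
    rw [mem_sph, Fin.sum_univ_four]
    simp only [hx0def, Matrix.cons_val_zero, Matrix.cons_val_one, Matrix.head_cons,
      Matrix.cons_val_two, Matrix.tail_cons, Matrix.cons_val_three]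
    rw [abs_of_nonpos (by linarith), abs_of_nonneg (by linarith)]
    norm_num
    linarith
  have hxy : x0 ≠ y0 := by
    intro h
    have := congrFun h 2
    simp [hx0def, hy0def] at this
  have hphi : φ x0 = φ y0 := by
    simp only [hφdef]
    congr 1
    rw [Fin.sum_univ_four, Fin.sum_univ_four]
    simp only [hx0def, hy0def, hgdef, Matrix.cons_val_zero, Matrix.cons_val_one,
      Matrix.head_cons, Matrix.cons_val_two, Matrix.tail_cons, Matrix.cons_val_three]
    ring
  -- level set is contained in the image of the punctured sphere
  have key : {v : ZMod n | (circulant n g).dist 0 v = l} ⊆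
      φ '' (((sph 4 l).erase y0 : Finset (Fin 4 → ℤ)) : Set (Fin 4 → ℤ)) := by
    intro v hv
    simp only [Set.mem_setOf_eq] at hv
    have hlne : (circulant n g).dist 0 v ≠ 0 := by omega
    obtain ⟨p, hp⟩ := SimpleGraph.exists_walk_of_dist_ne_zero hlne
    obtain ⟨x, hx1, hx2⟩ := walk_rep p
    rw [sub_zero] at hx2
    rw [hp, hv] at hx1
    -- the representation must use exactly l steps
    have hge : l ≤ ∑ i, (x i).natAbs := by
      by_contra hcon
      push_neg at hcon
      obtain ⟨q, hq⟩ := exists_walk_rep hg (∑ i, (x i).natAbs) x rfl v hx2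
      have := SimpleGraph.dist_le q
      omega
    have heq : ∑ i, (x i).natAbs = l := by omega
    have hxS : x ∈ sph 4 l := by
      rw [mem_sph]
      have h1 : (∑ i, |x i|) = ((∑ i, (x i).natAbs : ℕ) : ℤ) := by
        push_cast
        rfl
      rw [h1, heq]
    by_cases hxy0 : x = y0
    · refine ⟨x0, ?_, ?_⟩
      · rw [Finset.coe_erase]
        exact ⟨hx0, by simpa using hxy⟩
      · rw [hphi, ← hxy0, hφdef]
        exact hx2.symm
    · refine ⟨x, ?_, hx2.symm⟩
      rw [Finset.coe_erase]
      exact ⟨hxS, by simpa using hxy0⟩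
  -- count
  have h3 : 3 * (sph 4 l).card = 8*l^3+16*l := card_sph_four (by omega)
  have hchain : {v : ZMod n | (circulant n g).dist 0 v = l}.ncard ≤
      ((sph 4 l).erase y0).card := by
    calc {v : ZMod n | (circulant n g).dist 0 v = l}.ncard
        ≤ (φ '' (((sph 4 l).erase y0 : Finset (Fin 4 → ℤ)) : Set (Fin 4 → ℤ))).ncard :=
          Set.ncard_le_ncard key (((sph 4 l).erase y0).finite_toSet.image _)
      _ ≤ ((((sph 4 l).erase y0 : Finset (Fin 4 → ℤ))) : Set (Fin 4 → ℤ)).ncard :=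
          Set.ncard_image_le ((sph 4 l).erase y0).finite_toSet
      _ = ((sph 4 l).erase y0).card := Set.ncard_coe_finset _
  have herase : ((sph 4 l).erase y0).card = (sph 4 l).card - 1 :=
    Finset.card_erase_of_mem hy0
  have hpos : 1 ≤ (sph 4 l).card := Finset.card_pos.mpr ⟨y0, hy0⟩
  obtain ⟨A, hA⟩ : ∃ A, 8*l^3+16*l = A := ⟨_, rfl⟩
  rw [hA] at h3 ⊢
  omega
end

section
/- Let k ≥ 1, n = 2k² + 2k + 1, and let X be the circulant graph X(Z_n; {±1, ±(2k+1)}) (the extremal circulant graph of degree 4 and diameter k). Then the odd girth of X is maximal for its diameter, namely 2k+1: X contains a cycle of odd length 2k+1, and X contains no closed walk of odd length strictly less than 2k+1. -/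
open SimpleGraph

def walkOfFn {V : Type*} (G : SimpleGraph V) (f : ℕ → V) :
    (m : ℕ) → (∀ i < m, G.Adj (f i) (f (i+1))) → G.Walk (f 0) (f m)
  | 0, _ => Walk.nil
  | (m+1), h =>
      (walkOfFn G f m fun i hi => h i (Nat.lt_succ_of_lt hi)).concat (h m (Nat.lt_succ_self m))

lemma walkOfFn_length {V : Type*} (G : SimpleGraph V) (f : ℕ → V) :
    ∀ (m : ℕ) (h : ∀ i < m, G.Adj (f i) (f (i+1))), (walkOfFn G f m h).length = m
  | 0, _ => rfl
  | (m+1), h => by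
      rw [walkOfFn, Walk.length_concat, walkOfFn_length]

lemma walkOfFn_support {V : Type*} (G : SimpleGraph V) (f : ℕ → V) :
    ∀ (m : ℕ) (h : ∀ i < m, G.Adj (f i) (f (i+1))),
      (walkOfFn G f m h).support = (List.range (m+1)).map f
  | 0, _ => rfl
  | (m+1), h => by
      rw [walkOfFn, Walk.support_concat, walkOfFn_support]
      simp [List.range_succ]

lemma walkOfFn_edges {V : Type*} (G : SimpleGraph V) (f : ℕ → V) :
    ∀ (m : ℕ) (h : ∀ i < m, G.Adj (f i) (f (i+1))),
      (walkOfFn G f m h).edges = (List.range m).map (fun i => s(f i, f (i+1)))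
  | 0, _ => rfl
  | (m+1), h => by
      rw [walkOfFn, Walk.edges_concat, walkOfFn_edges]
      simp [List.range_succ]

def Fv (k i : ℕ) : ℕ := if i ≤ k then i else (2*k+1-i)*(2*k+1)

lemma Fv_lt (k i : ℕ) (hi : i ≤ 2*k+1) : Fv k i < 2*k^2+2*k+1 := by
  unfold Fv; split
  · nlinarith
  · have h1 : 2*k+1-i ≤ k := by omega
    have := Nat.mul_le_mul_right (2*k+1) h1
    nlinarith

lemma Fv_inj (k : ℕ) (hk : 1 ≤ k) (i j : ℕ) (hi : i ≤ 2*k+1) (hj : j ≤ 2*k+1)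
    (hEq : Fv k i = Fv k j) :
    i = j ∨ (i = 0 ∧ j = 2*k+1) ∨ (i = 2*k+1 ∧ j = 0) := by
  unfold Fv at hEq
  split_ifs at hEq with h1 h2 h2
  · omega
  · rcases Nat.eq_zero_or_pos (2*k+1-j) with hb | hb
    · rw [hb, Nat.zero_mul] at hEq
      right; left; omega
    · have h3 : 2*k+1 ≤ (2*k+1-j)*(2*k+1) := Nat.le_mul_of_pos_left _ hb
      rw [← hEq] at h3
      omega
  · rcases Nat.eq_zero_or_pos (2*k+1-i) with hb | hb
    · rw [hb, Nat.zero_mul] at hEq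
      right; right; omega
    · have h3 : 2*k+1 ≤ (2*k+1-i)*(2*k+1) := Nat.le_mul_of_pos_left _ hb
      rw [hEq] at h3
      omega
  · have := Nat.eq_of_mul_eq_mul_right (show 0 < 2*k+1 by omega) hEq
    omega

lemma circulant_walk_exists (k n : ℕ) {u v : ZMod n}
    (w : (circulant n ![(1:ℤ), 2*(k:ℤ)+1]).Walk u v) :
    ∃ x y : ℤ, v - u = ((x + (2*(k:ℤ)+1)*y : ℤ) : ZMod n) ∧
      x.natAbs + y.natAbs ≤ w.length ∧ (x + y) % 2 = (w.length : ℤ) % 2 := by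
  induction w with
  | nil => exact ⟨0, 0, by push_cast; ring, by simp, by simp⟩
  | @cons u b v h p ih =>
    obtain ⟨x, y, hxy, hlen, hpar⟩ := ih
    obtain ⟨hne, i, hi⟩ := h
    fin_cases i
    · simp only [Fin.mk_zero, Fin.mk_one, Fin.isValue, Matrix.cons_val_zero, Matrix.cons_val_one, Matrix.head_cons] at hi
      rcases hi with hi | hi
      · refine ⟨x+1, y, ?_, ?_, ?_⟩
        · push_cast at hxy hi ⊢; linear_combination hxy + hi
        · change _ ≤ p.length + 1; omega
        · change _ = ((p.length + 1 : ℕ) : ℤ) % 2; push_cast; omega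
      · refine ⟨x-1, y, ?_, ?_, ?_⟩
        · push_cast at hxy hi ⊢; linear_combination hxy - hi
        · change _ ≤ p.length + 1; omega
        · change _ = ((p.length + 1 : ℕ) : ℤ) % 2; push_cast; omega
    · simp only [Fin.mk_zero, Fin.mk_one, Fin.isValue, Matrix.cons_val_zero, Matrix.cons_val_one, Matrix.head_cons] at hi
      rcases hi with hi | hi
      · refine ⟨x, y+1, ?_, ?_, ?_⟩
        · push_cast at hxy hi ⊢; linear_combination hxy + hi
        · change _ ≤ p.length + 1; omega
        · change _ = ((p.length + 1 : ℕ) : ℤ) % 2; push_cast; omega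
      · refine ⟨x, y-1, ?_, ?_, ?_⟩
        · push_cast at hxy hi ⊢; linear_combination hxy - hi
        · change _ ≤ p.length + 1; omega
        · change _ = ((p.length + 1 : ℕ) : ℤ) % 2; push_cast; omega

/-- The extremal circulant graph of degree 4 and diameter `k` (order `n = 2k²+2k+1`,
generators `1`, `2k+1`) has maximal odd girth `2k+1`: it contains a cycle of (odd)
length `2k+1`, and no closed walk of odd length strictly less than `2k+1`. -/
theorem stmt7 (k : ℕ) (hk : 1 ≤ k) :
    let n : ℕ := 2*k^2+2*k+1
    let X := circulant n ![(1 : ℤ), 2*(k : ℤ)+1]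
    (∃ (v : ZMod n) (w : X.Walk v v), w.IsCycle ∧ w.length = 2*k+1) ∧
    (∀ (v : ZMod n) (w : X.Walk v v), Odd w.length → 2*k+1 ≤ w.length) := by
  intro n X
  have hn : n = 2*k^2+2*k+1 := rfl
  haveI : NeZero n := ⟨by omega⟩
  set f : ℕ → ZMod n := fun i => ((Fv k i : ℕ) : ZMod n) with hf
  have fcast : ∀ i j, i ≤ 2*k+1 → j ≤ 2*k+1 → f i = f j → Fv k i = Fv k j := by
    intro i j hi hj hEq
    have v1 := ZMod.val_cast_of_lt (n := n) (a := Fv k i) (by rw [hn]; exact Fv_lt k i hi)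
    have v2 := ZMod.val_cast_of_lt (n := n) (a := Fv k j) (by rw [hn]; exact Fv_lt k j hj)
    rw [← v1, ← v2]
    exact congrArg ZMod.val hEq
  have finj : ∀ i j, i ≤ 2*k+1 → j ≤ 2*k+1 → f i = f j →
      i = j ∨ (i = 0 ∧ j = 2*k+1) ∨ (i = 2*k+1 ∧ j = 0) := fun i j hi hj hEq =>
    Fv_inj k hk i j hi hj (fcast i j hi hj hEq)
  have hz : ((2*(k:ZMod n)^2+2*(k:ZMod n)+1 : ZMod n)) = 0 := by
    have := ZMod.natCast_self n
    rw [hn] at this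
    push_cast at this
    exact this
  constructor
  · -- existence of the cycle
    have hadj : ∀ i, i < 2*k+1 → X.Adj (f i) (f (i+1)) := by
      intro i hilt
      have hne : f i ≠ f (i+1) := by
        intro hEq
        rcases finj i (i+1) (by omega) (by omega) hEq with h | h | h <;> omega
      rcases lt_trichotomy i k with hik | hik | hik
      · refine ⟨hne, 0, Or.inl ?_⟩
        simp only [Matrix.cons_val_zero]
        rw [hf]
        simp only []
        rw [show Fv k i = i from if_pos (by omega),
          show Fv k (i+1) = i+1 from if_pos (by omega)]
        push_cast; ring
      · refine ⟨hne, 1, Or.inr ?_⟩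
        simp only [Matrix.cons_val_one, Matrix.head_cons]
        rw [hf]
        simp only []
        rw [hik]
        have e2 : Fv k (k+1) = k*(2*k+1) := by
          unfold Fv; rw [if_neg (by omega)]
          congr 1; omega
        rw [show Fv k k = k from if_pos le_rfl, e2]
        push_cast
        linear_combination -hz
      · refine ⟨hne, 1, Or.inr ?_⟩
        simp only [Matrix.cons_val_one, Matrix.head_cons]
        rw [hf]
        simp only []
        have ha : Fv k i = (2*k+1-i)*(2*k+1) := if_neg (by omega)
        have hb : Fv k (i+1) = (2*k+1-(i+1))*(2*k+1) := if_neg (by omega)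
        obtain ⟨a, hA⟩ : ∃ a, 2*k+1-i = a+1 := ⟨2*k-i, by omega⟩
        have hA2 : 2*k+1-(i+1) = a := by omega
        rw [ha, hb, hA, hA2]
        push_cast; ring
    have h0 : f (2*k+1) = f 0 := by
      rw [hf]; simp only []
      have e1 : Fv k (2*k+1) = 0 := by unfold Fv; rw [if_neg (by omega)]; simp
      rw [e1, show Fv k 0 = 0 from if_pos (by omega)]
    refine ⟨f 0, (walkOfFn X f (2*k+1) hadj).copy rfl h0, ?_, ?_⟩
    · rw [Walk.isCycle_def, Walk.isTrail_def]
      refine ⟨?_, ?_, ?_⟩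
      · rw [Walk.edges_copy, walkOfFn_edges]
        refine List.Nodup.map_on ?_ List.nodup_range
        intro i hi j hj hEq
        rw [List.mem_range] at hi hj
        rw [Sym2.eq_iff] at hEq
        rcases hEq with ⟨e1, e2⟩ | ⟨e1, e2⟩
        · rcases finj i j (by omega) (by omega) e1 with h | h | h <;> omega
        · rcases finj i (j+1) (by omega) (by omega) e1 with h | h | h <;>
            rcases finj (i+1) j (by omega) (by omega) e2 with h' | h' | h' <;> omega
      · intro hnil
        have := congrArg Walk.length hnil
        rw [Walk.length_copy, walkOfFn_length, Walk.length_nil] at this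
        omega
      · rw [Walk.support_copy, walkOfFn_support, show 2*k+1+1 = (2*k+1)+1 from rfl,
          List.range_succ_eq_map, List.map_cons, List.tail_cons, List.map_map]
        refine List.Nodup.map_on ?_ List.nodup_range
        intro i hi j hj hEq
        rw [List.mem_range] at hi hj
        simp only [Function.comp] at hEq
        rcases finj (i+1) (j+1) (by omega) (by omega) hEq with h | h | h <;> omega
    · rw [Walk.length_copy, walkOfFn_length]
  · -- no short odd closed walk
    intro v w hodd
    by_contra hlt
    push_neg at hlt
    obtain ⟨x, y, hxy, hlen, hpar⟩ := circulant_walk_exists k n w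
    rw [sub_self] at hxy
    have hdvd : (n:ℤ) ∣ (x + (2*(k:ℤ)+1)*y) := by
      rwa [eq_comm, ZMod.intCast_zmod_eq_zero_iff_dvd] at hxy
    set d : ℤ := x + (2*(k:ℤ)+1)*y with hd
    obtain ⟨c, hc⟩ : ∃ c : ℤ, d = x + y + 2*c := ⟨(k:ℤ)*y, by rw [hd]; ring⟩
    have hL : w.length % 2 = 1 := Nat.odd_iff.mp hodd
    have hne0 : d ≠ 0 := by omega
    have habs : (n:ℤ) ≤ |d| := Int.le_of_dvd (abs_pos.mpr hne0) ((dvd_abs _ _).mpr hdvd)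
    have hub : |d| ≤ |x| + (2*(k:ℤ)+1)*|y| := by
      calc |d| ≤ |x| + |(2*(k:ℤ)+1)*y| := by rw [hd]; exact abs_add_le _ _
        _ = |x| + (2*(k:ℤ)+1)*|y| := by rw [abs_mul, abs_of_nonneg (show (0:ℤ) ≤ 2*(k:ℤ)+1 by positivity)]
    have hlb : (2*(k:ℤ)+1)*|y| ≤ |d| + |x| := by
      calc (2*(k:ℤ)+1)*|y| = |(2*(k:ℤ)+1)*y| := by
            rw [abs_mul, abs_of_nonneg (show (0:ℤ) ≤ 2*(k:ℤ)+1 by positivity)]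
        _ = |d + (-x)| := by rw [hd]; ring_nf
        _ ≤ |d| + |-x| := abs_add_le _ _
        _ = |d| + |x| := by rw [abs_neg]
    have hsum : |x| + |y| ≤ 2*(k:ℤ) := by
      rw [Int.abs_eq_natAbs, Int.abs_eq_natAbs]
      have : x.natAbs + y.natAbs ≤ 2*k := by omega
      exact_mod_cast this
    have hnz : (n:ℤ) = 2*(k:ℤ)^2+2*(k:ℤ)+1 := by rw [hn]; push_cast; ring
    have hx0 : (0:ℤ) ≤ |x| := abs_nonneg x
    have hy0 : (0:ℤ) ≤ |y| := abs_nonneg y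
    have hk' : (1:ℤ) ≤ (k:ℤ) := by exact_mod_cast hk
    rcases le_or_gt |y| (k:ℤ) with hY | hY
    · nlinarith [mul_le_mul_of_nonneg_left hY (show (0:ℤ) ≤ 2*(k:ℤ) by positivity)]
    · have hY1 : (k:ℤ)+1 ≤ |y| := by omega
      have hY2 : |y| ≤ 2*(k:ℤ) := by omega
      have h1 : (n:ℤ) + 1 ≤ |d| := by
        nlinarith [mul_le_mul_of_nonneg_left hY1 (show (0:ℤ) ≤ 2*(k:ℤ)+2 by positivity)]
      have h2 : |d| < 2*(n:ℤ) := by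
        nlinarith [mul_le_mul_of_nonneg_left hY2 (show (0:ℤ) ≤ 2*(k:ℤ) by positivity)]
      obtain ⟨m, hm⟩ := (dvd_abs _ _).mpr hdvd
      have hm2 : 2 ≤ m := by nlinarith
      nlinarith
end

section
/- Let m ≥ 1, n = 32m³ + 16m² + 6m + 1, and let X be the circulant graph X(Z_n; {±1, ±(4m+1), ±(16m²+4m+1)}) (the largest known circulant graph of degree 6 and diameter k = 3m, isomorphism class 1). Then the odd girth of X is maximal for its diameter, namely 2k+1 = 6m+1: X contains a cycle of odd length 6m+1, and X contains no closed walk of odd length strictly less than 6m+1. -/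
open SimpleGraph

lemma circulant_adj {n f : ℕ} (g : Fin f → ℤ) (u v : ZMod n) :
    (circulant n g).Adj u v ↔ u ≠ v ∧ ∃ i, v - u = (g i : ZMod n) ∨ u - v = (g i : ZMod n) :=
  Iff.rfl

/-- Build a walk through the vertices `p 0, p 1, …, p N`. -/
def pathOf {V : Type*} (G : SimpleGraph V) (p : ℕ → V) :
    (N : ℕ) → (∀ i < N, G.Adj (p i) (p (i+1))) → G.Walk (p 0) (p N)
  | 0, _ => Walk.nil
  | (N+1), h => (pathOf G p N (fun i hi => h i (Nat.lt_succ_of_lt hi))).concat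
      (h N (Nat.lt_succ_self N))

lemma pathOf_length {V : Type*} (G : SimpleGraph V) (p : ℕ → V) (N : ℕ)
    (h : ∀ i < N, G.Adj (p i) (p (i+1))) : (pathOf G p N h).length = N := by
  induction N with
  | zero => rfl
  | succ N ih => simp [pathOf, Walk.length_concat, ih]

lemma pathOf_support {V : Type*} (G : SimpleGraph V) (p : ℕ → V) (N : ℕ)
    (h : ∀ i < N, G.Adj (p i) (p (i+1))) :
    (pathOf G p N h).support = (List.range (N+1)).map p := by
  induction N with
  | zero => rfl
  | succ N ih => simp [pathOf, Walk.support_concat, ih, List.range_succ]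

lemma pathOf_edges {V : Type*} (G : SimpleGraph V) (p : ℕ → V) (N : ℕ)
    (h : ∀ i < N, G.Adj (p i) (p (i+1))) :
    (pathOf G p N h).edges = (List.range N).map (fun i => s(p i, p (i+1))) := by
  induction N with
  | zero => rfl
  | succ N ih => simp [pathOf, Walk.edges_concat, ih, List.range_succ]

/-- The partial sums of the step sequence of the `(6m+1)`-cycle. -/
def qseq (m : ℕ) (j : ℕ) : ℤ :=
  ((min j (2*m) : ℕ) : ℤ) * (16*(m:ℤ)^2+4*m+1)
    + (((min j (4*m) : ℕ) : ℤ) - ((min j (2*m) : ℕ) : ℤ)) * (4*(m:ℤ)+1)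
    + ((j:ℤ) - ((min j (4*m) : ℕ) : ℤ))

lemma qseq_zero (m : ℕ) : qseq m 0 = 0 := by simp [qseq]

lemma qseq_last (m : ℕ) : qseq m (6*m+1) = 32*(m:ℤ)^3+16*(m:ℤ)^2+6*(m:ℤ)+1 := by
  have e1 : min (6*m+1) (2*m) = 2*m := by omega
  have e2 : min (6*m+1) (4*m) = 4*m := by omega
  simp only [qseq, e1, e2]
  push_cast
  ring

lemma qseq_step (m : ℕ) (j : ℕ) :
    qseq m (j+1) - qseq m j =
      if j < 2*m then 16*(m:ℤ)^2+4*m+1 else if j < 4*m then 4*(m:ℤ)+1 else 1 := by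
  rcases Nat.lt_or_ge j (2*m) with h | h
  · have e1 : min (j+1) (2*m) = j+1 := by omega
    have e2 : min j (2*m) = j := by omega
    have e3 : min (j+1) (4*m) = j+1 := by omega
    have e4 : min j (4*m) = j := by omega
    simp only [qseq, e1, e2, e3, e4, if_pos h]
    push_cast; ring
  · rcases Nat.lt_or_ge j (4*m) with h' | h'
    · have e1 : min (j+1) (2*m) = 2*m := by omega
      have e2 : min j (2*m) = 2*m := by omega
      have e3 : min (j+1) (4*m) = j+1 := by omega
      have e4 : min j (4*m) = j := by omega
      simp only [qseq, e1, e2, e3, e4, if_neg (by omega : ¬ j < 2*m), if_pos h']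
      push_cast; ring
    · have e1 : min (j+1) (2*m) = 2*m := by omega
      have e2 : min j (2*m) = 2*m := by omega
      have e3 : min (j+1) (4*m) = 4*m := by omega
      have e4 : min j (4*m) = 4*m := by omega
      simp only [qseq, e1, e2, e3, e4, if_neg (by omega : ¬ j < 2*m),
        if_neg (by omega : ¬ j < 4*m)]
      push_cast; ring

lemma qseq_mono (m : ℕ) : StrictMono (qseq m) := by
  apply strictMono_nat_of_lt_succ
  intro j
  have h := qseq_step m j
  have hM : (0:ℤ) ≤ (m:ℤ) := Int.natCast_nonneg m
  split_ifs at h <;> nlinarith [h]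

/-- An integer strictly between `0` and `n` is nonzero mod `n`. -/
lemma cast_ne_zero_of_lt {n : ℕ} {z : ℤ} (h1 : 0 < z) (h2 : z < (n:ℤ)) :
    ((z : ZMod n) : ZMod n) ≠ 0 := by
  intro h
  rw [ZMod.intCast_zmod_eq_zero_iff_dvd] at h
  obtain ⟨t, ht⟩ := h
  have hn : (0:ℤ) < (n:ℤ) := lt_trans h1 h2
  rcases le_or_gt t 0 with h' | h'
  · have : (n:ℤ) * t ≤ 0 := mul_nonpos_of_nonneg_of_nonpos hn.le h'
    linarith [ht ▸ this]
  · have h1t : (1:ℤ) ≤ t := h'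
    have : (n:ℤ) ≤ (n:ℤ) * t := le_mul_of_one_le_right hn.le h1t
    linarith [ht ▸ this]

/-- Any representation `a + b(4M+1) + c(16M²+4M+1) = 32M³+16M²+6M+1` costs at least `6M+1`. -/
lemma keyrep (M a b c : ℤ) (hM : 1 ≤ M)
    (heq : a + b*(4*M+1) + c*(16*M^2+4*M+1) = 32*M^3+16*M^2+6*M+1)
    (hbd : |a| + |b| + |c| ≤ 6*M-1) : False := by
  have haa := le_abs_self a
  have haa' := neg_abs_le a
  have hba := le_abs_self b
  have hba' := neg_abs_le b
  have hca := le_abs_self c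
  have hca' := neg_abs_le c
  have ha0 := abs_nonneg a
  have hb0 := abs_nonneg b
  have hc0 := abs_nonneg c
  have hcases : c ≤ 2*M-1 ∨ c = 2*M ∨ c = 2*M+1 ∨ 2*M+2 ≤ c := by omega
  rcases hcases with hc | hc | hc | hc
  · have e1 : (2*M-1-c) * (16*M^2+4*M+1) ≥ 0 := mul_nonneg (by linarith) (by nlinarith)
    have e2 : (|b| - b) * (4*M+1) ≥ 0 := mul_nonneg (by linarith) (by linarith)
    have e3 : (6*M-1-|a|-|b|-|c|) * (4*M+1) ≥ 0 := mul_nonneg (by linarith) (by linarith)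
    have e4 : |a| * (4*M) ≥ 0 := mul_nonneg ha0 (by linarith)
    have e5 : |c| * (4*M+1) ≥ 0 := mul_nonneg hc0 (by linarith)
    nlinarith [e1, e2, e3, e4, e5]
  · subst hc
    have hcabs : |2*M| = 2*M := abs_of_nonneg (by linarith)
    rw [hcabs] at hbd
    have hbcases : b ≤ 2*M-1 ∨ b = 2*M ∨ b = 2*M+1 ∨ 2*M+2 ≤ b := by omega
    rcases hbcases with hb | hb | hb | hb
    · have e1 : (2*M-1-b) * (4*M+1) ≥ 0 := mul_nonneg (by linarith) (by linarith)
      nlinarith [e1]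
    · subst hb
      have : |2*M| = 2*M := abs_of_nonneg (by linarith)
      rw [this] at hbd
      nlinarith
    · subst hb
      have : |2*M+1| = 2*M+1 := abs_of_nonneg (by linarith)
      rw [this] at hbd
      nlinarith
    · have e1 : (b-2*M-2) * (4*M+1) ≥ 0 := mul_nonneg (by linarith) (by linarith)
      nlinarith [e1]
  · subst hc
    have hcabs : |2*M+1| = 2*M+1 := abs_of_nonneg (by linarith)
    rw [hcabs] at hbd
    have hbcases : b ≤ -2*M-1 ∨ b = -2*M ∨ b = -2*M+1 ∨ -2*M+2 ≤ b := by omega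
    rcases hbcases with hb | hb | hb | hb
    · have e1 : (-2*M-1-b) * (4*M+1) ≥ 0 := mul_nonneg (by linarith) (by linarith)
      nlinarith [e1]
    · subst hb
      have : |(-2)*M| = 2*M := by rw [abs_eq (by linarith)]; right; ring
      nlinarith [this]
    · subst hb
      have : |(-2)*M+1| = 2*M-1 := by rw [abs_eq (by linarith)]; right; ring
      nlinarith [this]
    · have e1 : (b+2*M-2) * (4*M+1) ≥ 0 := mul_nonneg (by linarith) (by linarith)
      nlinarith [e1]
  · have e1 : (c-2*M-2) * (16*M^2+4*M+1) ≥ 0 := mul_nonneg (by linarith) (by nlinarith)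
    have e2 : (|b| + b) * (4*M+1) ≥ 0 := mul_nonneg (by linarith) (by linarith)
    have e3 : (6*M-1-|a|-|b|-|c|) * (4*M+1) ≥ 0 := mul_nonneg (by linarith) (by linarith)
    have e4 : |a| * (4*M) ≥ 0 := mul_nonneg ha0 (by linarith)
    nlinarith [e1, e2, e3, e4]

/-- Any odd combination of the generators summing to a multiple of `n` costs
at least `6M+1`. -/
lemma keyfull (M a b c k : ℤ) (hM : 1 ≤ M)
    (hk : a + b*(4*M+1) + c*(16*M^2+4*M+1) = (32*M^3+16*M^2+6*M+1) * k)
    (hpar : (a + b + c) % 2 = 1)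
    (hbd : |a| + |b| + |c| ≤ 6*M-1) : False := by
  have hSpar : (a + b*(4*M+1) + c*(16*M^2+4*M+1)) % 2 = 1 := by
    rw [show a + b*(4*M+1) + c*(16*M^2+4*M+1)
        = (a+b+c) + 2*(2*M*b + (8*M^2+2*M)*c) from by ring,
      Int.add_mul_emod_self_left]
    omega
  have hSodd : Odd (a + b*(4*M+1) + c*(16*M^2+4*M+1)) := Int.odd_iff.mpr hSpar
  rw [hk] at hSodd
  have hkodd : Odd k := (Int.odd_mul.mp hSodd).2
  have haa := le_abs_self a
  have hba := le_abs_self b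
  have hca := le_abs_self c
  have ha0 := abs_nonneg a
  have hb0 := abs_nonneg b
  have hc0 := abs_nonneg c
  have hg3 : (0:ℤ) < 16*M^2+4*M+1 := by nlinarith
  have hnpos : (0:ℤ) < 32*M^3+16*M^2+6*M+1 := by nlinarith
  have habsS : |a + b*(4*M+1) + c*(16*M^2+4*M+1)| ≤ (6*M-1) * (16*M^2+4*M+1) := by
    have h1 : |a + b*(4*M+1) + c*(16*M^2+4*M+1)|
        ≤ |a| + |b*(4*M+1)| + |c*(16*M^2+4*M+1)| := by
      calc |a + b*(4*M+1) + c*(16*M^2+4*M+1)|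
          ≤ |a + b*(4*M+1)| + |c*(16*M^2+4*M+1)| := abs_add_le _ _
        _ ≤ |a| + |b*(4*M+1)| + |c*(16*M^2+4*M+1)| := by
            linarith [abs_add_le a (b*(4*M+1))]
    rw [abs_mul, abs_mul, abs_of_pos (by nlinarith : (0:ℤ) < 4*M+1),
      abs_of_pos hg3] at h1
    have ha2 : |a| * 1 ≤ |a| * (16*M^2+4*M+1) :=
      mul_le_mul_of_nonneg_left (by nlinarith) ha0
    have hb2 : |b| * (4*M+1) ≤ |b| * (16*M^2+4*M+1) :=
      mul_le_mul_of_nonneg_left (by nlinarith) hb0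
    have hsum : (|a|+|b|+|c|) * (16*M^2+4*M+1) ≤ (6*M-1) * (16*M^2+4*M+1) :=
      mul_le_mul_of_nonneg_right hbd hg3.le
    nlinarith [h1, ha2, hb2, hsum]
  have hkbd : |k| ≤ 2 := by
    by_contra hk3
    push_neg at hk3
    have hk3' : (3:ℤ) ≤ |k| := hk3
    have h3 : (32*M^3+16*M^2+6*M+1) * 3 ≤ (32*M^3+16*M^2+6*M+1) * |k| :=
      mul_le_mul_of_nonneg_left hk3' hnpos.le
    have hSabs : |a + b*(4*M+1) + c*(16*M^2+4*M+1)| = (32*M^3+16*M^2+6*M+1) * |k| := by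
      rw [hk, abs_mul, abs_of_pos hnpos]
    rw [hSabs] at habsS
    nlinarith
  have hk1 : k = 1 ∨ k = -1 := by
    obtain ⟨s, hs⟩ := hkodd
    have := abs_le.mp hkbd
    omega
  rcases hk1 with rfl | rfl
  · exact keyrep M a b c hM (by linarith [hk]) hbd
  · refine keyrep M (-a) (-b) (-c) hM ?_ (by rw [abs_neg, abs_neg, abs_neg]; exact hbd)
    linarith [hk]

/-- Every walk in the circulant graph yields an integer combination of the generators. -/
lemma walk_sum {n : ℕ} {M : ℤ} {u v : ZMod n}
    (w : (circulant n ![(1:ℤ), 4*M+1, 16*M^2+4*M+1]).Walk u v) :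
    ∃ a b c : ℤ, |a| + |b| + |c| ≤ w.length ∧ (a+b+c) % 2 = (w.length : ℤ) % 2 ∧
      v - u = ((a + b*(4*M+1) + c*(16*M^2+4*M+1) : ℤ) : ZMod n) := by
  induction w with
  | nil => exact ⟨0, 0, 0, by simp, by simp, by simp⟩
  | @cons x y z h p ih =>
    obtain ⟨a, b, c, hbd, hpar, heq⟩ := ih
    rw [Walk.length_cons]
    obtain ⟨-, i, hi⟩ := h
    push_cast at heq
    fin_cases i <;> simp at hi
    · rcases hi with hi | hi
      · exact ⟨a+1, b, c,
          by have := abs_add_le a 1; simp at this; simp [Walk.length_cons]; push_cast; linarith,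
          by simp [Walk.length_cons]; push_cast; omega,
          by push_cast; linear_combination heq + hi⟩
      · exact ⟨a-1, b, c,
          by have := abs_sub a 1; simp at this; simp [Walk.length_cons]; push_cast; linarith,
          by simp [Walk.length_cons]; push_cast; omega,
          by push_cast; linear_combination heq - hi⟩
    · rcases hi with hi | hi
      · exact ⟨a, b+1, c,
          by have := abs_add_le b 1; simp at this; simp [Walk.length_cons]; push_cast; linarith,
          by simp [Walk.length_cons]; push_cast; omega,
          by push_cast; linear_combination heq + hi⟩
      · exact ⟨a, b-1, c,
          by have := abs_sub b 1; simp at this; simp [Walk.length_cons]; push_cast; linarith,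
          by simp [Walk.length_cons]; push_cast; omega,
          by push_cast; linear_combination heq - hi⟩
    · rcases hi with hi | hi
      · exact ⟨a, b, c+1,
          by have := abs_add_le c 1; simp at this; simp [Walk.length_cons]; push_cast; linarith,
          by simp [Walk.length_cons]; push_cast; omega,
          by push_cast; linear_combination heq + hi⟩
      · exact ⟨a, b, c-1,
          by have := abs_sub c 1; simp at this; simp [Walk.length_cons]; push_cast; linarith,
          by simp [Walk.length_cons]; push_cast; omega,
          by push_cast; linear_combination heq - hi⟩

/-- The `(6m+1)`-cycle exists. -/
lemma hasCycle (m : ℕ) (hm : 1 ≤ m) :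
    ∃ (v : ZMod (32*m^3+16*m^2+6*m+1))
      (w : (circulant (32*m^3+16*m^2+6*m+1)
        ![(1 : ℤ), 4*(m : ℤ)+1, 16*(m : ℤ)^2+4*m+1]).Walk v v),
      w.IsCycle ∧ w.length = 6*m+1 := by
  set n : ℕ := 32*m^3+16*m^2+6*m+1 with hn
  set X := circulant n ![(1 : ℤ), 4*(m : ℤ)+1, 16*(m : ℤ)^2+4*m+1] with hX
  have hM1 : (1:ℤ) ≤ (m:ℤ) := by exact_mod_cast hm
  have hncast : ((n:ℕ) : ℤ) = 32*(m:ℤ)^3+16*(m:ℤ)^2+6*(m:ℤ)+1 := by rw [hn]; push_cast; ring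
  have hmono := qseq_mono m
  have hqlast : qseq m (6*m+1) = (n:ℤ) := by rw [qseq_last, hncast]
  have hq1 : qseq m 1 = 16*(m:ℤ)^2+4*m+1 := by
    have h0 := qseq_step m 0
    rw [if_pos (by omega : 0 < 2*m), qseq_zero, sub_zero] at h0
    exact h0
  have hqpos : ∀ j, 1 ≤ j → (0:ℤ) < qseq m j := by
    intro j hj
    have h1 : (0:ℤ) < qseq m 1 := by rw [hq1]; nlinarith
    exact lt_of_lt_of_le h1 (hmono.monotone hj)
  -- adjacency of consecutive vertices
  have hadj : ∀ j, X.Adj ((qseq m j : ℤ) : ZMod n) ((qseq m (j+1) : ℤ) : ZMod n) := by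
    intro j
    have hst := qseq_step m j
    have hdpos : 0 < qseq m (j+1) - qseq m j := by
      split_ifs at hst <;> rw [hst] <;> nlinarith
    have hdlt : qseq m (j+1) - qseq m j < (n:ℤ) := by
      rw [hncast]; split_ifs at hst <;> rw [hst] <;> nlinarith
    have hnecast : ((qseq m j : ℤ) : ZMod n) ≠ ((qseq m (j+1) : ℤ) : ZMod n) := by
      intro hEq
      apply cast_ne_zero_of_lt hdpos hdlt
      push_cast
      rw [← hEq]
      ring
    rw [hX, circulant_adj]
    refine ⟨hnecast, ?_⟩
    split_ifs at hst with h1 h2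
    · refine ⟨2, Or.inl ?_⟩
      have hv : ![(1:ℤ), 4*(m:ℤ)+1, 16*(m:ℤ)^2+4*m+1] 2 = 16*(m:ℤ)^2+4*(m:ℤ)+1 := by
        rfl
      rw [hv, ← hst]; push_cast; ring
    · refine ⟨1, Or.inl ?_⟩
      have hv : ![(1:ℤ), 4*(m:ℤ)+1, 16*(m:ℤ)^2+4*m+1] 1 = 4*(m:ℤ)+1 := by norm_num
      rw [hv, ← hst]; push_cast; ring
    · refine ⟨0, Or.inl ?_⟩
      have hv : ![(1:ℤ), 4*(m:ℤ)+1, 16*(m:ℤ)^2+4*m+1] 0 = (1:ℤ) := by norm_num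
      rw [hv, ← hst]; push_cast; ring
  set p' : ℕ → ZMod n := fun j => ((qseq m (j+1) : ℤ) : ZMod n) with hp'
  have hinj : ∀ x y, x < y → y ≤ 6*m → p' x ≠ p' y := by
    intro x y hxy hy hEq
    have hd : ((qseq m (y+1) - qseq m (x+1) : ℤ) : ZMod n) = 0 := by
      push_cast
      rw [hp'] at hEq
      simp only at hEq
      rw [← hEq]
      ring
    have hpos : 0 < qseq m (y+1) - qseq m (x+1) := sub_pos.mpr (hmono (by omega))
    have hlt : qseq m (y+1) - qseq m (x+1) < (n:ℤ) := by
      have h1 : qseq m (y+1) ≤ qseq m (6*m+1) := hmono.monotone (by omega)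
      have h2 : (0:ℤ) < qseq m (x+1) := hqpos _ (by omega)
      rw [← hqlast]; linarith
    exact cast_ne_zero_of_lt hpos hlt hd
  have hadj' : ∀ i, i < 6*m → X.Adj (p' i) (p' (i+1)) := fun i _ => hadj (i+1)
  have h0 : p' (6*m) = (0 : ZMod n) := by
    show ((qseq m (6*m+1) : ℤ) : ZMod n) = 0
    rw [hqlast, Int.cast_natCast, ZMod.natCast_self]
  have hadj0 : X.Adj (0 : ZMod n) (p' 0) := by
    have h := hadj 0
    rw [qseq_zero] at h
    simpa using h
  refine ⟨0, SimpleGraph.Walk.cons hadj0 ((pathOf X p' (6*m) hadj').copy rfl h0), ?_, ?_⟩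
  · rw [Walk.cons_isCycle_iff]
    constructor
    · rw [Walk.isPath_def, Walk.support_copy, pathOf_support]
      refine List.Nodup.map_on ?_ List.nodup_range
      intro x hx y hy hxy
      rw [List.mem_range] at hx hy
      rcases Nat.lt_trichotomy x y with h | h | h
      · exact absurd hxy (hinj x y h (by omega))
      · exact h
      · exact absurd hxy.symm (hinj y x h (by omega))
    · rw [Walk.edges_copy, pathOf_edges]
      simp only [List.mem_map, List.mem_range]
      rintro ⟨i, hi, hEq⟩
      rw [Sym2.eq_iff] at hEq
      rcases hEq with ⟨h1, h2⟩ | ⟨h1, h2⟩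
      · -- p' i = 0
        refine cast_ne_zero_of_lt (hqpos (i+1) (by omega)) ?_ h1
        rw [← hqlast]
        exact hmono (by omega)
      · -- p' (i+1) = 0 and p' i = p' 0
        rcases Nat.lt_or_ge (i+1) (6*m) with h' | h'
        · refine cast_ne_zero_of_lt (hqpos (i+2) (by omega)) ?_ h2
          rw [← hqlast]
          exact hmono (by omega)
        · have hi0 : 0 < i := by omega
          exact hinj 0 i hi0 (by omega) h1.symm
  · simp [Walk.length_cons, Walk.length_copy, pathOf_length]

/-- The largest known circulant graph of degree 6 and diameter `k = 3m` (isomorphism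
class 1; order `n = 32m³+16m²+6m+1`, generators `1`, `4m+1`, `16m²+4m+1`) has maximal
odd girth `2k+1 = 6m+1`: it contains a cycle of (odd) length `6m+1`, and no closed walk
of odd length strictly less than `6m+1`. -/
theorem stmt8 (m : ℕ) (hm : 1 ≤ m) :
    let n : ℕ := 32*m^3+16*m^2+6*m+1
    let X := circulant n ![(1 : ℤ), 4*(m : ℤ)+1, 16*(m : ℤ)^2+4*m+1]
    (∃ (v : ZMod n) (w : X.Walk v v), w.IsCycle ∧ w.length = 6*m+1) ∧
    (∀ (v : ZMod n) (w : X.Walk v v), Odd w.length → 6*m+1 ≤ w.length) := by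
  intro n X
  have hM1 : (1:ℤ) ≤ (m:ℤ) := by exact_mod_cast hm
  constructor
  · exact hasCycle m hm
  · intro v w hodd
    by_contra hlt
    push_neg at hlt
    obtain ⟨a, b, c, hbd, hpar, heq⟩ :=
      walk_sum (n := n) (M := (m:ℤ)) (u := v) (v := v) w
    rw [sub_self] at heq
    have hdvd : ((n:ℕ):ℤ) ∣ (a + b*(4*(m:ℤ)+1) + c*(16*(m:ℤ)^2+4*(m:ℤ)+1)) := by
      rw [← ZMod.intCast_zmod_eq_zero_iff_dvd]
      exact heq.symm
    obtain ⟨k, hk⟩ := hdvd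
    obtain ⟨t, ht⟩ := hodd
    have hpar1 : (a + b + c) % 2 = 1 := by rw [hpar]; omega
    have hncast : ((n:ℕ) : ℤ) = 32*(m:ℤ)^3+16*(m:ℤ)^2+6*(m:ℤ)+1 := by
      show (((32*m^3+16*m^2+6*m+1 : ℕ)):ℤ) = _
      push_cast; ring
    rw [hncast] at hk
    have hbd' : |a| + |b| + |c| ≤ 6*(m:ℤ) - 1 := by
      refine le_trans hbd ?_
      have h61 : w.length ≤ 6*m - 1 := by omega
      push_cast
      omega
    exact keyfull (m:ℤ) a b c k hM1 hk hpar1 hbd'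
end

section
/- Let m ≥ 2, n = 8m⁴ + 8m³ + 12m² + 4m, and let X be the circulant graph X(Z_n; {±1, ±(4m³+4m²+6m+1), ±(4m⁴+4m²−4m), ±(4m⁴+4m²−2m)}) (the largest known circulant graph of degree 8 and diameter k = 2m). Then the odd girth of X is maximal for its diameter, namely 2k+1 = 4m+1: X contains a cycle of odd length 4m+1, and X contains no closed walk of odd length strictly less than 4m+1. -/
set_option maxHeartbeats 4000000 in
theorem keyCases (m e t r q : ℤ) (hm : 2 ≤ m) (he : |e| ≤ 1) (ht : |t| ≤ 3)
    (hr : |r| ≤ 2) (hq : |q| ≤ 10) (htodd : Odd t) (hqrodd : Odd (q + r)) :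
    4*m+1 ≤ |(2*e-t-2*r)*m - q| + |(t+2*r)*m + q| + |(r+q)*m + (q-2*r-t+e)|
      + |(r-q)*m + (3*r+t-e)| := by
  simp only [Int.abs_eq_natAbs] at *
  obtain ⟨t', rfl⟩ := htodd
  obtain ⟨k, hk⟩ := hqrodd
  have he' : -1 ≤ e ∧ e ≤ 1 := by omega
  have ht' : -2 ≤ t' ∧ t' ≤ 1 := by omega
  have hr' : -2 ≤ r ∧ r ≤ 2 := by omega
  have hq' : -10 ≤ q ∧ q ≤ 10 := by omega
  obtain ⟨he1, he2⟩ := he'; obtain ⟨ht1, ht2⟩ := ht'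
  obtain ⟨hr1, hr2⟩ := hr'; obtain ⟨hq1, hq2⟩ := hq'
  interval_cases e <;> interval_cases t' <;> interval_cases r <;> interval_cases q <;> omega

set_option maxHeartbeats 1000000 in
theorem keyLemma (m a b c d e : ℤ) (hm : 2 ≤ m)
    (heq : a + b*(4*m^3+4*m^2+6*m+1) + c*(4*m^4+4*m^2-4*m) + d*(4*m^4+4*m^2-2*m)
      = e*(8*m^4+8*m^3+12*m^2+4*m))
    (hodd : Odd (a+b+c+d)) :
    4*m+1 ≤ |a| + |b| + |c| + |d| := by
  by_contra hcon
  push_neg at hcon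
  have hL : |a| + |b| + |c| + |d| ≤ 4*m - 1 := by
    obtain ⟨k, hk⟩ := hodd
    rcases abs_choice a with h1 | h1 <;> rcases abs_choice b with h2 | h2 <;>
      rcases abs_choice c with h3 | h3 <;> rcases abs_choice d with h4 | h4 <;> omega
  set ε : ℤ := e*(4*m^3+4*m^2+6*m+2) - b*(2*m^2+2*m+3) - c*(2*m^3+2*m-2) - d*(2*m^3+2*m-1) with hεdef
  have hab : a + b = 2*m*ε := by rw [hεdef]; linear_combination heq
  have hm0 : (0:ℤ) < m := by linarith
  have habs2m : |2*m*ε| = 2*m*|ε| := by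
    rw [abs_mul, abs_of_pos (by linarith : (0:ℤ) < 2*m)]
  have hane : |a| = |2*m*ε - b| := by rw [show a = 2*m*ε - b by linarith]
  have hε1 : |ε| ≤ 1 := by
    by_contra hε
    push_neg at hε
    have h2 : (2:ℤ) ≤ |ε| := hε
    have h5 : 2*m*2 ≤ 2*m*|ε| := by
      apply mul_le_mul_of_nonneg_left h2 (by linarith)
    have h3 : |2*m*ε| ≤ |a| + |b| := by rw [← hab]; exact abs_add_le a b
    rw [habs2m] at h3
    linarith [abs_nonneg c, abs_nonneg d]
  have h4 : ε + b*(2*m^2+2*m+3) + c*(2*m^3+2*m-2) + d*(2*m^3+2*m-1) = e*(4*m^3+4*m^2+6*m+2) := by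
    rw [hεdef]; ring
  obtain ⟨k, hk⟩ := hodd
  have hsodd : Odd (c + d) := ⟨k - m*ε, by linarith⟩
  set t : ℤ := 2*e - (c+d) with htdef
  have htodd : Odd t := by obtain ⟨j, hj⟩ := hsodd; exact ⟨e - j - 1, by omega⟩
  -- (★)
  have hstar : ε + b*(2*m^2+2*m+3) + d = t*(2*m^3+2*m^2+3*m+1) + (c+d)*(2*m^2+m+3) := by
    rw [htdef]; linear_combination h4
  set W : ℤ := |c| + |d| with hWdef
  have hW0 : 0 ≤ W := by positivity
  have hW4 : W ≤ 4*m-1 := by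
    have := abs_nonneg a; have := abs_nonneg b; linarith
  have hb2 : 2*|b| ≤ 6*m - 1 - W := by
    have h1 : |b| ≤ |2*m*ε| + |a| := by
      calc |b| = |2*m*ε - a| := by rw [show b = 2*m*ε - a by linarith]
      _ ≤ |2*m*ε| + |a| := by exact abs_sub _ _
    rw [habs2m] at h1
    have h2 : 2*m*|ε| ≤ 2*m := by nlinarith
    linarith
  have hs_le : |c + d| ≤ W := abs_add_le c d
  -- bound |t| ≤ 3
  have hPpos : (0:ℤ) < 2*m^2+2*m+3 := by positivity
  have hUpos : (0:ℤ) < 2*m^3+2*m^2+3*m+1 := by positivity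
  have hVpos : (0:ℤ) < 2*m^2+m+3 := by positivity
  have htU : |t| *(2*m^3+2*m^2+3*m+1) ≤ 1 + |b| *(2*m^2+2*m+3) + |d| + W*(2*m^2+m+3) := by
    have h1 : |t*(2*m^3+2*m^2+3*m+1)| = |ε + b*(2*m^2+2*m+3) + d - (c+d)*(2*m^2+m+3)| := by
      rw [show t*(2*m^3+2*m^2+3*m+1) = ε + b*(2*m^2+2*m+3) + d - (c+d)*(2*m^2+m+3) by
        linear_combination hstar]
    have h2 : |ε + b*(2*m^2+2*m+3) + d - (c+d)*(2*m^2+m+3)|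
        ≤ |ε| + |b| *(2*m^2+2*m+3) + |d| + |c+d| *(2*m^2+m+3) := by
      calc |ε + b*(2*m^2+2*m+3) + d - (c+d)*(2*m^2+m+3)|
          ≤ |ε + b*(2*m^2+2*m+3) + d| + |(c+d)*(2*m^2+m+3)| := abs_sub _ _
        _ ≤ |ε + b*(2*m^2+2*m+3)| + |d| + |(c+d)*(2*m^2+m+3)| := by
            linarith [abs_add_le (ε + b*(2*m^2+2*m+3)) d]
        _ ≤ |ε| + |b*(2*m^2+2*m+3)| + |d| + |(c+d)*(2*m^2+m+3)| := by
            linarith [abs_add_le ε (b*(2*m^2+2*m+3))]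
        _ = |ε| + |b| *(2*m^2+2*m+3) + |d| + |c+d| *(2*m^2+m+3) := by
            rw [abs_mul, abs_mul, abs_of_pos hPpos, abs_of_pos hVpos]
    have h3 : |c+d| *(2*m^2+m+3) ≤ W*(2*m^2+m+3) :=
      mul_le_mul_of_nonneg_right hs_le (le_of_lt hVpos)
    have h4' : |t| *(2*m^3+2*m^2+3*m+1) = |t*(2*m^3+2*m^2+3*m+1)| := by
      rw [abs_mul, abs_of_pos hUpos]
    rw [h4', h1]
    linarith
  have ht3 : |t| ≤ 3 := by
    by_contra hcont
    push_neg at hcont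
    have h5 : (5:ℤ) ≤ |t| := by
      obtain ⟨j, hj⟩ := htodd
      rcases abs_choice t with h | h <;> omega
    have h5U : 5*(2*m^3+2*m^2+3*m+1) ≤ |t| *(2*m^3+2*m^2+3*m+1) :=
      mul_le_mul_of_nonneg_right h5 (le_of_lt hUpos)
    have hA : 2*|b| *(2*m^2+2*m+3) ≤ (6*m-1-W)*(2*m^2+2*m+3) :=
      mul_le_mul_of_nonneg_right hb2 (le_of_lt hPpos)
    have hB : W*(2*m^2+5) ≤ (4*m-1)*(2*m^2+5) :=
      mul_le_mul_of_nonneg_right hW4 (by positivity)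
    have hd_le : |d| ≤ W := by rw [hWdef]; linarith [abs_nonneg c]
    nlinarith [htU, hA, hB]
  -- define r, bound |r| ≤ 2
  set r : ℤ := (c + d) - b + t*m with hrdef
  have hrV : r*(2*m^2+m+3) = ε + d + b*m - t*(m^2+1) := by
    rw [hrdef]; linear_combination hstar
  have hr2 : |r| ≤ 2 := by
    by_contra hcont
    push_neg at hcont
    have h3 : (3:ℤ) ≤ |r| := hcont
    have h3V : 3*(2*m^2+m+3) ≤ |r| *(2*m^2+m+3) :=
      mul_le_mul_of_nonneg_right h3 (le_of_lt hVpos)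
    have hrVabs : |r| *(2*m^2+m+3) = |ε + d + b*m - t*(m^2+1)| := by
      rw [← hrV, abs_mul, abs_of_pos hVpos]
    have hub : |ε + d + b*m - t*(m^2+1)| ≤ 1 + |d| + |b| *m + 3*(m^2+1) := by
      have e1 : |ε + d + b*m - t*(m^2+1)| ≤ |ε| + |d| + |b*m| + |t*(m^2+1)| := by
        calc |ε + d + b*m - t*(m^2+1)| ≤ |ε + d + b*m| + |t*(m^2+1)| := abs_sub _ _
          _ ≤ |ε + d| + |b*m| + |t*(m^2+1)| := by linarith [abs_add_le (ε+d) (b*m)]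
          _ ≤ |ε| + |d| + |b*m| + |t*(m^2+1)| := by linarith [abs_add_le ε d]
      have e2 : |b*m| = |b| *m := by rw [abs_mul, abs_of_pos hm0]
      have e3 : |t*(m^2+1)| ≤ 3*(m^2+1) := by
        rw [abs_mul, abs_of_pos (by positivity : (0:ℤ) < m^2+1)]
        exact mul_le_mul_of_nonneg_right ht3 (by positivity)
      linarith
    have hbm : 2*(|b| *m) ≤ (6*m-1-W)*m := by
      have := mul_le_mul_of_nonneg_right hb2 (le_of_lt hm0)
      linarith [this]
    have hWm : 0 ≤ W*(m-2) := mul_nonneg hW0 (by linarith)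
    have hd_le : |d| ≤ W := by rw [hWdef]; linarith [abs_nonneg c]
    nlinarith
  -- define q, bound |q| ≤ 10
  set q : ℤ := b - t*m - 2*r*m with hqdef
  have hqm : q*m = r*(m+3) + t - ε - d := by
    rw [hqdef, hrdef]; linear_combination -hrV
  have hq10 : |q| ≤ 10 := by
    by_contra hcont
    push_neg at hcont
    have h11 : (11:ℤ) ≤ |q| := hcont
    have h11m : 11*m ≤ |q| *m := mul_le_mul_of_nonneg_right h11 (le_of_lt hm0)
    have hqabs : |q| *m = |r*(m+3) + t - ε - d| := by
      rw [← hqm, abs_mul, abs_of_pos hm0]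
    have hub : |r*(m+3) + t - ε - d| ≤ 2*(m+3) + 3 + 1 + |d| := by
      have e1 : |r*(m+3) + t - ε - d| ≤ |r*(m+3)| + |t| + |ε| + |d| := by
        calc |r*(m+3) + t - ε - d| ≤ |r*(m+3) + t - ε| + |d| := abs_sub _ _
          _ ≤ |r*(m+3) + t| + |ε| + |d| := by linarith [abs_sub (r*(m+3)+t) ε]
          _ ≤ |r*(m+3)| + |t| + |ε| + |d| := by linarith [abs_add_le (r*(m+3)) t]
      have e2 : |r*(m+3)| ≤ 2*(m+3) := by
        rw [abs_mul, abs_of_pos (by linarith : (0:ℤ) < m+3)]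
        exact mul_le_mul_of_nonneg_right hr2 (by linarith)
      linarith
    have hd_le : |d| ≤ W := by rw [hWdef]; linarith [abs_nonneg c]
    linarith
  -- final substitution
  have hb' : b = (t+2*r)*m + q := by rw [hqdef]; ring
  have ha' : a = (2*ε-t-2*r)*m - q := by rw [hqdef]; linarith
  have hd' : d = (r-q)*m + (3*r+t-ε) := by linear_combination -hqm
  have hc' : c = (r+q)*m + (q-2*r-t+ε) := by
    have hs : c + d = r + b - t*m := by rw [hrdef]; ring
    rw [hb'] at hs
    linarith [hd']
  have hqrodd : Odd (q + r) := by
    obtain ⟨j, hj⟩ := hsodd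
    have : c + d = 2*(r*m) + q + r := by rw [hqdef, hrdef]; ring
    exact ⟨j - r*m, by omega⟩
  have hfin := keyCases m ε t r q hm hε1 ht3 hr2 hq10 htodd hqrodd
  rw [← ha', ← hb', ← hc', ← hd'] at hfin
  linarith


open SimpleGraph Walk in
theorem exists_odd_cycle {V : Type*} {G : SimpleGraph V} :
    ∀ (L : ℕ), Odd L → ∀ {v : V} (w : G.Walk v v), w.length = L →
    ∃ (u : V) (c : G.Walk u u), c.IsCycle ∧ Odd c.length ∧ c.length ≤ L := by
  intro L
  induction L using Nat.strong_induction_on with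
  | _ L ih =>
    intro hodd v w hw
    classical
    by_cases hnd : w.support.tail.Nodup
    · cases w with
      | nil =>
        exfalso; simp only [Walk.length_nil] at hw
        obtain ⟨k, hk⟩ := hodd; omega
      | @cons _ y _ h p =>
        have hp : p.IsPath := by
          rw [Walk.isPath_def]
          simpa using hnd
        have hedge : s(v, y) ∉ p.edges := by
          intro hmem
          cases p with
          | nil => simp at hmem
          | @cons _ z _ h2 p2 =>
            simp only [Walk.edges_cons, List.mem_cons] at hmem
            rcases hmem with hmem | hmem
            · have := Sym2.eq_iff.mp hmem
              rcases this with ⟨h1, h2'⟩ | ⟨h1, h2'⟩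
              · exact h.ne h1
              · -- v = z, so p2 : Walk v v is a path, hence nil, p.length = 1, total length 2, even
                subst h1
                have hp2 : p2.IsPath := hp.of_cons
                have : p2.length = 0 := by
                  have hnd2 := hp2.support_nodup
                  cases p2 with
                  | nil => rfl
                  | @cons _ x _ h3 p3 =>
                    exfalso
                    simp only [Walk.support_cons, List.nodup_cons] at hnd2
                    exact hnd2.1 (Walk.end_mem_support p3)
                have hlen : (Walk.cons h (Walk.cons h2 p2)).length = 2 := by
                  simp [Walk.length_cons, this]
                rw [hlen] at hw
                obtain ⟨k, hk⟩ := hodd; omega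
            · have hy2 : y ∈ p2.support := Walk.snd_mem_support_of_mem_edges p2 hmem
              have := hp.support_nodup
              simp only [Walk.support_cons, List.nodup_cons] at this
              exact this.1 hy2
        refine ⟨v, Walk.cons h p, (Walk.cons_isCycle_iff p h).mpr ⟨hp, hedge⟩, hw ▸ hodd, hw ▸ le_rfl⟩
    · obtain ⟨y, hy⟩ := List.exists_duplicate_iff_not_nodup.mpr hnd
      have hy2 : 2 ≤ w.support.tail.count y := List.duplicate_iff_two_le_count.mp hy
      have hymem : y ∈ w.support := List.mem_of_mem_tail hy.mem
      have hclen : (w.rotate y hymem).length = w.length := by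
        rw [Walk.rotate, Walk.length_append, add_comm, ← Walk.length_append, Walk.take_spec]
      have hccount : 2 ≤ (w.rotate y hymem).support.tail.count y := by
        rw [(Walk.support_rotate w y hymem).perm.count_eq]
        exact hy2
      set c := w.rotate y hymem with hcdef
      clear_value c
      cases c with
      | nil => exfalso; simp only [Walk.length_nil] at hclen; obtain ⟨k, hk⟩ := hodd; omega
      | @cons _ z _ h' p' =>
        simp only [Walk.support_cons, List.tail_cons] at hccount
        have hymem' : y ∈ p'.support := by
          have : 0 < p'.support.count y := by omega
          exact List.count_pos_iff.mp this
        have hspec := Walk.take_spec p' hymem'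
        have hlen : (p'.takeUntil y hymem').length + (p'.dropUntil y hymem').length = p'.length := by
          rw [← Walk.length_append, hspec]
        have hcount1 : (p'.takeUntil y hymem').support.count y = 1 :=
          Walk.count_support_takeUntil_eq_one p' hymem'
        have hq2len : 1 ≤ (p'.dropUntil y hymem').length := by
          by_contra hq2
          push_neg at hq2
          have h0 : (p'.dropUntil y hymem').length = 0 := by omega
          have hnil : p'.dropUntil y hymem' = Walk.nil := Walk.nil_iff_eq_nil.mp (Walk.length_eq_zero_iff.mp h0)
          have : p'.support = (p'.takeUntil y hymem').support := by
            conv_lhs => rw [← hspec]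
            rw [Walk.support_append, hnil]
            simp
          rw [this, hcount1] at hccount
          omega
        -- two closed walks A = cons h' q1 (length q1+1), B = q2
        have hsum : ((Walk.cons h' (p'.takeUntil y hymem')).length)
            + (p'.dropUntil y hymem').length = L := by
          rw [Walk.length_cons]
          rw [← hw, ← hclen]
          simp only [Walk.length_cons]
          omega
        rcases Nat.even_or_odd (Walk.cons h' (p'.takeUntil y hymem')).length with hpar | hpar
        · have hoddB : Odd (p'.dropUntil y hymem').length := by
            obtain ⟨k1, hk1⟩ := hodd; obtain ⟨k2, hk2⟩ := hpar
            exact ⟨k1 - k2, by omega⟩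
          have hBlt : (p'.dropUntil y hymem').length < L := by
            have : 1 ≤ (Walk.cons h' (p'.takeUntil y hymem')).length := by
              simp [Walk.length_cons]
            omega
          obtain ⟨u, cc, hcc1, hcc2, hcc3⟩ := ih _ hBlt hoddB (p'.dropUntil y hymem') rfl
          exact ⟨u, cc, hcc1, hcc2, by omega⟩
        · have hAlt : (Walk.cons h' (p'.takeUntil y hymem')).length < L := by omega
          obtain ⟨u, cc, hcc1, hcc2, hcc3⟩ := ih _ hAlt hpar (Walk.cons h' (p'.takeUntil y hymem')) rfl
          exact ⟨u, cc, hcc1, hcc2, by omega⟩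

theorem walk_rel {n : ℕ} {g0 g1 g2 g3 : ℤ} {u v : ZMod n}
    (w : (circulant n ![g0,g1,g2,g3]).Walk u v) :
    ∃ a b c d : ℤ, ((a*g0 + b*g1 + c*g2 + d*g3 : ℤ) : ZMod n) = v - u ∧
      |a|+|b|+|c|+|d| ≤ (w.length : ℤ) ∧ ∃ k : ℤ, a+b+c+d - w.length = 2*k := by
  induction w with
  | nil => exact ⟨0,0,0,0, by simp, by simp, 0, by simp⟩
  | @cons u x v h p ihp =>
    obtain ⟨a,b,c,d,h1,h2,k,h3⟩ := ihp
    obtain ⟨hne, i, hi⟩ := id h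
    simp only [SimpleGraph.Walk.length_cons] at *
    fin_cases i <;>
      rcases hi with hi | hi
    · have hi' : x - u = ((g0 : ℤ) : ZMod n) := hi
      refine ⟨a+1,b,c,d, ?_, ?_, k, by push_cast; omega⟩
      · push_cast
        push_cast at h1
        linear_combination h1 - hi'
      · push_cast
        linarith [abs_add_le a 1, abs_one (α := ℤ), h2]
    · have hi' : u - x = ((g0 : ℤ) : ZMod n) := hi
      refine ⟨a-1,b,c,d, ?_, ?_, k-1, by push_cast; omega⟩
      · push_cast
        push_cast at h1
        linear_combination h1 + hi'
      · push_cast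
        linarith [abs_sub a 1, abs_one (α := ℤ), h2]
    · have hi' : x - u = ((g1 : ℤ) : ZMod n) := hi
      refine ⟨a,b+1,c,d, ?_, ?_, k, by push_cast; omega⟩
      · push_cast
        push_cast at h1
        linear_combination h1 - hi'
      · push_cast
        linarith [abs_add_le b 1, abs_one (α := ℤ), h2]
    · have hi' : u - x = ((g1 : ℤ) : ZMod n) := hi
      refine ⟨a,b-1,c,d, ?_, ?_, k-1, by push_cast; omega⟩
      · push_cast
        push_cast at h1
        linear_combination h1 + hi'
      · push_cast
        linarith [abs_sub b 1, abs_one (α := ℤ), h2]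
    · have hi' : x - u = ((g2 : ℤ) : ZMod n) := hi
      refine ⟨a,b,c+1,d, ?_, ?_, k, by push_cast; omega⟩
      · push_cast
        push_cast at h1
        linear_combination h1 - hi'
      · push_cast
        linarith [abs_add_le c 1, abs_one (α := ℤ), h2]
    · have hi' : u - x = ((g2 : ℤ) : ZMod n) := hi
      refine ⟨a,b,c-1,d, ?_, ?_, k-1, by push_cast; omega⟩
      · push_cast
        push_cast at h1
        linear_combination h1 + hi'
      · push_cast
        linarith [abs_sub c 1, abs_one (α := ℤ), h2]
    · have hi' : x - u = ((g3 : ℤ) : ZMod n) := hi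
      refine ⟨a,b,c,d+1, ?_, ?_, k, by push_cast; omega⟩
      · push_cast
        push_cast at h1
        linear_combination h1 - hi'
      · push_cast
        linarith [abs_add_le d 1, abs_one (α := ℤ), h2]
    · have hi' : u - x = ((g3 : ℤ) : ZMod n) := hi
      refine ⟨a,b,c,d-1, ?_, ?_, k-1, by push_cast; omega⟩
      · push_cast
        push_cast at h1
        linear_combination h1 + hi'
      · push_cast
        linarith [abs_sub d 1, abs_one (α := ℤ), h2]


theorem straight_walk {n : ℕ} {f : ℕ} {g : Fin f → ℤ} (i : Fin f)
    (hne : ((g i : ℤ) : ZMod n) ≠ 0) :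
    ∀ (k : ℕ) (u x : ZMod n), x = u + (((k : ℤ) * g i : ℤ) : ZMod n) →
    ∃ w : (circulant n g).Walk u x, w.length = k := by
  intro k
  induction k with
  | zero =>
    intro u x h
    have hx : x = u := by rw [h]; push_cast; ring
    subst hx
    exact ⟨SimpleGraph.Walk.nil, rfl⟩
  | succ k ih =>
    intro u x h
    have hadj : (circulant n g).Adj u (u + ((g i : ℤ) : ZMod n)) := by
      constructor
      · intro heq
        rw [left_eq_add] at heq
        exact hne heq
      · exact ⟨i, Or.inl (by ring)⟩
    obtain ⟨w', hw'⟩ := ih (u + ((g i : ℤ) : ZMod n)) x (by rw [h]; push_cast; ring)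
    exact ⟨SimpleGraph.Walk.cons hadj w', by simp [hw']⟩

/-- The largest known circulant graph of degree 8 and diameter `k = 2m` (order
`n = 8m⁴+8m³+12m²+4m`, generators `1`, `4m³+4m²+6m+1`, `4m⁴+4m²−4m`, `4m⁴+4m²−2m`)
has maximal odd girth `2k+1 = 4m+1`: it contains a cycle of (odd) length `4m+1`, and no
closed walk of odd length strictly less than `4m+1`. -/
theorem stmt9 (m : ℕ) (hm : 2 ≤ m) :
    let n : ℕ := 8*m^4+8*m^3+12*m^2+4*m
    let X := circulant n ![(1 : ℤ), 4*(m : ℤ)^3+4*m^2+6*m+1,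
      4*(m : ℤ)^4+4*m^2-4*m, 4*(m : ℤ)^4+4*m^2-2*m]
    (∃ (v : ZMod n) (w : X.Walk v v), w.IsCycle ∧ w.length = 4*m+1) ∧
    (∀ (v : ZMod n) (w : X.Walk v v), Odd w.length → 4*m+1 ≤ w.length) := by
  intro n X
  have hn : n = 8*m^4+8*m^3+12*m^2+4*m := rfl
  have hnpos : 0 < n := by
    have h1 : 4*m ≤ n := by rw [hn]; omega
    omega
  haveI : NeZero n := ⟨by omega⟩
  have hmz : (2:ℤ) ≤ (m:ℤ) := by exact_mod_cast hm
  have hncast : (n:ℤ) = 8*(m:ℤ)^4+8*(m:ℤ)^3+12*(m:ℤ)^2+4*(m:ℤ) := by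
    rw [hn]; push_cast; ring
  -- Part 2 first
  have part2 : ∀ (v : ZMod n) (w : X.Walk v v), Odd w.length → 4*m+1 ≤ w.length := by
    intro v w hodd
    obtain ⟨a,b,c,d,h1,h2,k,h3⟩ := walk_rel (w : (circulant n
      ![(1 : ℤ), 4*(m : ℤ)^3+4*m^2+6*m+1,
        4*(m : ℤ)^4+4*m^2-4*m, 4*(m : ℤ)^4+4*m^2-2*m]).Walk v v)
    rw [sub_self] at h1
    rw [ZMod.intCast_zmod_eq_zero_iff_dvd] at h1
    obtain ⟨e, he⟩ := h1
    have heq : a + b*(4*(m:ℤ)^3+4*(m:ℤ)^2+6*(m:ℤ)+1) + c*(4*(m:ℤ)^4+4*(m:ℤ)^2-4*(m:ℤ))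
        + d*(4*(m:ℤ)^4+4*(m:ℤ)^2-2*(m:ℤ)) = e*(8*(m:ℤ)^4+8*(m:ℤ)^3+12*(m:ℤ)^2+4*(m:ℤ)) := by
      rw [← hncast]
      linear_combination he
    have hodd' : Odd (a+b+c+d) := by
      obtain ⟨j, hj⟩ := hodd
      exact ⟨k + j, by omega⟩
    have hfin := keyLemma (m:ℤ) a b c d e hmz heq hodd'
    have : (4*(m:ℤ)+1 : ℤ) ≤ (w.length : ℤ) := le_trans hfin h2
    exact_mod_cast this
  refine ⟨?_, part2⟩
  -- Part 1: closed walk of length 4m+1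
  have hgen : ∀ (x : ℤ), 0 < x → x < (n:ℤ) → ((x : ZMod n) ≠ 0) := by
    intro x hx1 hx2 hx0
    rw [ZMod.intCast_zmod_eq_zero_iff_dvd] at hx0
    have := Int.le_of_dvd hx1 hx0
    omega
  set g : Fin 4 → ℤ := ![(1 : ℤ), 4*(m : ℤ)^3+4*m^2+6*m+1,
      4*(m : ℤ)^4+4*m^2-4*m, 4*(m : ℤ)^4+4*m^2-2*m] with hg
  have hg0 : g 0 = 1 := rfl
  have hg1 : g 1 = 4*(m:ℤ)^3+4*(m:ℤ)^2+6*(m:ℤ)+1 := rfl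
  have hg2 : g 2 = 4*(m:ℤ)^4+4*(m:ℤ)^2-4*(m:ℤ) := rfl
  have hg3 : g 3 = 4*(m:ℤ)^4+4*(m:ℤ)^2-2*(m:ℤ) := rfl
  have hne0 : ((g 0 : ℤ) : ZMod n) ≠ 0 := by
    rw [hg0]; exact hgen 1 one_pos (by rw [hncast]; nlinarith [hmz])
  have hne1 : ((g 1 : ℤ) : ZMod n) ≠ 0 := by
    rw [hg1]; exact hgen _ (by nlinarith [hmz]) (by rw [hncast]; nlinarith [hmz])
  have hne2 : ((g 2 : ℤ) : ZMod n) ≠ 0 := by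
    rw [hg2]; exact hgen _ (by nlinarith [hmz]) (by rw [hncast]; nlinarith [hmz])
  have hne3 : ((g 3 : ℤ) : ZMod n) ≠ 0 := by
    rw [hg3]; exact hgen _ (by nlinarith [hmz]) (by rw [hncast]; nlinarith [hmz])
  obtain ⟨w1, hw1⟩ := straight_walk (g := g) 0 hne0 m 0 (0 + (((m:ℤ) * g 0 : ℤ) : ZMod n)) rfl
  obtain ⟨w2, hw2⟩ := straight_walk (g := g) 1 hne1 m _ (0 + (((m:ℤ) * g 0 : ℤ) : ZMod n)
    + (((m:ℤ) * g 1 : ℤ) : ZMod n)) rfl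
  obtain ⟨w3, hw3⟩ := straight_walk (g := g) 2 hne2 m _ (0 + (((m:ℤ) * g 0 : ℤ) : ZMod n)
    + (((m:ℤ) * g 1 : ℤ) : ZMod n) + (((m:ℤ) * g 2 : ℤ) : ZMod n)) rfl
  obtain ⟨w4, hw4⟩ := straight_walk (g := g) 3 hne3 (m+1)
    (0 + (((m:ℤ) * g 0 : ℤ) : ZMod n) + (((m:ℤ) * g 1 : ℤ) : ZMod n) + (((m:ℤ) * g 2 : ℤ) : ZMod n))
    (0 + (((m:ℤ) * g 0 : ℤ) : ZMod n)
    + (((m:ℤ) * g 1 : ℤ) : ZMod n) + (((m:ℤ) * g 2 : ℤ) : ZMod n)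
    + ((((m:ℕ)+1 : ℤ) * g 3 : ℤ) : ZMod n)) (by push_cast; ring)
  have hend : (0 : ZMod n) + (((m:ℤ) * g 0 : ℤ) : ZMod n)
      + (((m:ℤ) * g 1 : ℤ) : ZMod n) + (((m:ℤ) * g 2 : ℤ) : ZMod n)
      + ((((m:ℕ)+1 : ℤ) * g 3 : ℤ) : ZMod n) = 0 := by
    have hsum : ((m:ℤ) * g 0) + ((m:ℤ) * g 1) + ((m:ℤ) * g 2) + (((m:ℕ)+1 : ℤ) * g 3)
        = (m:ℤ) * (n:ℤ) := by
      rw [hg0, hg1, hg2, hg3, hncast]; push_cast; ring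
    have : ((((m:ℤ) * (n:ℤ)) : ℤ) : ZMod n) = 0 := by
      rw [ZMod.intCast_zmod_eq_zero_iff_dvd]
      exact dvd_mul_left _ _
    calc (0 : ZMod n) + (((m:ℤ) * g 0 : ℤ) : ZMod n)
      + (((m:ℤ) * g 1 : ℤ) : ZMod n) + (((m:ℤ) * g 2 : ℤ) : ZMod n)
      + ((((m:ℕ)+1 : ℤ) * g 3 : ℤ) : ZMod n)
        = ((((m:ℤ) * g 0) + ((m:ℤ) * g 1) + ((m:ℤ) * g 2) + (((m:ℕ)+1 : ℤ) * g 3) : ℤ) : ZMod n) := by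
          push_cast; ring
      _ = ((((m:ℤ) * (n:ℤ)) : ℤ) : ZMod n) := by rw [hsum]
      _ = 0 := this
  set w0 := ((w1.append w2).append w3).append w4 with hw0
  have hw0len : (w0.copy rfl hend).length = 4*m+1 := by
    rw [SimpleGraph.Walk.length_copy, hw0]
    simp only [SimpleGraph.Walk.length_append]
    omega
  have hodd0 : Odd (w0.copy rfl hend).length := by rw [hw0len]; exact ⟨2*m, by omega⟩
  obtain ⟨u, c, hc1, hc2, hc3⟩ := exists_odd_cycle (4*m+1) (by exact ⟨2*m, by omega⟩)
    (w0.copy rfl hend) hw0len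
  have hge := part2 u c hc2
  exact ⟨u, c, hc1, by omega⟩
end
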